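/- arXiv:2007.09760 — 9 statements merged into one kernel-verified Lean document; each statement's English description precedes it below -/
import Mathlib

section
/- For a finite Blaschke product B of degree n, the mean value of |B'| over the unit circle equals n; that is, (1/2π)∫₀^{2π} |B'(e^{it})| dt = n. -/
open Complex MeasureTheory Metric Real

lemma exp_ne_a {a : ℂ} (ha : ‖a‖ < 1) (t : ℝ) :
    Complex.exp (t * Complex.I) - a ≠ 0 := by
  intro h
  rw [sub_eq_zero] at h
  have h1 : ‖Complex.exp (t * Complex.I)‖ = 1 := Complex.norm_exp_ofReal_mul_I t
  rw [h] at h1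
  exact absurd h1 (ne_of_lt ha)

lemma poisson_integral {a : ℂ} (ha : ‖a‖ < 1) :
    ∫ t in (0:ℝ)..(2 * Real.pi),
      (1 - (‖a‖)^2) / (‖Complex.exp (t * Complex.I) - a‖)^2
      = 2 * Real.pi := by
  have hma : a ∉ sphere (0:ℂ) |(1:ℝ)| := by
    simp [ne_of_lt ha, Complex.dist_eq]
  have hint1 : CircleIntegrable (fun z => (z - a)⁻¹) 0 1 := by
    rw [circleIntegrable_sub_inv_iff]; exact Or.inr hma
  have hint2 : CircleIntegrable (fun z : ℂ => z⁻¹) 0 1 := by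
    have := (circleIntegrable_sub_inv_iff (c := 0) (w := 0) (R := 1)).mpr
      (Or.inr (by simp [Complex.dist_eq]))
    simpa using this
  have hint1' : CircleIntegrable (fun z => 2 * (z - a)⁻¹) 0 1 := by
    exact IntervalIntegrable.const_mul hint1 (2:ℂ)
  have hI : (∮ z in C(0, 1), (2 * (z - a)⁻¹ - z⁻¹)) = 2 * Real.pi * Complex.I := by
    rw [circleIntegral.integral_sub hint1' hint2]
    have h1 : (∮ z in C(0, 1), (z - a)⁻¹) = 2 * Real.pi * Complex.I :=
      circleIntegral.integral_sub_inv_of_mem_ball (by simpa [Complex.dist_eq] using ha)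
    have h0 : (∮ z in C(0, 1), z⁻¹) = 2 * Real.pi * Complex.I := by
      have := circleIntegral.integral_sub_inv_of_mem_ball
        (c := (0:ℂ)) (w := 0) (R := 1) (by simp)
      simpa using this
    have h2 : (∮ z in C(0, 1), 2 * (z - a)⁻¹) = 2 * (2 * Real.pi * Complex.I) := by
      have := circleIntegral.integral_smul (𝕜 := ℂ) (2:ℂ) (fun z => (z - a)⁻¹) 0 1
      simpa [smul_eq_mul, h1] using this
    rw [h2, h0]; ring
  rw [circleIntegral] at hI
  simp only [deriv_circleMap, circleMap, Complex.ofReal_one, one_mul, zero_add,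
    smul_eq_mul] at hI
  set G : ℝ → ℂ := fun t => Complex.exp (t * Complex.I) * Complex.I *
      (2 * (Complex.exp (t * Complex.I) - a)⁻¹ - (Complex.exp (t * Complex.I))⁻¹) with hG
  have hGint : IntervalIntegrable G volume 0 (2 * Real.pi) := by
    apply ContinuousOn.intervalIntegrable
    apply ContinuousOn.mul
    · exact (Continuous.mul (Continuous.cexp (by continuity)) continuous_const).continuousOn
    · apply ContinuousOn.sub
      · apply ContinuousOn.mul continuousOn_const
        exact ContinuousOn.inv₀ (by fun_prop) (fun t _ => exp_ne_a ha t)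
      · exact ContinuousOn.inv₀ (by fun_prop) (fun t _ => Complex.exp_ne_zero _)
  have him : ∀ t : ℝ, (G t).im =
      (1 - (‖a‖)^2) / (‖Complex.exp (t * Complex.I) - a‖)^2 := by
    intro t
    set z := Complex.exp (t * Complex.I) with hz
    have hz1 : z * (starRingEnd ℂ) z = 1 := by
      rw [Complex.mul_conj]
      norm_cast
      simp [hz, Complex.normSq_eq_norm_sq, Complex.norm_exp_ofReal_mul_I]
    have hzne : z ≠ 0 := Complex.exp_ne_zero _
    have hzane : z - a ≠ 0 := exp_ne_a ha t
    have k1 : G t = Complex.I * ((z + a) * (starRingEnd ℂ) (z - a)) *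
        ((Complex.normSq (z - a) : ℝ) : ℂ)⁻¹ := by
      have hns : ((Complex.normSq (z - a) : ℝ) : ℂ) = (z - a) * (starRingEnd ℂ) (z - a) :=
        (Complex.mul_conj _).symm
      have hnsne : ((Complex.normSq (z - a) : ℝ) : ℂ) ≠ 0 := by
        rw [hns]; exact mul_ne_zero hzane (star_ne_zero.mpr hzane)
      have step1 : G t = Complex.I * (z + a) * (z - a)⁻¹ := by
        rw [hG]
        simp only
        rw [← hz]
        field_simp
        ring
      rw [step1, Complex.inv_def]
      push_cast
      ring
    have hre : ((z + a) * (starRingEnd ℂ) (z - a)).re = 1 - (‖a‖)^2 := by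
      have e : (z + a) * (starRingEnd ℂ) (z - a) =
          1 - ((Complex.normSq a : ℝ) : ℂ) +
            (a * (starRingEnd ℂ) z - (starRingEnd ℂ) (a * (starRingEnd ℂ) z)) := by
        rw [map_sub, map_mul, Complex.conj_conj, ← hz1, ← Complex.mul_conj a]
        ring
      rw [e]
      simp only [Complex.add_re, Complex.sub_re, Complex.one_re, Complex.ofReal_re,
        Complex.conj_re, sub_self, add_zero]
      rw [Complex.sq_norm]
    rw [k1]
    rw [← Complex.ofReal_inv]
    rw [Complex.mul_im]
    simp only [Complex.ofReal_re, Complex.ofReal_im, mul_zero, add_zero]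
    rw [Complex.mul_im]
    simp only [Complex.I_re, Complex.I_im, zero_mul, one_mul, zero_add]
    rw [hre]
    rw [div_eq_mul_inv, ← Complex.sq_norm]
  calc ∫ t in (0:ℝ)..(2 * Real.pi),
        (1 - (‖a‖)^2) / (‖Complex.exp (t * Complex.I) - a‖)^2
      = ∫ t in (0:ℝ)..(2 * Real.pi), Complex.imCLM (G t) := by
        refine intervalIntegral.integral_congr (fun t _ => ?_)
        exact (him t).symm
    _ = Complex.imCLM (∫ t in (0:ℝ)..(2 * Real.pi), G t) :=
        Complex.imCLM.intervalIntegral_comp_comm hGint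
    _ = 2 * Real.pi := by rw [hG]; rw [hI]; simp

open Complex MeasureTheory Metric Real

section Aux2

variable {n : ℕ} {a : Fin n → ℂ}

lemma den_ne_zero {a : ℂ} (ha : ‖a‖ < 1) {z : ℂ} (hz : ‖z‖ = 1) :
    1 - (starRingEnd ℂ) a * z ≠ 0 := by
  intro h
  have : ‖(starRingEnd ℂ) a * z‖ = 1 := by
    have := sub_eq_zero.mp h
    rw [← this]; simp
  rw [norm_mul, Complex.norm_conj, hz, mul_one] at this
  exact absurd this (ne_of_lt ha)

lemma num_ne_zero {a : ℂ} (ha : ‖a‖ < 1) {z : ℂ} (hz : ‖z‖ = 1) :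
    z - a ≠ 0 := by
  intro h
  have h2 := sub_eq_zero.mp h
  rw [h2] at hz
  exact absurd hz (ne_of_lt ha)

lemma abs_factor_eq_one {a : ℂ} (ha : ‖a‖ < 1) {z : ℂ} (hz : ‖z‖ = 1) :
    ‖(z - a) / (1 - (starRingEnd ℂ) a * z)‖ = 1 := by
  have hzz : z * (starRingEnd ℂ) z = 1 := by
    rw [Complex.mul_conj]; norm_cast; simp [Complex.normSq_eq_norm_sq, hz]
  have hden : 1 - (starRingEnd ℂ) a * z = z * ((starRingEnd ℂ) z - (starRingEnd ℂ) a) := by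
    rw [mul_sub, hzz]; ring
  rw [norm_div, hden, norm_mul, hz, one_mul, ← map_sub (starRingEnd ℂ), Complex.norm_conj]
  exact div_self (fun h => num_ne_zero ha hz (by
    rwa [norm_eq_zero] at h; ))

-- derivative formula for Blaschke products on the circle
lemma deriv_abs_blaschke (n : ℕ) (a : Fin n → ℂ)
    (ha : ∀ k, ‖a k‖ < 1) (α : ℂ) (hα : ‖α‖ = 1)
    (B : ℂ → ℂ)
    (hB : ∀ z, B z = α * ∏ k, (z - a k) / (1 - (starRingEnd ℂ) (a k) * z))
    {z : ℂ} (hz : ‖z‖ = 1) :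
    ‖deriv B z‖ =
      ∑ k, (1 - (‖a k‖)^2) / (‖z - a k‖)^2 := by
  classical
  set f : Fin n → ℂ → ℂ := fun k w => (w - a k) / (1 - (starRingEnd ℂ) (a k) * w) with hf
  have hBfun : B = fun w => α * ∏ k, f k w := funext hB
  have hzz : z * (starRingEnd ℂ) z = 1 := by
    rw [Complex.mul_conj]; norm_cast; simp [Complex.normSq_eq_norm_sq, hz]
  have hzne : z ≠ 0 := by
    intro h; rw [h] at hz; simp at hz
  have hconjz : (starRingEnd ℂ) z = z⁻¹ := by
    field_simp at hzz ⊢; rw [← hzz]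
  -- derivative of each factor
  have hder : ∀ k, HasDerivAt (f k)
      ((1 - (starRingEnd ℂ) (a k) * a k) / (1 - (starRingEnd ℂ) (a k) * z)^2) z := by
    intro k
    have h1 : HasDerivAt (fun w : ℂ => w - a k) 1 z := (hasDerivAt_id z).sub_const (a k)
    have h2 : HasDerivAt (fun w : ℂ => 1 - (starRingEnd ℂ) (a k) * w)
        (-(starRingEnd ℂ) (a k)) z := by
      simpa using (((hasDerivAt_id z).const_mul ((starRingEnd ℂ) (a k))).const_sub 1)
    have := h1.fun_div h2 (den_ne_zero (ha k) hz)
    refine this.congr_deriv ?_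
    ring
  have hderB : HasDerivAt B (α * ∑ k, (∏ j ∈ Finset.univ.erase k, f j z) •
      ((1 - (starRingEnd ℂ) (a k) * a k) / (1 - (starRingEnd ℂ) (a k) * z)^2)) z := by
    rw [hBfun]
    exact (HasDerivAt.fun_finsetProd (fun k _ => hder k)).const_mul α
  rw [hderB.deriv]
  -- rewrite each summand
  have hterm : ∀ k, (∏ j ∈ Finset.univ.erase k, f j z) •
      ((1 - (starRingEnd ℂ) (a k) * a k) / (1 - (starRingEnd ℂ) (a k) * z)^2)
      = (∏ j, f j z) * z⁻¹ *
        (((1 - (‖a k‖)^2) / (‖z - a k‖)^2 : ℝ) : ℂ) := by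
    intro k
    have hcast : (((1 - (‖a k‖)^2) / (‖z - a k‖)^2 : ℝ) : ℂ)
        = (1 - (starRingEnd ℂ) (a k) * a k) /
          ((z - a k) * ((starRingEnd ℂ) z - (starRingEnd ℂ) (a k))) := by
      rw [← map_sub (starRingEnd ℂ)]
      have e1 : (z - a k) * (starRingEnd ℂ) (z - a k)
          = (((‖z - a k‖)^2 : ℝ) : ℂ) := by
        rw [Complex.mul_conj, Complex.normSq_eq_norm_sq]
      have e2 : (starRingEnd ℂ) (a k) * a k = (((‖a k‖)^2 : ℝ) : ℂ) := by
        rw [mul_comm, Complex.mul_conj, Complex.normSq_eq_norm_sq]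
      rw [e1, e2]
      push_cast
      ring
    have hkey : (1 - (starRingEnd ℂ) (a k) * a k) / (1 - (starRingEnd ℂ) (a k) * z)^2
        = f k z * z⁻¹ *
          ((1 - (starRingEnd ℂ) (a k) * a k) /
            ((z - a k) * ((starRingEnd ℂ) z - (starRingEnd ℂ) (a k)))) := by
      rw [hf]
      simp only
      rw [hconjz]
      have h1 : z - a k ≠ 0 := num_ne_zero (ha k) hz
      have h2 : (1 - (starRingEnd ℂ) (a k) * z) ≠ 0 := den_ne_zero (ha k) hz
      have hzinv : z⁻¹ - (starRingEnd ℂ) (a k) = (1 - (starRingEnd ℂ) (a k) * z) * z⁻¹ := by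
        field_simp
      rw [hzinv]
      field_simp
    rw [smul_eq_mul, hkey, hcast]
    have : (∏ j ∈ Finset.univ.erase k, f j z) * f k z = ∏ j, f j z :=
      Finset.prod_erase_mul _ _ (Finset.mem_univ k)
    rw [← this]
    ring
  have hsum : ∑ k : Fin n, (∏ j, f j z) * z⁻¹ *
      (((1 - (‖a k‖)^2) / (‖z - a k‖)^2 : ℝ) : ℂ)
      = (∏ j, f j z) * z⁻¹ *
        (((∑ k, (1 - (‖a k‖)^2) / (‖z - a k‖)^2 : ℝ)) : ℂ) := by
    rw [← Finset.mul_sum]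
    push_cast
    rfl
  rw [Finset.sum_congr rfl (fun k _ => hterm k), hsum]
  have habsprod : ‖∏ j, f j z‖ = 1 := by
    rw [norm_prod]
    exact Finset.prod_eq_one (fun j _ => abs_factor_eq_one (ha j) hz)
  have hPnonneg : 0 ≤ ∑ k, (1 - (‖a k‖)^2) / (‖z - a k‖)^2 :=
    Finset.sum_nonneg (fun k _ => div_nonneg
      (by nlinarith [norm_nonneg (a k), ha k]) (sq_nonneg _))
  rw [norm_mul, norm_mul, norm_mul, hα, one_mul, habsprod, one_mul, norm_inv, hz, inv_one,
    one_mul, Complex.norm_real, Real.norm_of_nonneg hPnonneg]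

end Aux2

/-- For a finite Blaschke product `B` of degree `n`, the mean value of `|B'|`
over the unit circle equals `n`. -/
theorem mean_deriv_blaschke (n : ℕ) (hn : 1 ≤ n) (a : Fin n → ℂ)
    (ha : ∀ k, ‖a k‖ < 1) (α : ℂ) (hα : ‖α‖ = 1)
    (B : ℂ → ℂ)
    (hB : ∀ z, B z = α * ∏ k, (z - a k) / (1 - (starRingEnd ℂ) (a k) * z)) :
    (1 / (2 * Real.pi)) *
      ∫ t in (0 : ℝ)..(2 * Real.pi),
        ‖deriv B (Complex.exp (t * Complex.I))‖ = n := by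
  have hint : ∀ k : Fin n, IntervalIntegrable
      (fun t : ℝ => (1 - (‖a k‖)^2) /
        (‖Complex.exp (t * Complex.I) - a k‖)^2) volume 0 (2 * Real.pi) := by
    intro k
    apply ContinuousOn.intervalIntegrable
    apply ContinuousOn.div continuousOn_const
    · exact ((continuous_norm.comp
        (by continuity : Continuous fun t : ℝ => Complex.exp (t * Complex.I) - a k)).pow
          2).continuousOn
    · intro t _
      exact (pow_pos (norm_pos_iff.mpr (exp_ne_a (ha k) t)) 2).ne'
  have key : (∫ t in (0 : ℝ)..(2 * Real.pi),
      ‖deriv B (Complex.exp (t * Complex.I))‖) = n * (2 * Real.pi) := by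
    rw [intervalIntegral.integral_congr (g := fun t : ℝ =>
        ∑ k, (1 - (‖a k‖)^2) /
          (‖Complex.exp (t * Complex.I) - a k‖)^2)
      (fun t _ => deriv_abs_blaschke n a ha α hα B hB (Complex.norm_exp_ofReal_mul_I t))]
    rw [intervalIntegral.integral_finset_sum (fun k _ => hint k)]
    rw [Finset.sum_congr rfl (fun k _ => poisson_integral (ha k))]
    simp [Finset.sum_const]
  rw [key]
  have hpi : Real.pi ≠ 0 := Real.pi_ne_zero
  field_simp
end

section
/- Let B be a finite Blaschke product of degree n ≥ 2 with B(0) = 0, let λ be a unimodular complex number, and let z_1,…,z_n ∈ 𝕋 be the n distinct solutions of B(z) = λ. Then B(z)/(z(B(z)-λ)) = ∑_{j=1}^n m_j/(z - z_j), where m_j = λ/(z_j B'(z_j)) = 1/|B'(z_j)|, and ∑_{j=1}^n m_j = 1. -/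
open Polynomial Finset

lemma my_derivative_prod {ι : Type*} [DecidableEq ι] (s : Finset ι) (f : ι → Polynomial ℂ) :
    derivative (∏ i ∈ s, f i) =
      ∑ i ∈ s, (∏ j ∈ s.erase i, f j) * derivative (f i) := by
  induction s using Finset.induction_on with
  | empty => simp
  | insert b s ha ih =>
    rw [Finset.prod_insert ha, derivative_mul, ih, Finset.sum_insert ha,
      Finset.erase_insert ha, Finset.mul_sum]
    have h1 : ∑ i ∈ s, (∏ j ∈ (insert b s).erase i, f j) * derivative (f i)
        = ∑ i ∈ s, f b * ((∏ j ∈ s.erase i, f j) * derivative (f i)) :=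
      Finset.sum_congr rfl fun i hi => by
        rw [Finset.erase_insert_of_ne (by rintro rfl; exact ha hi),
          Finset.prod_insert (by simp [ha]), mul_assoc]
    rw [h1]; ring

/-- Partial fraction expansion for a Blaschke product `B` of degree `n ≥ 2` with
`B(0) = 0`: if `z 1, …, z n` are the `n` distinct unimodular solutions of `B(z) = λ`,
then `B(w)/(w(B(w)-λ)) = ∑ j, m j/(w - z j)` with `m j = λ/(z j B'(z j)) = 1/|B'(z j)|`
and `∑ j, m j = 1`. -/
theorem blaschke_partial_fractions (n : ℕ) (hn : 2 ≤ n) (a : Fin n → ℂ)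
    (ha : ∀ k, ‖a k‖ < 1) (α : ℂ) (hα : ‖α‖ = 1)
    (B : ℂ → ℂ)
    (hB : ∀ w, B w = α * ∏ k, (w - a k) / (1 - (starRingEnd ℂ) (a k) * w))
    (hB0 : B 0 = 0)
    (lam : ℂ) (hlam : ‖lam‖ = 1)
    (z : Fin n → ℂ) (hzinj : Function.Injective z)
    (hz : ∀ j, ‖z j‖ = 1 ∧ B (z j) = lam)
    (hzall : ∀ w : ℂ, ‖w‖ = 1 → B w = lam → ∃ j, w = z j)
    (m : Fin n → ℂ) (hm : ∀ j, m j = lam / (z j * deriv B (z j))) :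
    (∀ j, m j = (1 : ℂ) / ((‖deriv B (z j)‖ : ℝ) : ℂ)) ∧
      (∑ j, m j) = 1 ∧
      ∀ w : ℂ, (∀ k, 1 - (starRingEnd ℂ) (a k) * w ≠ 0) → w ≠ 0 →
        (∀ j, w ≠ z j) → B w ≠ lam →
        B w / (w * (B w - lam)) = ∑ j, m j / (w - z j) := by
  classical
  have hα0 : α ≠ 0 := by intro h; simp [h] at hα
  have hlam0 : lam ≠ 0 := by intro h; simp [h] at hlam
  have hzu : ∀ j, ‖z j‖ = 1 := fun j => (hz j).1
  have hBz : ∀ j, B (z j) = lam := fun j => (hz j).2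
  have hz0 : ∀ j, z j ≠ 0 := by intro j h; have := hzu j; simp [h] at this
  have hzsub : ∀ j k, z j - a k ≠ 0 := by
    intro j k h
    rw [sub_eq_zero] at h
    have := hzu j; rw [h] at this
    exact absurd this (ne_of_lt (ha k))
  obtain ⟨k0, hk0⟩ : ∃ k, a k = 0 := by
    have h0 := hB 0
    rw [hB0] at h0
    have : ∏ k, ((0:ℂ) - a k) / (1 - (starRingEnd ℂ) (a k) * 0) = 0 := by
      rcases mul_eq_zero.1 h0.symm with h | h
      · exact absurd h hα0
      · exact h
    rw [Finset.prod_eq_zero_iff] at this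
    obtain ⟨k, -, hk⟩ := this
    refine ⟨k, ?_⟩
    simp only [mul_zero, sub_zero, zero_sub, div_one] at hk
    exact neg_eq_zero.mp hk
  set P : Polynomial ℂ := ∏ k, (X - C (a k)) with hP
  set Q : Polynomial ℂ := ∏ k, (1 - C ((starRingEnd ℂ) (a k)) * X) with hQ
  have hPeval : ∀ w, P.eval w = ∏ k, (w - a k) := by
    intro w; simp [hP, eval_prod]
  have hQeval : ∀ w, Q.eval w = ∏ k, (1 - (starRingEnd ℂ) (a k) * w) := by
    intro w; simp [hQ, eval_prod]
  have hBPQ : ∀ w, B w = α * P.eval w / Q.eval w := by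
    intro w
    rw [hB w, Finset.prod_div_distrib, ← hPeval, ← hQeval, mul_div_assoc]
  have hfacne : ∀ w : ℂ, ‖w‖ ≤ 1 → ∀ k, 1 - (starRingEnd ℂ) (a k) * w ≠ 0 := by
    intro w hw k h
    have h1 : (starRingEnd ℂ) (a k) * w = 1 := by linear_combination -h
    have := congrArg (‖·‖) h1
    rw [norm_mul, norm_one, Complex.norm_conj] at this
    nlinarith [ha k, norm_nonneg (a k), norm_nonneg w]
  have hQne : ∀ w : ℂ, ‖w‖ ≤ 1 → Q.eval w ≠ 0 := by
    intro w hw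
    rw [hQeval]
    exact Finset.prod_ne_zero_iff.2 fun k _ => hfacne w hw k
  have hQzj : ∀ j, Q.eval (z j) ≠ 0 := fun j => hQne _ (le_of_eq (hzu j))
  have hPQ : ∀ j, α * P.eval (z j) = lam * Q.eval (z j) := by
    intro j
    have h := (hBPQ (z j)).symm.trans (hBz j)
    rw [div_eq_iff (hQzj j)] at h
    linear_combination h
  have hPzj : ∀ j, P.eval (z j) ≠ 0 := by
    intro j h
    have h2 := hPQ j
    rw [h, mul_zero] at h2
    exact (mul_ne_zero hlam0 (hQzj j)) h2.symm
  -- degrees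
  have hPmonic : P.Monic := monic_prod_of_monic _ _ fun k _ => monic_X_sub_C (a k)
  have hPdeg : P.natDegree = n := by
    rw [hP, natDegree_prod _ _ (fun i _ => X_sub_C_ne_zero (a i))]
    simp
  have hQdeg : Q.natDegree < n := by
    have hfac : ∀ k : Fin n, ((1:ℂ[X]) - C ((starRingEnd ℂ) (a k)) * X).natDegree ≤ 1 := by
      intro k
      refine (natDegree_sub_le _ _).trans (max_le (by simp) ?_)
      exact (natDegree_mul_le).trans (by simp)
    have h1 : Q.natDegree ≤ ∑ k, ((1:ℂ[X]) - C ((starRingEnd ℂ) (a k)) * X).natDegree :=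
      natDegree_prod_le _ _
    have h2 : ((1:ℂ[X]) - C ((starRingEnd ℂ) (a k0)) * X).natDegree = 0 := by
      rw [hk0]; simp
    have h3 : ∑ k, ((1:ℂ[X]) - C ((starRingEnd ℂ) (a k)) * X).natDegree
        = ∑ k ∈ univ.erase k0, ((1:ℂ[X]) - C ((starRingEnd ℂ) (a k)) * X).natDegree := by
      rw [← Finset.sum_erase_add _ _ (mem_univ k0), h2, add_zero]
    have h4 : ∑ k ∈ univ.erase k0, ((1:ℂ[X]) - C ((starRingEnd ℂ) (a k)) * X).natDegree
        ≤ (univ.erase k0).card * 1 := Finset.sum_le_card_nsmul _ _ 1 fun k _ => hfac k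
    have h5 : (univ.erase k0).card = n - 1 := by
      rw [Finset.card_erase_of_mem (mem_univ k0)]; simp
    omega
  -- key polynomial identity (1)
  set T : Polynomial ℂ := ∏ j, (X - C (z j)) with hT
  have hTmonic : T.Monic := monic_prod_of_monic _ _ fun j _ => monic_X_sub_C (z j)
  have hTdeg : T.natDegree = n := by
    rw [hT, natDegree_prod _ _ (fun i _ => X_sub_C_ne_zero (z i))]
    simp
  have hTeval : ∀ w, T.eval w = ∏ j, (w - z j) := by
    intro w; simp [hT, eval_prod]
  set R : Polynomial ℂ := C α * P - C lam * Q with hR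
  have hRcoeff : ∀ i, n ≤ i → R.coeff i = (C α * T).coeff i := by
    intro i hi
    rw [hR, coeff_sub, coeff_C_mul, coeff_C_mul, coeff_C_mul]
    have hQc : Q.coeff i = 0 := coeff_eq_zero_of_natDegree_lt (lt_of_lt_of_le hQdeg hi)
    rcases eq_or_lt_of_le hi with rfl | h
    · rw [hQc, show P.coeff n = 1 from hPdeg ▸ hPmonic.coeff_natDegree,
        show T.coeff n = 1 from hTdeg ▸ hTmonic.coeff_natDegree]
      ring
    · rw [hQc, coeff_eq_zero_of_natDegree_lt (by omega : P.natDegree < i),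
        coeff_eq_zero_of_natDegree_lt (by omega : T.natDegree < i)]
      ring
  have key : R = C α * T := by
    have hDz : ∀ j, (R - C α * T).eval (z j) = 0 := by
      intro j
      rw [eval_sub, eval_mul, eval_C, hR, eval_sub, eval_mul, eval_mul, eval_C, eval_C]
      have hT0 : T.eval (z j) = 0 := by
        rw [hTeval]
        exact Finset.prod_eq_zero (mem_univ j) (by ring)
      rw [hT0]
      linear_combination hPQ j
    have hdlt : (R - C α * T).natDegree < n := by
      by_contra h
      push_neg at h
      have hne : R - C α * T ≠ 0 := by
        intro h0
        rw [h0] at h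
        simp at h; omega
      have hc : (R - C α * T).coeff ((R - C α * T).natDegree) = 0 := by
        rw [coeff_sub, hRcoeff _ h, sub_self]
      exact hne (Polynomial.leadingCoeff_eq_zero.mp hc)
    have := Polynomial.eq_zero_of_natDegree_lt_card_of_eval_eq_zero (R - C α * T) hzinj hDz
      (by simpa using hdlt)
    linear_combination this
  -- derivative of T at z j
  have hTd : ∀ j, (derivative T).eval (z j) = ∏ i ∈ univ.erase j, (z j - z i) := by
    intro j
    rw [hT, my_derivative_prod, eval_finset_sum]
    rw [Finset.sum_eq_single j]
    · simp [eval_prod]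
    · intro b _ hbj
      have h0 : eval (z j) (∏ i ∈ univ.erase b, (X - C (z i))) = 0 := by
        rw [eval_prod]
        exact Finset.prod_eq_zero (Finset.mem_erase.2 ⟨hbj.symm, mem_univ j⟩) (by simp)
      simp [h0]
    · simp
  have hTdne : ∀ j, (∏ i ∈ univ.erase j, (z j - z i)) ≠ 0 := by
    intro j
    apply Finset.prod_ne_zero_iff.2
    intro i hi
    have : i ≠ j := (Finset.mem_erase.1 hi).1
    exact sub_ne_zero.2 fun hc => this (hzinj hc.symm)
  -- derivative of B at z j
  have hRder : ∀ j, α * (derivative P).eval (z j) - lam * (derivative Q).eval (z j)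
      = α * (derivative T).eval (z j) := by
    intro j
    have := congrArg (fun p : ℂ[X] => (derivative p).eval (z j)) key
    simpa [hR, derivative_sub, derivative_C_mul] using this
  have hBderiv : ∀ j, deriv B (z j) = α * (derivative T).eval (z j) / Q.eval (z j) := by
    intro j
    have hf : HasDerivAt (fun w => α * P.eval w) (α * (derivative P).eval (z j)) (z j) :=
      (P.hasDerivAt (z j)).const_mul α
    have hg := Q.hasDerivAt (z j)
    have hd := hf.div hg (hQzj j)
    have hBfun : B = fun w => α * eval w P / eval w Q := funext hBPQ
    rw [hBfun, (show HasDerivAt (fun w => α * eval w P / eval w Q) _ (z j) from hd).deriv]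
    rw [div_eq_div_iff (pow_ne_zero 2 (hQzj j)) (hQzj j)]
    linear_combination (eval (z j) Q)^2 * (hRder j) - (eval (z j) Q * (derivative Q).eval (z j)) * hPQ j
  -- residue identity
  have hm' : ∀ j, m j * (z j * ∏ i ∈ univ.erase j, (z j - z i)) = P.eval (z j) := by
    intro j
    rw [hm j, hBderiv j, hTd j]
    have h1 : (∏ i ∈ univ.erase j, (z j - z i)) ≠ 0 := hTdne j
    have hne : z j * (α * (∏ i ∈ univ.erase j, (z j - z i)) / eval (z j) Q) ≠ 0 :=
      mul_ne_zero (hz0 j) (div_ne_zero (mul_ne_zero hα0 h1) (hQzj j))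
    rw [div_mul_eq_mul_div, div_eq_iff hne]
    have h2 : eval (z j) P * (z j * (α * (∏ i ∈ univ.erase j, (z j - z i)) / eval (z j) Q))
        = eval (z j) P * z j * α * (∏ i ∈ univ.erase j, (z j - z i)) / eval (z j) Q := by
      ring
    rw [h2, eq_div_iff (hQzj j)]
    linear_combination -(z j * ∏ i ∈ univ.erase j, (z j - z i)) * hPQ j
  -- key polynomial identity (2)
  set S : Polynomial ℂ := ∑ j, C (m j) * (X * ∏ i ∈ univ.erase j, (X - C (z i))) with hS
  have hSeval : ∀ w, S.eval w = ∑ j, m j * (w * ∏ i ∈ univ.erase j, (w - z i)) := by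
    intro w
    rw [hS, eval_finset_sum]
    exact Finset.sum_congr rfl fun j _ => by simp [eval_prod]
  have key2 : P = S := by
    have hDz : ∀ x ∈ insert (0:ℂ) (univ.image z), (P - S).eval x = 0 := by
      intro x hx
      rcases Finset.mem_insert.1 hx with rfl | hx
      · rw [eval_sub, hSeval, hPeval]
        have h1 : ∏ k, ((0:ℂ) - a k) = 0 :=
          Finset.prod_eq_zero (mem_univ k0) (by rw [hk0]; ring)
        rw [h1]
        simp
      · obtain ⟨j, -, rfl⟩ := Finset.mem_image.1 hx
        rw [eval_sub, hSeval]
        rw [Finset.sum_eq_single j]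
        · rw [hm' j]; ring
        · intro b _ hbj
          have h0 : (∏ i ∈ univ.erase b, (z j - z i)) = 0 :=
            Finset.prod_eq_zero (Finset.mem_erase.2 ⟨hbj.symm, mem_univ j⟩) (by ring)
          rw [h0]; ring
        · simp
    have hcard : (insert (0:ℂ) (univ.image z)).card = n + 1 := by
      rw [Finset.card_insert_of_notMem, Finset.card_image_of_injective _ hzinj]
      · simp
      · intro h
        obtain ⟨j, -, hj⟩ := Finset.mem_image.1 h
        exact hz0 j hj
    have hdeg : (P - S).natDegree < n + 1 := by
      have h1 : S.natDegree ≤ n := by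
        refine (natDegree_sum_le _ _).trans ?_
        rw [Finset.fold_max_le]
        constructor
        · omega
        · intro j _
          refine (natDegree_mul_le).trans ?_
          have h2 : (X * ∏ i ∈ univ.erase j, (X - C (z i))).natDegree ≤ n := by
            refine (natDegree_mul_le).trans ?_
            have h3 : (∏ i ∈ univ.erase j, (X - C (z i))).natDegree ≤ n - 1 := by
              refine (natDegree_prod_le _ _).trans ?_
              refine (Finset.sum_le_card_nsmul _ _ 1 fun i _ => by simp [natDegree_X_sub_C]).trans ?_
              rw [Finset.card_erase_of_mem (mem_univ j)]
              simp
            have h4 := natDegree_X (R := ℂ)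
            omega
          simpa using h2
      have h5 := natDegree_sub_le P S
      rw [hPdeg] at h5
      omega
    have h0 : P - S = 0 := by
      apply Polynomial.eq_zero_of_natDegree_lt_card_of_eval_eq_zero' (P - S) _ hDz
      rw [hcard]; exact hdeg
    linear_combination h0
  -- sum of residues is 1
  have hsum1 : (∑ j, m j) = 1 := by
    have hc := congrArg (fun p : ℂ[X] => p.coeff n) key2
    rw [show P.coeff n = 1 from hPdeg ▸ hPmonic.coeff_natDegree, hS, finset_sum_coeff] at hc
    rw [hc]
    apply Finset.sum_congr rfl
    intro j _
    rw [coeff_C_mul]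
    have hg : (X * ∏ i ∈ univ.erase j, (X - C (z i))).Monic :=
      monic_X.mul (monic_prod_of_monic _ _ fun i _ => monic_X_sub_C (z i))
    have hgd : (X * ∏ i ∈ univ.erase j, (X - C (z i))).natDegree = n := by
      rw [natDegree_mul (X_ne_zero)
        (monic_prod_of_monic _ _ fun i (_ : i ∈ univ.erase j) => monic_X_sub_C (z i)).ne_zero,
        natDegree_X, natDegree_prod _ _ (fun i _ => X_sub_C_ne_zero (z i))]
      have h6 : ∑ i ∈ univ.erase j, (X - C (z i)).natDegree = n - 1 := by
        simp [natDegree_X_sub_C, Finset.card_erase_of_mem]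
      rw [h6]
      omega
    have hco : (X * ∏ i ∈ univ.erase j, (X - C (z i))).coeff n = 1 := by
      have h7 := hg.coeff_natDegree
      rw [hgd] at h7
      exact h7
    rw [hco]
    ring
  -- the pointwise partial fraction identity
  have hpoint : ∀ w : ℂ, (∀ k, 1 - (starRingEnd ℂ) (a k) * w ≠ 0) → w ≠ 0 →
      (∀ j, w ≠ z j) → B w ≠ lam →
      B w / (w * (B w - lam)) = ∑ j, m j / (w - z j) := by
    intro w hQw hw0 hwz hBwlam
    have hQwne : Q.eval w ≠ 0 := by
      rw [hQeval]; exact Finset.prod_ne_zero_iff.2 fun k _ => hQw k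
    have hTwne : T.eval w ≠ 0 := by
      rw [hTeval]; exact Finset.prod_ne_zero_iff.2 fun j _ => sub_ne_zero.2 (hwz j)
    have hBw : B w = α * P.eval w / Q.eval w := hBPQ w
    have hkey_w : α * P.eval w - lam * Q.eval w = α * T.eval w := by
      have := congrArg (eval w) key
      simpa [hR] using this
    have hBws : B w - lam = α * T.eval w / Q.eval w := by
      rw [hBw, div_sub' hQwne]
      rw [div_eq_div_iff hQwne hQwne]
      linear_combination (eval w Q) * hkey_w
    have hPw : P.eval w = w * ∑ j, m j * ∏ i ∈ univ.erase j, (w - z i) := by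
      have := congrArg (eval w) key2
      rw [hSeval] at this
      rw [this, Finset.mul_sum]
      exact Finset.sum_congr rfl fun j _ => by ring
    have hsum : ∑ j, m j / (w - z j)
        = (∑ j, m j * ∏ i ∈ univ.erase j, (w - z i)) / T.eval w := by
      rw [Finset.sum_div]
      apply Finset.sum_congr rfl
      intro j _
      have hpne : (∏ i ∈ univ.erase j, (w - z i)) ≠ 0 :=
        Finset.prod_ne_zero_iff.2 fun i _ => sub_ne_zero.2 (hwz i)
      rw [hTeval, ← Finset.mul_prod_erase _ _ (mem_univ j), mul_comm (w - z j) _,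
        mul_comm (m j) _, mul_div_mul_left _ _ hpne]
    rw [hBws, hBw, hsum, hPw]
    field_simp
  refine ⟨?_, hsum1, hpoint⟩
  intro j
  have hzju : ‖z j‖ = 1 := hzu j
  have hzz : z j * (starRingEnd ℂ) (z j) = 1 := by
    rw [Complex.mul_conj, Complex.normSq_eq_norm_sq, hzju]
    norm_num
  have hll : lam * (starRingEnd ℂ) lam = 1 := by
    rw [Complex.mul_conj, Complex.normSq_eq_norm_sq, hlam]
    norm_num
  have hPd : (derivative P).eval (z j) = ∑ k, ∏ i ∈ univ.erase k, (z j - a i) := by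
    rw [hP, my_derivative_prod, eval_finset_sum]
    exact Finset.sum_congr rfl fun k _ => by simp [eval_prod]
  have hQd : (derivative Q).eval (z j)
      = ∑ k, (∏ i ∈ univ.erase k, (1 - (starRingEnd ℂ) (a i) * z j)) * (-(starRingEnd ℂ) (a k)) := by
    rw [hQ, my_derivative_prod, eval_finset_sum]
    exact Finset.sum_congr rfl fun k _ => by simp [eval_prod]
  have hA : z j * deriv B (z j) * (starRingEnd ℂ) lam
      = z j * (derivative P).eval (z j) / P.eval (z j)
      - z j * (derivative Q).eval (z j) / Q.eval (z j) := by
    rw [hBderiv j]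
    have hT' := hRder j
    rw [div_sub_div _ _ (hPzj j) (hQzj j), eq_div_iff (mul_ne_zero (hPzj j) (hQzj j))]
    have hclear : z j * (α * eval (z j) (derivative T) / eval (z j) Q) * (starRingEnd ℂ) lam
          * (eval (z j) P * eval (z j) Q)
        = z j * α * eval (z j) (derivative T) * (starRingEnd ℂ) lam * eval (z j) P
          * (eval (z j) Q / eval (z j) Q) := by
      ring
    rw [hclear, div_self (hQzj j), mul_one]
    linear_combination (-(z j * (starRingEnd ℂ) lam * P.eval (z j))) * hT' +
      (z j * (derivative P).eval (z j) * (starRingEnd ℂ) lam) * hPQ j +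
      (z j * (derivative P).eval (z j) * Q.eval (z j)
        - z j * P.eval (z j) * (derivative Q).eval (z j)) * hll
  have hB1 : z j * (derivative P).eval (z j) / P.eval (z j) = ∑ k, z j / (z j - a k) := by
    rw [hPd, hPeval, Finset.mul_sum, Finset.sum_div]
    apply Finset.sum_congr rfl
    intro k _
    have hpne : (∏ i ∈ univ.erase k, (z j - a i)) ≠ 0 :=
      Finset.prod_ne_zero_iff.2 fun i _ => hzsub j i
    rw [← Finset.mul_prod_erase _ _ (mem_univ k), mul_comm (z j - a k) _,
      mul_comm (z j) _, mul_div_mul_left _ _ hpne]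
  have hB2 : z j * (derivative Q).eval (z j) / Q.eval (z j)
      = ∑ k, (-(starRingEnd ℂ) (a k) * z j) / (1 - (starRingEnd ℂ) (a k) * z j) := by
    rw [hQd, hQeval, Finset.mul_sum, Finset.sum_div]
    apply Finset.sum_congr rfl
    intro k _
    have hpne : (∏ i ∈ univ.erase k, (1 - (starRingEnd ℂ) (a i) * z j)) ≠ 0 :=
      Finset.prod_ne_zero_iff.2 fun i _ => hfacne (z j) (le_of_eq hzju) i
    rw [← Finset.mul_prod_erase _ _ (mem_univ k)]
    rw [show z j * ((∏ i ∈ univ.erase k, (1 - (starRingEnd ℂ) (a i) * z j))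
        * (-(starRingEnd ℂ) (a k)))
      = (∏ i ∈ univ.erase k, (1 - (starRingEnd ℂ) (a i) * z j)) * (-(starRingEnd ℂ) (a k) * z j)
      from by ring]
    rw [mul_comm (1 - (starRingEnd ℂ) (a k) * z j) _, mul_div_mul_left _ _ hpne]
  have htsum : z j * deriv B (z j) * (starRingEnd ℂ) lam
      = ∑ k, (z j / (z j - a k)
        + ((starRingEnd ℂ) (a k) * z j) / (1 - (starRingEnd ℂ) (a k) * z j)) := by
    rw [hA, hB1, hB2, ← Finset.sum_sub_distrib]
    apply Finset.sum_congr rfl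
    intro k _
    rw [neg_mul, neg_div, sub_neg_eq_add]
  set r : Fin n → ℝ := fun k =>
    (1 - Complex.normSq ((starRingEnd ℂ) (a k) * z j))
      / Complex.normSq (1 - (starRingEnd ℂ) (a k) * z j) with hr
  have huabs : ∀ k, ‖(starRingEnd ℂ) (a k) * z j‖ < 1 := by
    intro k
    rw [norm_mul, Complex.norm_conj, hzju, mul_one]
    exact ha k
  have hune : ∀ k, 1 - (starRingEnd ℂ) (a k) * z j ≠ 0 :=
    fun k => hfacne (z j) (le_of_eq hzju) k
  have hrpos : ∀ k, 0 < r k := by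
    intro k
    apply div_pos
    · have h1 := huabs k
      have h2 := Complex.normSq_eq_norm_sq ((starRingEnd ℂ) (a k) * z j)
      nlinarith [norm_nonneg ((starRingEnd ℂ) (a k) * z j)]
    · exact Complex.normSq_pos.2 (hune k)
  have hterm : ∀ k, z j / (z j - a k)
      + ((starRingEnd ℂ) (a k) * z j) / (1 - (starRingEnd ℂ) (a k) * z j) = ((r k : ℝ) : ℂ) := by
    intro k
    have h1 : ((Complex.normSq (1 - (starRingEnd ℂ) (a k) * z j) : ℝ) : ℂ)
        = (1 - (starRingEnd ℂ) (a k) * z j) * (starRingEnd ℂ) (1 - (starRingEnd ℂ) (a k) * z j) := by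
      rw [Complex.mul_conj]
    have h2 : ((Complex.normSq ((starRingEnd ℂ) (a k) * z j) : ℝ) : ℂ)
        = ((starRingEnd ℂ) (a k) * z j) * (starRingEnd ℂ) ((starRingEnd ℂ) (a k) * z j) := by
      rw [Complex.mul_conj]
    rw [hr]
    push_cast
    rw [h1, h2]
    have h3 : (starRingEnd ℂ) (1 - (starRingEnd ℂ) (a k) * z j)
        = 1 - a k * (starRingEnd ℂ) (z j) := by
      rw [map_sub, map_one, map_mul, Complex.conj_conj]
    have h4 : (starRingEnd ℂ) ((starRingEnd ℂ) (a k) * z j)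
        = a k * (starRingEnd ℂ) (z j) := by
      rw [map_mul, Complex.conj_conj]
    rw [h3, h4]
    have h5 : (1 : ℂ) - a k * (starRingEnd ℂ) (z j) ≠ 0 := by
      rw [← h3]
      simpa using (star_ne_zero.2 (hune k))
    rw [div_add_div _ _ (hzsub j k) (hune k), div_eq_div_iff (mul_ne_zero (hzsub j k) (hune k))
      (mul_ne_zero (hune k) h5)]
    linear_combination (-(a k) + 2 * z j * a k * (starRingEnd ℂ) (a k)
      - (z j)^2 * a k * ((starRingEnd ℂ) (a k))^2) * hzz
  have hts : z j * deriv B (z j) * (starRingEnd ℂ) lam = ((∑ k, r k : ℝ) : ℂ) := by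
    rw [htsum]
    push_cast
    exact Finset.sum_congr rfl fun k _ => hterm k
  have hspos : 0 < ∑ k, r k :=
    Finset.sum_pos (fun k _ => hrpos k) ⟨⟨0, by omega⟩, mem_univ _⟩
  have hsne : ((∑ k, r k : ℝ) : ℂ) ≠ 0 := by
    exact_mod_cast ne_of_gt hspos
  have habs1 : ‖deriv B (z j)‖ = ∑ k, r k := by
    have h6 := congrArg (‖·‖) hts
    rw [norm_mul, norm_mul, Complex.norm_conj, hlam, hzju, one_mul, mul_one, Complex.norm_real,
      Real.norm_eq_abs,
      abs_of_pos hspos] at h6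
    exact h6
  have hzd : z j * deriv B (z j) = ((∑ k, r k : ℝ) : ℂ) * lam := by
    linear_combination lam * hts - (z j * deriv B (z j)) * hll
  rw [hm j, hzd, habs1]
  rw [mul_comm, ← div_div, div_self hlam0]
end

section
/- Let B be a finite Blaschke product of degree n ≥ 1. For every unimodular λ, if z_0, z_1, …, z_n are the n+1 distinct solutions on the unit circle of z B(z) = λ, then ∑_{j=0}^{n} 1/(|B'(z_j)| + 1) = 1. -/
open Complex Finset Polynomial


lemma denom_ne {a w : ℂ} (ha : ‖a‖ < 1) (hw : ‖w‖ = 1) :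
    1 - (starRingEnd ℂ) a * w ≠ 0 := by
  intro h
  have h1 : (starRingEnd ℂ) a * w = 1 := by linear_combination -h
  have := congrArg (fun x : ℂ => ‖x‖) h1
  simp [norm_mul, hw] at this
  simp [this] at ha

lemma key_eq {a w : ℂ} (hw : ‖w‖ = 1) :
    1 - (starRingEnd ℂ) a * w = w * (starRingEnd ℂ) (w - a) := by
  have h1 : w * (starRingEnd ℂ) w = 1 := by
    rw [Complex.mul_conj]
    norm_cast
    rw [Complex.normSq_eq_norm_sq, hw]; norm_num
  rw [map_sub]
  linear_combination -h1

lemma mobius {a ζ : ℂ} (ha : ‖a‖ < 1) (hζ : ‖ζ‖ = 1) :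
    ∃ (d : ℂ) (r : ℝ), 0 ≤ r ∧
      HasDerivAt (fun w => (w - a) / (1 - (starRingEnd ℂ) a * w)) d ζ ∧
      ζ * d = (r : ℂ) * ((ζ - a) / (1 - (starRingEnd ℂ) a * ζ)) ∧
      ‖(ζ - a) / (1 - (starRingEnd ℂ) a * ζ)‖ = 1 := by
  have hden := denom_ne ha hζ
  have hkey := key_eq (a := a) hζ
  have hva : ζ - a ≠ 0 := by
    intro h
    rw [sub_eq_zero] at h
    rw [← h] at ha
    exact absurd hζ (by linarith)
  have hnum : HasDerivAt (fun w : ℂ => w - a) 1 ζ := (hasDerivAt_id ζ).sub_const a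
  have hde : HasDerivAt (fun w : ℂ => 1 - (starRingEnd ℂ) a * w) (-(starRingEnd ℂ) a) ζ := by
    simpa using ((hasDerivAt_id ζ).const_mul ((starRingEnd ℂ) a)).const_sub 1
  have hd := hnum.div hde hden
  have hnumeq : 1 * (1 - (starRingEnd ℂ) a * ζ) - (ζ - a) * -(starRingEnd ℂ) a
      = ((1 - Complex.normSq a : ℝ) : ℂ) := by
    push_cast
    linear_combination -Complex.mul_conj a
  rw [hnumeq] at hd
  refine ⟨_, (1 - Complex.normSq a) / Complex.normSq (ζ - a), ?_, hd, ?_, ?_⟩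
  · apply div_nonneg _ (Complex.normSq_nonneg _)
    have h2 : (‖a‖)^2 = Complex.normSq a := Complex.sq_norm a
    nlinarith [norm_nonneg a]
  · have hns : Complex.normSq (ζ - a) ≠ 0 := by simpa [Complex.normSq_eq_zero] using hva
    have hnsC : ((Complex.normSq (ζ - a) : ℝ) : ℂ) ≠ 0 := by exact_mod_cast hns
    have hgoal : ζ * ((1 - Complex.normSq a : ℝ) : ℂ) * (((Complex.normSq (ζ - a) : ℝ) : ℂ) * (1 - (starRingEnd ℂ) a * ζ)) = ((1 - Complex.normSq a : ℝ) : ℂ) * (ζ - a) * (1 - (starRingEnd ℂ) a * ζ)^2 := by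
      rw [← Complex.mul_conj]
      linear_combination (-(((1 - Complex.normSq a : ℝ) : ℂ) * (ζ - a) * (1 - (starRingEnd ℂ) a * ζ))) * hkey
    rw [Complex.ofReal_div, div_mul_div_comm, ← mul_div_assoc,
      div_eq_div_iff (pow_ne_zero 2 hden) (mul_ne_zero hnsC hden)]
    linear_combination hgoal
  · rw [norm_div, hkey, norm_mul, hζ, one_mul, Complex.norm_conj, div_self]
    simpa [sub_eq_zero] using hva

lemma blaschke_deriv {n : ℕ} (a : Fin n → ℂ) (ha : ∀ k, ‖a k‖ < 1)
    (α : ℂ) (hα : ‖α‖ = 1) (B : ℂ → ℂ)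
    (hB : ∀ w, B w = α * ∏ k, (w - a k) / (1 - (starRingEnd ℂ) (a k) * w))
    {ζ : ℂ} (hζ : ‖ζ‖ = 1) :
    ∃ D : ℂ, HasDerivAt B D ζ ∧ ‖B ζ‖ = 1 ∧
      ((‖D‖ : ℂ) + 1) * (ζ * B ζ) = ζ * (ζ * D + B ζ) := by
  classical
  choose d r hr hd hzd habs using fun k => mobius (ha k) hζ
  set f : Fin n → ℂ → ℂ := fun k w => (w - a k) / (1 - (starRingEnd ℂ) (a k) * w) with hf
  set D : ℂ := α * ∑ k, (∏ i ∈ Finset.univ.erase k, f i ζ) * d k with hD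
  set S : ℝ := ∑ k, r k with hS
  have hSnn : 0 ≤ S := Finset.sum_nonneg fun k _ => hr k
  have hBd : HasDerivAt B D ζ := by
    have hBe : B = fun w => α * ∏ k, f k w := funext hB
    rw [hBe, hD]
    have := (HasDerivAt.finset_prod (u := Finset.univ) (f := fun k w => f k w)
      (f' := d) (fun k _ => hd k)).const_mul α
    simpa [smul_eq_mul] using this
  have hzD : ζ * D = (S : ℂ) * B ζ := by
    have expand : ∑ k, (∏ i ∈ Finset.univ.erase k, f i ζ) * (ζ * d k)
        = ((S : ℝ) : ℂ) * ∏ i, f i ζ := by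
      rw [hS]
      push_cast
      rw [Finset.sum_mul]
      refine Finset.sum_congr rfl fun k _ => ?_
      rw [hzd k, ← Finset.prod_erase_mul Finset.univ _ (Finset.mem_univ k)]
      show _ = (r k : ℂ) * ((∏ i ∈ Finset.univ.erase k, f i ζ) * f k ζ)
      ring
    calc ζ * D = α * ∑ k, (∏ i ∈ Finset.univ.erase k, f i ζ) * (ζ * d k) := by
          rw [hD, Finset.mul_sum, Finset.mul_sum, Finset.mul_sum]
          exact Finset.sum_congr rfl fun k _ => by ring
      _ = (S : ℂ) * (α * ∏ i, f i ζ) := by rw [expand]; ring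
      _ = (S : ℂ) * B ζ := by rw [hB ζ]
  have habsB : ‖B ζ‖ = 1 := by
    rw [hB, norm_mul, hα, one_mul, norm_prod]
    exact Finset.prod_eq_one fun k _ => habs k
  have habsD : ‖D‖ = S := by
    have h1 : ‖ζ * D‖ = ‖D‖ := by rw [norm_mul, hζ, one_mul]
    rw [← h1, hzD, norm_mul, habsB, mul_one, Complex.norm_real, Real.norm_eq_abs, _root_.abs_of_nonneg hSnn]
  refine ⟨D, hBd, habsB, ?_⟩
  rw [habsD]
  linear_combination (-ζ) * hzD

/-- For a Blaschke product `B` of degree `n ≥ 1` and unimodular `λ`, if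
`z 0, …, z n` are the `n+1` distinct unimodular solutions of `z B(z) = λ`, then
`∑ j, 1/(|B'(z j)| + 1) = 1`. -/
theorem sum_inv_deriv_add_one (n : ℕ) (hn : 1 ≤ n) (a : Fin n → ℂ)
    (ha : ∀ k, ‖a k‖ < 1) (α : ℂ) (hα : ‖α‖ = 1)
    (B : ℂ → ℂ)
    (hB : ∀ w, B w = α * ∏ k, (w - a k) / (1 - (starRingEnd ℂ) (a k) * w))
    (lam : ℂ) (hlam : ‖lam‖ = 1)
    (z : Fin (n + 1) → ℂ) (hzinj : Function.Injective z)
    (hz : ∀ j, ‖z j‖ = 1 ∧ z j * B (z j) = lam)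
    (hzall : ∀ w : ℂ, ‖w‖ = 1 → w * B w = lam → ∃ j, w = z j) :
    ∑ j, 1 / (‖deriv B (z j)‖ + 1) = 1 := by
  classical
  have hz1 : ∀ j, ‖z j‖ = 1 := fun j => (hz j).1
  have hzB : ∀ j, z j * B (z j) = lam := fun j => (hz j).2
  have hzne : ∀ j, z j ≠ 0 := fun j => by
    intro h; have := hz1 j; rw [h] at this; simp at this
  have hαne : α ≠ 0 := by intro h; rw [h] at hα; simp at hα
  have hlamne : lam ≠ 0 := by intro h; rw [h] at hlam; simp at hlam
  -- polynomials
  set M : ℂ[X] := X * ∏ k, (X - C (a k)) with hM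
  set Mz : ℂ[X] := ∏ j, (X - C (z j)) with hMz
  set Q : ℂ[X] := ∏ k, (1 - C ((starRingEnd ℂ) (a k)) * X) with hQ
  have hQe : ∀ w, Q.eval w = ∏ k, (1 - (starRingEnd ℂ) (a k) * w) := by
    intro w; simp [hQ, eval_prod]
  have hMe : ∀ w, M.eval w = w * ∏ k, (w - a k) := by
    intro w; simp [hM, eval_prod]
  have hMze : ∀ w, Mz.eval w = ∏ j, (w - z j) := by
    intro w; simp [hMz, eval_prod]
  have hQz : ∀ j, Q.eval (z j) ≠ 0 := by
    intro j; rw [hQe]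
    exact Finset.prod_ne_zero_iff.mpr fun k _ => denom_ne (ha k) (hz1 j)
  have hBw : ∀ w, B w = (α * ∏ k, (w - a k)) / Q.eval w := by
    intro w
    rw [hB w, hQe w, Finset.prod_div_distrib, mul_div_assoc]
  -- degrees
  have hMmonic : M.Monic := monic_X.mul (monic_prod_of_monic _ _ fun k _ => monic_X_sub_C _)
  have hMzmonic : Mz.Monic := monic_prod_of_monic _ _ fun j _ => monic_X_sub_C _
  have hMdeg : M.degree = ((n + 1 : ℕ) : WithBot ℕ) := by
    rw [hM, degree_mul, degree_X, degree_prod]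
    simp [degree_X_sub_C]
    rw [add_comm]
  have hMzdeg : Mz.degree = ((n + 1 : ℕ) : WithBot ℕ) := by
    rw [hMz, degree_prod]
    simp [degree_X_sub_C]
  have hsubdeg : (M - Mz).degree < ((n + 1 : ℕ) : WithBot ℕ) := by
    rw [← hMdeg]
    exact degree_sub_lt (hMdeg.trans hMzdeg.symm) hMmonic.ne_zero
      (by rw [hMmonic.leadingCoeff, hMzmonic.leadingCoeff])
  have hQdeg : Q.degree ≤ (n : WithBot ℕ) := by
    refine le_trans (degree_prod_le _ _) ?_
    refine le_trans (Finset.sum_le_sum (g := fun _ => (1 : WithBot ℕ))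
      (fun k _ => ?_)) ?_
    · refine le_trans (degree_sub_le _ _) (max_le (by simp) ?_)
      refine le_trans (degree_mul_le _ _) ?_
      refine le_trans (add_le_add degree_C_le degree_X_le) ?_
      simp
    · simp
  set F : ℂ[X] := C α * (M - Mz) - C lam * Q with hF
  have hFdeg : F.degree < ((n + 1 : ℕ) : WithBot ℕ) := by
    refine lt_of_le_of_lt (degree_sub_le _ _) (max_lt ?_ ?_)
    · refine lt_of_le_of_lt ?_ hsubdeg
      refine le_trans (degree_mul_le _ _) ?_
      refine le_trans (add_le_add degree_C_le le_rfl) ?_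
      simp
    · refine lt_of_le_of_lt (degree_mul_le _ _) ?_
      refine lt_of_le_of_lt (add_le_add degree_C_le hQdeg) ?_
      rw [zero_add]
      exact_mod_cast WithBot.coe_lt_coe.mpr (Nat.lt_succ_self n)
  have hFeval : ∀ j, F.eval (z j) = 0 := by
    intro j
    have hMz0 : Mz.eval (z j) = 0 := by
      rw [hMze]; exact Finset.prod_eq_zero (Finset.mem_univ j) (sub_self _)
    have hBQ : B (z j) * Q.eval (z j) = α * ∏ k, (z j - a k) := by
      rw [hBw (z j)]; exact div_mul_cancel₀ _ (hQz j)
    have hzBj := hzB j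
    rw [hF]
    simp only [eval_sub, eval_mul, eval_C]
    rw [hMz0, hMe]
    linear_combination (-(z j)) * hBQ + Q.eval (z j) * hzBj
  have hF0 : F = 0 := by
    by_cases h : F = 0
    · exact h
    · exact Polynomial.eq_zero_of_natDegree_lt_card_of_eval_eq_zero F hzinj hFeval
        (by rw [Fintype.card_fin]; exact (natDegree_lt_iff_degree_lt h).mpr hFdeg)
  have hkeyw : ∀ w, α * (w * ∏ k, (w - a k)) = lam * Q.eval w + α * ∏ j, (w - z j) := by
    intro w
    have := congrArg (Polynomial.eval w) hF0
    rw [hF] at this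
    simp only [eval_sub, eval_mul, eval_C, eval_zero] at this
    rw [hMe, hMze] at this
    linear_combination this
  have hQ0 : Q.eval 0 = 1 := by rw [hQe]; simp
  have hprodz : α * ∏ j, (0 - z j) = -lam := by
    have := hkeyw 0
    rw [hQ0] at this
    simp only [zero_mul, mul_zero] at this
    linear_combination -this
  -- the Π j
  set P : Fin (n + 1) → ℂ := fun j => ∏ i ∈ Finset.univ.erase j, (z j - z i) with hP
  have hPne : ∀ j, P j ≠ 0 := by
    intro j
    refine Finset.prod_ne_zero_iff.mpr fun i hi => sub_ne_zero.mpr fun h => ?_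
    exact (Finset.mem_erase.mp hi).1 (hzinj h.symm)
  -- derivatives
  have hbl := fun j => blaschke_deriv a ha α hα B hB (hz1 j)
  choose D hD habsB hDkey using hbl
  have huniq : ∀ j, 1 * B (z j) + z j * D j = α * P j / Q.eval (z j) := by
    intro j
    have hG2 : HasDerivAt (fun w => w * B w) (1 * B (z j) + z j * D j) (z j) :=
      (hasDerivAt_id _).mul (hD j)
    have hev : (fun w => w * B w) =ᶠ[nhds (z j)]
        fun w => lam + α * (∏ i, (w - z i)) / Q.eval w := by
      filter_upwards [(Q.continuous.continuousAt).eventually_ne (hQz j)] with w hw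
      rw [hBw w]
      field_simp
      linear_combination hkeyw w
    have hprodd : HasDerivAt (fun w => ∏ i, (w - z i)) (P j) (z j) := by
      have h := HasDerivAt.finset_prod (u := Finset.univ) (f := fun i w => w - z i)
        (f' := fun _ => (1 : ℂ)) (x := z j) (fun i _ => (hasDerivAt_id _).sub_const _)
      have hsum : ∑ i, (∏ k ∈ Finset.univ.erase i, (z j - z k)) • (1 : ℂ) = P j :=
        (Finset.sum_eq_single_of_mem j (Finset.mem_univ j) (fun i _ hij => by
          have h0 : (∏ k ∈ Finset.univ.erase i, (z j - z k)) = 0 :=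
            Finset.prod_eq_zero (Finset.mem_erase.mpr ⟨hij.symm, Finset.mem_univ j⟩)
              (sub_self (z j))
          simp [h0])).trans (by simp [hP])
      have e : (fun w => ∏ i, (w - z i)) = ∏ i, fun w => w - z i := by
        ext w; simp [Finset.prod_apply]
      rw [← hsum, e]; exact h
    have hQd : HasDerivAt (fun w => Q.eval w) (Q.derivative.eval (z j)) (z j) :=
      Q.hasDerivAt (z j)
    have hzero : ∏ i, (z j - z i) = 0 := Finset.prod_eq_zero (Finset.mem_univ j) (sub_self _)
    have hΦ : HasDerivAt (fun w => lam + α * (∏ i, (w - z i)) / Q.eval w)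
        (α * P j / Q.eval (z j)) (z j) := by
      have h := (((hprodd.const_mul α).div hQd (hQz j)).const_add lam)
      rw [hzero, mul_zero, zero_mul, sub_zero, sq, mul_div_mul_right _ _ (hQz j)] at h
      exact h
    exact hG2.unique (hev.hasDerivAt_iff.mpr hΦ)
  have habsne : ∀ j, ((‖D j‖ : ℂ) + 1) ≠ 0 := by
    intro j
    have h : ((‖D j‖ : ℂ) + 1) = ((‖D j‖ + 1 : ℝ) : ℂ) := by push_cast; ring
    rw [h]
    exact_mod_cast ne_of_gt (by positivity : (0:ℝ) < ‖D j‖ + 1)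
  have hterm : ∀ j, ((‖D j‖ : ℂ) + 1) * lam * Q.eval (z j) = z j * (α * P j) := by
    intro j
    have h1 := hDkey j
    rw [hzB j] at h1
    have h2 := huniq j
    have h3 : z j * (α * P j) / Q.eval (z j) * Q.eval (z j) = z j * (α * P j) := by
      exact div_mul_cancel₀ _ (hQz j)
    linear_combination Q.eval (z j) * h1 + (z j * Q.eval (z j)) * h2 + h3
  -- Lagrange
  set H : ℂ[X] := ∑ j, C (Q.eval (z j) / P j) * ∏ i ∈ Finset.univ.erase j, (X - C (z i))
    with hH
  have hHdeg : H.degree ≤ (n : WithBot ℕ) := by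
    refine le_trans (degree_sum_le _ _) ?_
    refine Finset.sup_le fun j _ => ?_
    refine le_trans (degree_mul_le _ _) ?_
    refine le_trans (add_le_add degree_C_le (degree_prod_le _ _)) ?_
    rw [zero_add]
    refine le_trans (Finset.sum_le_sum (g := fun _ => (1 : WithBot ℕ))
      (fun i _ => by rw [degree_X_sub_C])) ?_
    simp [Finset.card_erase_of_mem]
  have hHeval : ∀ m, H.eval (z m) = Q.eval (z m) := by
    intro m
    rw [hH]
    simp only [eval_finset_sum, eval_mul, eval_C, eval_prod, eval_sub, eval_X]
    rw [Finset.sum_eq_single_of_mem m (Finset.mem_univ m) (fun j _ hjm => by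
      have h0 : (∏ x ∈ Finset.univ.erase j, (z m - z x)) = 0 :=
        Finset.prod_eq_zero (Finset.mem_erase.mpr ⟨hjm.symm, Finset.mem_univ m⟩)
          (sub_self (z m))
      simp [h0])]
    exact div_mul_cancel₀ _ (hPne m)
  have hHQ : H = Q := by
    have hdiff : ∀ m, (H - Q).eval (z m) = 0 := by
      intro m; rw [eval_sub, hHeval m, sub_self]
    by_cases h : H - Q = 0
    · exact sub_eq_zero.mp h
    · exact absurd (Polynomial.eq_zero_of_natDegree_lt_card_of_eval_eq_zero (H - Q) hzinj hdiff
        (by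
          rw [Fintype.card_fin]
          refine (natDegree_lt_iff_degree_lt h).mpr ?_
          refine lt_of_le_of_lt (degree_sub_le _ _) (max_lt ?_ ?_)
          · exact lt_of_le_of_lt hHdeg (by exact_mod_cast WithBot.coe_lt_coe.mpr (Nat.lt_succ_self n))
          · exact lt_of_le_of_lt hQdeg (by exact_mod_cast WithBot.coe_lt_coe.mpr (Nat.lt_succ_self n)))) h
  have hlagr : ∑ j, Q.eval (z j) / P j * ∏ i ∈ Finset.univ.erase j, (0 - z i) = 1 := by
    have := congrArg (Polynomial.eval 0) hHQ
    rw [hQ0] at this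
    rw [← this, hH]
    simp [eval_finset_sum, eval_prod]
  have hPj0 : ∀ j, ∏ i ∈ Finset.univ.erase j, (0 - z i) = lam / (α * z j) := by
    intro j
    have h := hprodz
    rw [← Finset.mul_prod_erase Finset.univ _ (Finset.mem_univ j)] at h
    rw [eq_div_iff (mul_ne_zero hαne (hzne j))]
    linear_combination -h
  have hsumC : ∑ j, (1 : ℂ) / ((‖D j‖ : ℂ) + 1) = 1 := by
    have hterms : ∀ j, (1 : ℂ) / ((‖D j‖ : ℂ) + 1)
        = Q.eval (z j) / P j * ∏ i ∈ Finset.univ.erase j, (0 - z i) := by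
      intro j
      rw [hPj0 j, div_mul_div_comm,
        div_eq_div_iff (habsne j) (mul_ne_zero (hPne j) (mul_ne_zero hαne (hzne j)))]
      linear_combination -hterm j
    exact (Finset.sum_congr rfl fun j _ => hterms j).trans hlagr
  have hderiv : ∑ j, 1 / (‖deriv B (z j)‖ + 1)
      = ∑ j, 1 / (‖D j‖ + 1) :=
    Finset.sum_congr rfl fun j _ => by rw [(hD j).deriv]
  rw [hderiv]
  have : ((∑ j, 1 / (‖D j‖ + 1) : ℝ) : ℂ) = ((1 : ℝ) : ℂ) := by
    push_cast
    exact hsumC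
  exact_mod_cast this
end

section
/- Let B be a finite Blaschke product of degree n, and set M = sup_{|z|=1}|B'(z)|, m = inf_{|z|=1}|B'(z)|. Then m ≥ n/(M - n + 1). -/
open Polynomial Finset

noncomputable def Pp (n : ℕ) (a : Fin n → ℂ) (α : ℂ) : ℂ[X] :=
  C α * ∏ k, (X - C (a k))

noncomputable def Qq (n : ℕ) (a : Fin n → ℂ) : ℂ[X] :=
  ∏ k, (1 - C ((starRingEnd ℂ) (a k)) * X)

noncomputable def Ss (n : ℕ) (a : Fin n → ℂ) (z : ℂ) : ℝ :=
  ∑ k, (1 - ‖a k‖ ^ 2) / ‖z - a k‖ ^ 2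

lemma eval_Pp (n : ℕ) (a : Fin n → ℂ) (α : ℂ) (z : ℂ) :
    (Pp n a α).eval z = α * ∏ k, (z - a k) := by
  simp [Pp, eval_prod]

lemma eval_Qq (n : ℕ) (a : Fin n → ℂ) (z : ℂ) :
    (Qq n a).eval z = ∏ k, (1 - (starRingEnd ℂ) (a k) * z) := by
  simp [Qq, eval_prod]

lemma normSq_key (a z : ℂ) :
    Complex.normSq (1 - (starRingEnd ℂ) a * z) - Complex.normSq (z - a)
      = (1 - Complex.normSq a) * (1 - Complex.normSq z) := by
  simp only [Complex.normSq_apply, Complex.sub_re, Complex.sub_im, Complex.mul_re,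
    Complex.mul_im, Complex.one_re, Complex.one_im, Complex.conj_re, Complex.conj_im]
  ring

lemma factor_circle {a z : ℂ} (hz : ‖z‖ = 1) :
    1 - (starRingEnd ℂ) a * z = z * (starRingEnd ℂ) (z - a) := by
  have h1 : z * (starRingEnd ℂ) z = 1 := by
    rw [Complex.mul_conj]
    norm_cast
    rw [← Complex.sq_norm, hz]; norm_num
  rw [map_sub]
  have : z * ((starRingEnd ℂ) z - (starRingEnd ℂ) a) = z * (starRingEnd ℂ) z - (starRingEnd ℂ) a * z := by ring
  rw [this, h1]

lemma factor_circle_mul {a z : ℂ} (hz : ‖z‖ = 1) :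
    (z - a) * (1 - (starRingEnd ℂ) a * z)
      = z * ((‖z - a‖ ^ 2 : ℝ) : ℂ) := by
  rw [factor_circle hz]
  rw [show (z - a) * (z * (starRingEnd ℂ) (z - a)) = z * ((z-a) * (starRingEnd ℂ) (z-a)) by ring,
    Complex.mul_conj]
  norm_cast
  rw [Complex.sq_norm]

lemma abs_factor_circle {a z : ℂ} (hz : ‖z‖ = 1) :
    ‖1 - (starRingEnd ℂ) a * z‖ = ‖z - a‖ := by
  rw [factor_circle hz, norm_mul, hz, Complex.norm_conj, one_mul]
lemma one_sub_ne {a z : ℂ} (ha : ‖a‖ < 1) (hz : ‖z‖ ≤ 1) :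
    1 - (starRingEnd ℂ) a * z ≠ 0 := by
  intro h
  have h2 : (1:ℂ) = (starRingEnd ℂ) a * z := by linear_combination h
  have := congrArg norm h2
  rw [norm_mul, Complex.norm_conj, norm_one] at this
  nlinarith [norm_nonneg a, norm_nonneg z]

lemma eval_Qq_ne (n : ℕ) (a : Fin n → ℂ) (ha : ∀ k, ‖a k‖ < 1) {z : ℂ}
    (hz : ‖z‖ ≤ 1) : (Qq n a).eval z ≠ 0 := by
  rw [eval_Qq]
  exact Finset.prod_ne_zero_iff.2 fun k _ => one_sub_ne (ha k) hz

lemma eval_Pp_ne (n : ℕ) (a : Fin n → ℂ) {α : ℂ} (hα : α ≠ 0)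
    (ha : ∀ k, ‖a k‖ < 1) {z : ℂ}
    (hz : ‖z‖ = 1) : (Pp n a α).eval z ≠ 0 := by
  rw [eval_Pp]
  refine mul_ne_zero hα (Finset.prod_ne_zero_iff.2 fun k _ => ?_)
  intro h
  have : z = a k := by linear_combination h
  rw [this] at hz; exact absurd hz (ne_of_lt (ha k))

lemma abs_lt_inside {a z : ℂ} (ha : ‖a‖ < 1) (hz : ‖z‖ < 1) :
    ‖z - a‖ < ‖1 - (starRingEnd ℂ) a * z‖ := by
  have key := normSq_key a z
  have h1 : Complex.normSq a < 1 := by rw [← Complex.sq_norm]; nlinarith [norm_nonneg a]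
  have h2 : Complex.normSq z < 1 := by rw [← Complex.sq_norm]; nlinarith [norm_nonneg z]
  have : Complex.normSq (z - a) < Complex.normSq (1 - (starRingEnd ℂ) a * z) := by nlinarith
  rw [← Complex.sq_norm, ← Complex.sq_norm (1 - _)] at this
  nlinarith [norm_nonneg (z - a), norm_nonneg (1 - (starRingEnd ℂ) a * z)]

lemma abs_le_inside {a z : ℂ} (ha : ‖a‖ < 1) (hz : ‖z‖ ≤ 1) :
    ‖z - a‖ ≤ ‖1 - (starRingEnd ℂ) a * z‖ := by
  have key := normSq_key a z
  have h1 : Complex.normSq a < 1 := by rw [← Complex.sq_norm]; nlinarith [norm_nonneg a]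
  have h2 : Complex.normSq z ≤ 1 := by rw [← Complex.sq_norm]; nlinarith [norm_nonneg z]
  have : Complex.normSq (z - a) ≤ Complex.normSq (1 - (starRingEnd ℂ) a * z) := by nlinarith
  rw [← Complex.sq_norm, ← Complex.sq_norm (1 - _)] at this
  nlinarith [norm_nonneg (z - a), norm_nonneg (1 - (starRingEnd ℂ) a * z)]

lemma abs_gt_outside {a z : ℂ} (ha : ‖a‖ < 1) (hz : 1 < ‖z‖) :
    ‖1 - (starRingEnd ℂ) a * z‖ < ‖z - a‖ := by
  have key := normSq_key a z
  have h1 : Complex.normSq a < 1 := by rw [← Complex.sq_norm]; nlinarith [norm_nonneg a]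
  have h2 : 1 < Complex.normSq z := by rw [← Complex.sq_norm]; nlinarith [norm_nonneg z]
  have : Complex.normSq (1 - (starRingEnd ℂ) a * z) < Complex.normSq (z - a) := by nlinarith
  rw [← Complex.sq_norm (z - a), ← Complex.sq_norm (1 - _)] at this
  nlinarith [norm_nonneg (z - a), norm_nonneg (1 - (starRingEnd ℂ) a * z)]

lemma derivative_finset_prod {ι : Type*} [DecidableEq ι] (s : Finset ι) (f : ι → ℂ[X]) :
    derivative (∏ i ∈ s, f i) = ∑ i ∈ s, (∏ j ∈ s.erase i, f j) * derivative (f i) := by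
  induction s using Finset.induction_on with
  | empty => simp
  | insert x s hx ih =>
    rw [Finset.prod_insert hx, derivative_mul, ih, Finset.sum_insert hx,
      Finset.erase_insert hx]
    congr 1
    · exact mul_comm _ _
    · rw [Finset.mul_sum]
      refine Finset.sum_congr rfl fun i hi => ?_
      rw [Finset.erase_insert_of_ne (by rintro rfl; exact hx hi),
        Finset.prod_insert (fun h => hx (Finset.mem_of_mem_erase h))]
      ring
lemma deval_Pp (n : ℕ) (a : Fin n → ℂ) (α : ℂ) (z : ℂ) :
    (derivative (Pp n a α)).eval z = α * ∑ k, ∏ j ∈ Finset.univ.erase k, (z - a j) := by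
  rw [Pp, derivative_C_mul, derivative_finset_prod]
  simp [eval_finset_sum, eval_prod]

lemma deval_Qq (n : ℕ) (a : Fin n → ℂ) (z : ℂ) :
    (derivative (Qq n a)).eval z
      = ∑ k, (∏ j ∈ Finset.univ.erase k, (1 - (starRingEnd ℂ) (a j) * z))
          * (-(starRingEnd ℂ) (a k)) := by
  rw [Qq, derivative_finset_prod]
  simp [eval_finset_sum, eval_prod]

lemma key_identity (n : ℕ) (a : Fin n → ℂ) (α : ℂ) (ha : ∀ k, ‖a k‖ < 1)
    {z : ℂ} (hz : ‖z‖ = 1) :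
    z * ((derivative (Pp n a α) * Qq n a - Pp n a α * derivative (Qq n a)).eval z)
      = (Pp n a α).eval z * (Qq n a).eval z * ((Ss n a z : ℝ) : ℂ) := by
  have hzne : ∀ k : Fin n, z - a k ≠ 0 := by
    intro k h
    have : z = a k := by linear_combination h
    rw [this] at hz; exact absurd hz (ne_of_lt (ha k))
  have main : ∀ k : Fin n,
      z * ((∏ j ∈ Finset.univ.erase k, (z - a j))
            * (∏ j, (1 - (starRingEnd ℂ) (a j) * z)))
        + z * ((∏ j, (z - a j))
            * ((∏ j ∈ Finset.univ.erase k, (1 - (starRingEnd ℂ) (a j) * z))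
                * ((starRingEnd ℂ) (a k))))
      = (∏ j, (z - a j)) * (∏ j, (1 - (starRingEnd ℂ) (a j) * z))
          * (((1 - ‖a k‖ ^ 2) / ‖z - a k‖ ^ 2 : ℝ) : ℂ) := by
    intro k
    have h1 : (z - a k) * (1 - (starRingEnd ℂ) (a k) * z)
        = z * ((‖z - a k‖ ^ 2 : ℝ) : ℂ) := factor_circle_mul hz
    have h2 : (starRingEnd ℂ) (a k) * (a k) = ((‖a k‖ ^ 2 : ℝ) : ℂ) := by
      rw [mul_comm, Complex.mul_conj]
      norm_cast
      rw [Complex.sq_norm]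
    have hne : (‖z - a k‖ ^ 2 : ℝ) ≠ 0 :=
      pow_ne_zero 2 (norm_ne_zero_iff.mpr (hzne k))
    have h3 : ((‖z - a k‖ ^ 2 : ℝ) : ℂ)
          * (((1 - ‖a k‖ ^ 2) / ‖z - a k‖ ^ 2 : ℝ) : ℂ)
        = 1 - ((‖a k‖ ^ 2 : ℝ) : ℂ) := by
      rw [← Complex.ofReal_mul, mul_div_cancel₀ _ hne]
      push_cast; ring
    have e : z * ((1 - (starRingEnd ℂ) (a k) * z) + (starRingEnd ℂ) (a k) * (z - a k))
        = ((z - a k) * (1 - (starRingEnd ℂ) (a k) * z))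
            * (((1 - ‖a k‖ ^ 2) / ‖z - a k‖ ^ 2 : ℝ) : ℂ) := by
      rw [h1, mul_assoc, h3]
      linear_combination (-z) * h2
    have hPe : (∏ j, (z - a j)) = (z - a k) * ∏ j ∈ Finset.univ.erase k, (z - a j) :=
      (Finset.mul_prod_erase _ (fun j => z - a j) (Finset.mem_univ k)).symm
    have hQe : (∏ j, (1 - (starRingEnd ℂ) (a j) * z))
        = (1 - (starRingEnd ℂ) (a k) * z)
          * ∏ j ∈ Finset.univ.erase k, (1 - (starRingEnd ℂ) (a j) * z) :=
      (Finset.mul_prod_erase _ (fun j => 1 - (starRingEnd ℂ) (a j) * z)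
        (Finset.mem_univ k)).symm
    rw [hPe, hQe]
    linear_combination ((∏ j ∈ Finset.univ.erase k, (z - a j))
      * (∏ j ∈ Finset.univ.erase k, (1 - (starRingEnd ℂ) (a j) * z))) * e
  rw [eval_sub, eval_mul, eval_mul, deval_Pp, deval_Qq, eval_Pp, eval_Qq, Ss,
    Complex.ofReal_sum]
  simp only [mul_sub, Finset.mul_sum, Finset.sum_mul]
  rw [← Finset.sum_sub_distrib]
  refine Finset.sum_congr rfl fun k _ => ?_
  linear_combination α * (main k)
noncomputable def Rr (n : ℕ) (a : Fin n → ℂ) (α lam : ℂ) : ℂ[X] :=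
  C lam * Qq n a - X * Pp n a α

lemma natDegree_Pp (n : ℕ) (a : Fin n → ℂ) {α : ℂ} (hα : α ≠ 0) :
    (Pp n a α).natDegree = n := by
  rw [Pp, natDegree_C_mul hα, natDegree_prod]
  · simp
  · intro k _; exact X_sub_C_ne_zero (a k)

lemma Pp_ne_zero (n : ℕ) (a : Fin n → ℂ) {α : ℂ} (hα : α ≠ 0) : Pp n a α ≠ 0 := by
  rw [Pp]
  exact mul_ne_zero (by simpa using hα)
    (Finset.prod_ne_zero_iff.2 fun k _ => X_sub_C_ne_zero (a k))

lemma natDegree_Qq_le (n : ℕ) (a : Fin n → ℂ) : (Qq n a).natDegree ≤ n := by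
  rw [Qq]
  refine le_trans (Polynomial.natDegree_prod_le _ _) ?_
  calc ∑ k : Fin n, (1 - C ((starRingEnd ℂ) (a k)) * X).natDegree
      ≤ ∑ _k : Fin n, 1 := by
        refine Finset.sum_le_sum fun k _ => ?_
        refine le_trans (natDegree_sub_le _ _) ?_
        have : (C ((starRingEnd ℂ) (a k)) * X).natDegree ≤ 1 :=
          le_trans natDegree_mul_le (by simp)
        simpa using this
    _ = n := by simp
  
lemma natDegree_Rr (n : ℕ) (a : Fin n → ℂ) {α : ℂ} (hα : α ≠ 0) (lam : ℂ) :
    (Rr n a α lam).natDegree = n + 1 := by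
  rw [Rr]
  have h1 : (X * Pp n a α).natDegree = n + 1 := by
    rw [natDegree_X_mul (Pp_ne_zero n a hα), natDegree_Pp n a hα]
  rw [natDegree_sub_eq_right_of_natDegree_lt]
  · exact h1
  · rw [h1]
    exact lt_of_le_of_lt (le_trans (natDegree_C_mul_le _ _) (natDegree_Qq_le n a))
      (Nat.lt_succ_self n)

lemma Rr_ne_zero (n : ℕ) (a : Fin n → ℂ) {α : ℂ} (hα : α ≠ 0) (lam : ℂ) :
    Rr n a α lam ≠ 0 := by
  intro h
  have := natDegree_Rr n a hα lam
  rw [h, natDegree_zero] at this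
  omega

lemma eval_Rr (n : ℕ) (a : Fin n → ℂ) (α lam z : ℂ) :
    (Rr n a α lam).eval z = lam * (Qq n a).eval z - z * (Pp n a α).eval z := by
  simp [Rr]

lemma eval_Rr_zero (n : ℕ) (a : Fin n → ℂ) (α lam : ℂ) :
    (Rr n a α lam).eval 0 = lam := by
  rw [eval_Rr, eval_Qq]
  simp

lemma root_Rr_abs_one (n : ℕ) (hn : 1 ≤ n) (a : Fin n → ℂ)
    (ha : ∀ k, ‖a k‖ < 1) {α : ℂ} (hα : ‖α‖ = 1) {lam : ℂ}
    (hlam : ‖lam‖ = 1) {z : ℂ} (hroot : (Rr n a α lam).eval z = 0) :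
    ‖z‖ = 1 := by
  have hαne : α ≠ 0 := by intro h; rw [h] at hα; simp at hα
  have heq : lam * (Qq n a).eval z = z * (Pp n a α).eval z := by
    have := eval_Rr n a α lam z
    rw [hroot] at this
    linear_combination -this
  have habs : ‖(Qq n a).eval z‖ = ‖z‖ * ‖(Pp n a α).eval z‖ := by
    have := congrArg norm heq
    rwa [norm_mul, norm_mul, hlam, one_mul] at this
  rcases lt_trichotomy (‖z‖) 1 with h | h | h
  · exfalso
    have hQne : ‖(Qq n a).eval z‖ > 0 :=
      (norm_pos_iff).2 (eval_Qq_ne n a ha h.le)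
    have hPQ : ‖(Pp n a α).eval z‖ ≤ ‖(Qq n a).eval z‖ := by
      rw [eval_Pp, eval_Qq, norm_mul, hα, one_mul, norm_prod, norm_prod]
      exact Finset.prod_le_prod (fun k _ => norm_nonneg _)
        (fun k _ => abs_le_inside (ha k) h.le)
    have hPpos : 0 < ‖(Pp n a α).eval z‖ := by
      rcases (norm_nonneg ((Pp n a α).eval z)).lt_or_eq with h' | h'
      · exact h'
      · rw [← h', mul_zero] at habs; exact absurd habs (ne_of_gt hQne)
    have : ‖(Qq n a).eval z‖ < ‖(Pp n a α).eval z‖ := by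
      rw [habs]
      nlinarith
    linarith
  · exact h
  · exfalso
    have hf : ∀ k : Fin n, ‖1 - (starRingEnd ℂ) (a k) * z‖ < ‖z - a k‖ :=
      fun k => abs_gt_outside (ha k) h
    have hQP : ‖(Qq n a).eval z‖ < ‖(Pp n a α).eval z‖ := by
      rw [eval_Pp, eval_Qq, norm_mul, hα, one_mul, norm_prod, norm_prod]
      have hpos : ∀ k : Fin n, 0 < ‖z - a k‖ :=
        fun k => lt_of_le_of_lt (norm_nonneg _) (hf k)
      by_cases hall : ∀ k : Fin n, 0 < ‖1 - (starRingEnd ℂ) (a k) * z‖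
      · exact Finset.prod_lt_prod_of_nonempty (fun k _ => hall k) (fun k _ => hf k)
          (Finset.univ_nonempty_iff.2 (by exact ⟨⟨0, hn⟩⟩))
      · push_neg at hall
        obtain ⟨k0, hk0⟩ := hall
        have hz0 : ‖1 - (starRingEnd ℂ) (a k0) * z‖ = 0 :=
          le_antisymm hk0 (norm_nonneg _)
        have : (∏ k : Fin n, ‖1 - (starRingEnd ℂ) (a k) * z‖) = 0 :=
          Finset.prod_eq_zero (Finset.mem_univ k0) hz0
        rw [this]
        exact Finset.prod_pos fun k _ => hpos k
    nlinarith [norm_nonneg ((Qq n a).eval z), norm_nonneg ((Pp n a α).eval z)]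
lemma Ss_nonneg (n : ℕ) (a : Fin n → ℂ) (ha : ∀ k, ‖a k‖ < 1) (z : ℂ) :
    0 ≤ Ss n a z := by
  refine Finset.sum_nonneg fun k _ => div_nonneg ?_ (sq_nonneg _)
  nlinarith [norm_nonneg (a k), ha k]

lemma one_add_Ss_ne (n : ℕ) (a : Fin n → ℂ) (ha : ∀ k, ‖a k‖ < 1) (z : ℂ) :
    (1 : ℂ) + ((Ss n a z : ℝ) : ℂ) ≠ 0 := by
  have h := Ss_nonneg n a ha z
  intro hc
  have : ((1 + Ss n a z : ℝ) : ℂ) = 0 := by push_cast; linear_combination hc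
  rw [Complex.ofReal_eq_zero] at this
  linarith

lemma deriv_Rr_eval (n : ℕ) (a : Fin n → ℂ) (ha : ∀ k, ‖a k‖ < 1)
    (α lam : ℂ) {z : ℂ} (hz : ‖z‖ = 1)
    (hroot : (Rr n a α lam).eval z = 0) :
    z * (derivative (Rr n a α lam)).eval z
      = -lam * (Qq n a).eval z * (1 + ((Ss n a z : ℝ) : ℂ)) := by
  have hQ := eval_Qq_ne n a ha hz.le
  have hkey := key_identity n a α ha hz
  simp only [eval_sub, eval_mul] at hkey
  have hroot' : lam * (Qq n a).eval z = z * (Pp n a α).eval z := by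
    have h := eval_Rr n a α lam z
    rw [hroot] at h
    linear_combination -h
  have dR : (derivative (Rr n a α lam)).eval z
      = lam * (derivative (Qq n a)).eval z
        - ((Pp n a α).eval z + z * (derivative (Pp n a α)).eval z) := by
    rw [Rr, derivative_sub, derivative_C_mul, derivative_mul, derivative_X]
    simp
  apply mul_left_cancel₀ hQ
  rw [dR]
  linear_combination (-z) * hkey
    + (z * (derivative (Qq n a)).eval z
        + (Qq n a).eval z * (1 + ((Ss n a z : ℝ) : ℂ))) * hroot'

lemma deriv_Rr_ne (n : ℕ) (a : Fin n → ℂ) (ha : ∀ k, ‖a k‖ < 1)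
    (α : ℂ) {lam : ℂ} (hlam : ‖lam‖ = 1) {z : ℂ} (hz : ‖z‖ = 1)
    (hroot : (Rr n a α lam).eval z = 0) :
    (derivative (Rr n a α lam)).eval z ≠ 0 := by
  intro hc
  have h := deriv_Rr_eval n a ha α lam hz hroot
  rw [hc, mul_zero] at h
  have hlamne : lam ≠ 0 := by intro h0; rw [h0] at hlam; simp at hlam
  have := mul_ne_zero (mul_ne_zero (neg_ne_zero.2 hlamne) (eval_Qq_ne n a ha hz.le))
    (one_add_Ss_ne n a ha z)
  exact this h.symm

lemma roots_Rr_nodup (n : ℕ) (hn : 1 ≤ n) (a : Fin n → ℂ)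
    (ha : ∀ k, ‖a k‖ < 1) {α : ℂ} (hα : ‖α‖ = 1) {lam : ℂ}
    (hlam : ‖lam‖ = 1) : (Rr n a α lam).roots.Nodup := by
  have hαne : α ≠ 0 := by intro h; rw [h] at hα; simp at hα
  rw [Multiset.nodup_iff_count_le_one]
  intro z
  by_cases hzr : z ∈ (Rr n a α lam).roots
  · rw [Polynomial.count_roots]
    by_contra hgt
    push_neg at hgt
    have hroot : (Rr n a α lam).eval z = 0 :=
      (Polynomial.isRoot_of_mem_roots hzr)
    have hz1 : ‖z‖ = 1 := root_Rr_abs_one n hn a ha hα hlam hroot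
    have hdvd : (X - C z) ^ 2 ∣ Rr n a α lam :=
      dvd_trans (pow_dvd_pow _ hgt) (Polynomial.pow_rootMultiplicity_dvd _ z)
    obtain ⟨t, ht⟩ := hdvd
    have : (derivative (Rr n a α lam)).eval z = 0 := by
      rw [ht, derivative_mul, derivative_pow, derivative_sub, derivative_X, derivative_C]
      simp
    exact deriv_Rr_ne n a ha α hlam hz1 hroot this
  · rw [Multiset.count_eq_zero_of_notMem hzr]
    omega
lemma sum_identity (n : ℕ) (hn : 1 ≤ n) (a : Fin n → ℂ)
    (ha : ∀ k, ‖a k‖ < 1) {α : ℂ} (hα : ‖α‖ = 1) {lam : ℂ}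
    (hlam : ‖lam‖ = 1) :
    ∃ Z : Finset ℂ, Z.card = n + 1
      ∧ (∀ z ∈ Z, ‖z‖ = 1 ∧ (Rr n a α lam).eval z = 0)
      ∧ (∀ z, (Rr n a α lam).eval z = 0 → z ∈ Z)
      ∧ ∑ z ∈ Z, (1 + Ss n a z)⁻¹ = 1 := by
  have hαne : α ≠ 0 := by intro h; rw [h] at hα; simp at hα
  have hlamne : lam ≠ 0 := by intro h; rw [h] at hlam; simp at hlam
  set R := Rr n a α lam with hRdef
  have hRne : R ≠ 0 := Rr_ne_zero n a hαne lam
  have hsplits : R.Splits := IsAlgClosed.splits _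
  have hcard : Multiset.card R.roots = n + 1 := by
    rw [Polynomial.splits_iff_card_roots.1 hsplits, natDegree_Rr n a hαne]
  have hnodup : R.roots.Nodup := roots_Rr_nodup n hn a ha hα hlam
  set Z := R.roots.toFinset with hZdef
  have hZval : Z.val = R.roots := by
    rw [hZdef, Multiset.toFinset_val, Multiset.dedup_eq_self.2 hnodup]
  have hZcard : Z.card = n + 1 := by
    rw [Finset.card_def, hZval, hcard]
  have hroot : ∀ z ∈ Z, R.eval z = 0 := fun z hz =>
    Polynomial.isRoot_of_mem_roots (Multiset.mem_toFinset.1 hz)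
  have habs1 : ∀ z ∈ Z, ‖z‖ = 1 := fun z hz =>
    root_Rr_abs_one n hn a ha hα hlam (hroot z hz)
  set l := R.leadingCoeff with hldef
  have hl : l ≠ 0 := Polynomial.leadingCoeff_ne_zero.2 hRne
  have hfact : R = C l * ∏ i ∈ Z, (X - C i) := by
    conv_lhs => rw [hsplits.eq_prod_roots]
    congr 1
    rw [Finset.prod_eq_multiset_prod, hZval]
  have hder : ∀ j ∈ Z, (derivative R).eval j = l * ∏ i ∈ Z.erase j, (j - i) := by
    intro j hj
    conv_lhs => rw [hfact]
    rw [derivative_C_mul, derivative_finset_prod, eval_mul, eval_C, eval_finset_sum]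
    rw [Finset.sum_eq_single j]
    · simp [eval_prod]
    · intro i hi hij
      rw [eval_mul, eval_prod]
      have hmem' : j ∈ Z.erase i := Finset.mem_erase.2 ⟨(Ne.symm hij), hj⟩
      rw [Finset.prod_eq_zero hmem' (by simp), zero_mul]
    · intro h; exact absurd hj h
  have hlameq : lam = l * ∏ i ∈ Z, (0 - i) := by
    have h0 : R.eval 0 = lam := eval_Rr_zero n a α lam
    rw [hfact, eval_mul, eval_C, eval_prod] at h0
    simp only [eval_sub, eval_X, eval_C] at h0
    exact h0.symm
  have hdegQ : (Qq n a).degree < (Z.card : WithBot ℕ) := by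
    refine lt_of_le_of_lt (Polynomial.degree_le_natDegree) ?_
    rw [hZcard]
    exact_mod_cast Nat.lt_succ_of_le (natDegree_Qq_le n a)
  have hinterp := Lagrange.eq_interpolate (f := Qq n a) (v := id) (Set.injOn_id _) hdegQ
  have h0 := congrArg (Polynomial.eval 0) hinterp
  have hQ0 : (Qq n a).eval 0 = 1 := by rw [eval_Qq]; simp
  rw [hQ0, Lagrange.interpolate_apply] at h0
  simp only [eval_finset_sum, eval_mul, eval_C, id_eq] at h0
  have hterm : ∀ j ∈ Z, (Qq n a).eval j * (Lagrange.basis Z id j).eval 0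
      = (((1 + Ss n a j)⁻¹ : ℝ) : ℂ) := by
    intro j hj
    have hzj := habs1 j hj
    have hrj := hroot j hj
    have hjne : j ≠ 0 := by intro h; rw [h] at hzj; simp at hzj
    have hQj : (Qq n a).eval j ≠ 0 := eval_Qq_ne n a ha hzj.le
    have hdR := deriv_Rr_eval n a ha α lam hzj hrj
    have hdRne := deriv_Rr_ne n a ha α hlam hzj hrj
    have hT : (1:ℂ) + ((Ss n a j : ℝ) : ℂ) ≠ 0 := one_add_Ss_ne n a ha j
    have hbasis : (Lagrange.basis Z id j).eval 0
        = ∏ i ∈ Z.erase j, ((j - i)⁻¹ * (0 - i)) := by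
      rw [Lagrange.basis, eval_prod]
      refine Finset.prod_congr rfl fun i hi => ?_
      rw [Lagrange.basisDivisor]
      simp only [eval_mul, eval_C, eval_sub, eval_X, id_eq]
    have hlam2 : lam = l * ((0 - j) * ∏ i ∈ Z.erase j, (0 - i)) := by
      rw [hlameq]
      congr 1
      exact (Finset.mul_prod_erase Z _ hj).symm
    have hPAne : (∏ i ∈ Z.erase j, (j - i)) ≠ 0 := by
      intro h
      rw [hder j hj, h, mul_zero] at hdRne
      exact hdRne rfl
    have hPBne : (∏ i ∈ Z.erase j, (0 - i)) ≠ 0 := by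
      intro h
      rw [h, mul_zero, mul_zero] at hlam2
      exact hlamne hlam2
    have hE : (Qq n a).eval j * (∏ i ∈ Z.erase j, (0 - i))
          * ((1:ℂ) + ((Ss n a j : ℝ) : ℂ))
        = ∏ i ∈ Z.erase j, (j - i) := by
      apply mul_left_cancel₀ (mul_ne_zero hl hjne)
      linear_combination (-1 : ℂ) * hdR + j * (hder j hj)
        + (Qq n a).eval j * ((1:ℂ) + ((Ss n a j : ℝ) : ℂ)) * hlam2
    rw [hbasis, Finset.prod_mul_distrib, Finset.prod_inv_distrib]
    have hcast : (((1 + Ss n a j)⁻¹ : ℝ) : ℂ) = ((1:ℂ) + ((Ss n a j : ℝ) : ℂ))⁻¹ := by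
      push_cast; ring
    have hPBne' : (∏ x ∈ Z.erase j, -x) ≠ 0 := by
      simpa only [zero_sub] using hPBne
    rw [hcast, ← hE, mul_inv]
    field_simp
  rw [Finset.sum_congr rfl hterm] at h0
  refine ⟨Z, hZcard, fun z hz => ⟨habs1 z hz, hroot z hz⟩, ?_, ?_⟩
  · intro z hz
    exact Multiset.mem_toFinset.2 ((Polynomial.mem_roots hRne).2 hz)
  have hc : ((∑ z ∈ Z, (1 + Ss n a z)⁻¹ : ℝ) : ℂ) = 1 := by
    rw [Complex.ofReal_sum]
    exact h0.symm
  exact_mod_cast hc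
lemma abs_eval_eq (n : ℕ) (a : Fin n → ℂ) (ha : ∀ k, ‖a k‖ < 1)
    {α : ℂ} (hα : ‖α‖ = 1) {z : ℂ} (hz : ‖z‖ = 1) :
    ‖(Pp n a α).eval z‖ = ‖(Qq n a).eval z‖ := by
  rw [eval_Pp, eval_Qq, norm_mul, hα, one_mul, norm_prod, norm_prod]
  exact Finset.prod_congr rfl fun k _ => (abs_factor_circle hz).symm

lemma abs_deriv_eq (n : ℕ) (a : Fin n → ℂ) (ha : ∀ k, ‖a k‖ < 1)
    {α : ℂ} (hα : ‖α‖ = 1) {B : ℂ → ℂ}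
    (hBfun : B = fun w => (Pp n a α).eval w / (Qq n a).eval w)
    {z : ℂ} (hz : ‖z‖ = 1) :
    ‖deriv B z‖ = Ss n a z := by
  have hαne : α ≠ 0 := by intro h; rw [h] at hα; simp at hα
  have hq := eval_Qq_ne n a ha hz.le
  have hd : HasDerivAt B
      (((derivative (Pp n a α)).eval z * (Qq n a).eval z
        - (Pp n a α).eval z * (derivative (Qq n a)).eval z) / ((Qq n a).eval z) ^ 2) z := by
    rw [hBfun]
    exact ((Pp n a α).hasDerivAt z).div ((Qq n a).hasDerivAt z) hq
  rw [hd.deriv]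
  have hkey := key_identity n a α ha hz
  simp only [eval_sub, eval_mul] at hkey
  have habsN : ‖(derivative (Pp n a α)).eval z * (Qq n a).eval z
      - (Pp n a α).eval z * (derivative (Qq n a)).eval z‖
      = ‖(Qq n a).eval z‖ ^ 2 * Ss n a z := by
    have h1 := congrArg norm hkey
    rw [norm_mul, hz, one_mul] at h1
    rw [h1, norm_mul, norm_mul, abs_eval_eq n a ha hα hz, Complex.norm_real, Real.norm_eq_abs,
      abs_of_nonneg (Ss_nonneg n a ha z)]
    ring
  rw [norm_div, habsN, norm_pow]
  rw [mul_comm, mul_div_assoc, div_self (pow_ne_zero 2 (norm_ne_zero_iff.mpr hq)), mul_one]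
/-- For a Blaschke product of degree `n`, with `M = sup_{|z|=1}|B'|` and
`m = inf_{|z|=1}|B'|`, one has `m ≥ n/(M - n + 1)`. -/
theorem inf_ge_of_sup (n : ℕ) (hn : 1 ≤ n) (a : Fin n → ℂ)
    (ha : ∀ k, ‖a k‖ < 1) (α : ℂ) (hα : ‖α‖ = 1)
    (B : ℂ → ℂ)
    (hB : ∀ z, B z = α * ∏ k, (z - a k) / (1 - (starRingEnd ℂ) (a k) * z))
    (M m : ℝ)
    (hM : M = sSup ((fun z => ‖deriv B z‖) '' {z : ℂ | ‖z‖ = 1}))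
    (hm : m = sInf ((fun z => ‖deriv B z‖) '' {z : ℂ | ‖z‖ = 1})) :
    n / (M - n + 1) ≤ m := by
  have hαne : α ≠ 0 := by intro h; rw [h] at hα; simp at hα
  have hBfun : B = fun w => (Pp n a α).eval w / (Qq n a).eval w := by
    funext w
    rw [hB, eval_Pp, eval_Qq, Finset.prod_div_distrib, mul_div_assoc]
  -- the image set equals the image of Ss
  have hset : ((fun z => ‖deriv B z‖) '' {z : ℂ | ‖z‖ = 1})
      = Ss n a '' {z : ℂ | ‖z‖ = 1} := by
    apply Set.image_congr
    intro z hz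
    exact abs_deriv_eq n a ha hα hBfun hz
  have hsphere : {z : ℂ | ‖z‖ = 1} = Metric.sphere (0 : ℂ) 1 := by
    ext z
    simp [Complex.dist_eq]
  have hScont : ContinuousOn (Ss n a) {z : ℂ | ‖z‖ = 1} := by
    apply continuousOn_finset_sum
    intro k _
    apply ContinuousOn.div continuousOn_const
    · exact ((continuous_norm.comp (continuous_id.sub continuous_const)).pow 2).continuousOn
    · intro z hz
      have hzk : z - a k ≠ 0 := by
        intro h
        have : z = a k := by linear_combination h
        rw [Set.mem_setOf_eq, this] at hz
        exact absurd hz (ne_of_lt (ha k))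
      exact pow_ne_zero 2 (norm_ne_zero_iff.mpr hzk)
  have hKcompact : IsCompact (Ss n a '' {z : ℂ | ‖z‖ = 1}) := by
    rw [hsphere] at hScont ⊢
    exact (isCompact_sphere 0 1).image_of_continuousOn hScont
  have hne : (Ss n a '' {z : ℂ | ‖z‖ = 1}).Nonempty := by
    refine ⟨Ss n a 1, 1, ?_, rfl⟩
    simp
  have hbdd : BddAbove (Ss n a '' {z : ℂ | ‖z‖ = 1}) := hKcompact.bddAbove
  rw [hset] at hM hm
  -- the infimum is attained
  obtain ⟨z₀, hz₀mem, hz₀⟩ : ∃ z₀, ‖z₀‖ = 1 ∧ Ss n a z₀ = m := by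
    have := hKcompact.sInf_mem hne
    rw [← hm] at this
    obtain ⟨z₀, hz₀mem, hz₀⟩ := this
    exact ⟨z₀, hz₀mem, hz₀⟩
  have hle_M : ∀ z : ℂ, ‖z‖ = 1 → Ss n a z ≤ M := by
    intro z hz
    rw [hM]
    exact le_csSup hbdd ⟨z, hz, rfl⟩
  have hm_nonneg : 0 ≤ m := by rw [← hz₀]; exact Ss_nonneg n a ha z₀
  have hmM : m ≤ M := by rw [← hz₀]; exact hle_M z₀ hz₀mem
  -- set up the root sum identity with lam = z₀ * B z₀
  have hq₀ := eval_Qq_ne n a ha hz₀mem.le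
  set lam := z₀ * ((Pp n a α).eval z₀ / (Qq n a).eval z₀) with hlamdef
  have hlam : ‖lam‖ = 1 := by
    rw [hlamdef, norm_mul, norm_div, abs_eval_eq n a ha hα hz₀mem, hz₀mem,
      div_self (norm_ne_zero_iff.mpr hq₀), one_mul]
  obtain ⟨Z, hZcard, hZprop, hZall, hZsum⟩ := sum_identity n hn a ha hα hlam
  have hz₀root : (Rr n a α lam).eval z₀ = 0 := by
    rw [eval_Rr, hlamdef]
    field_simp
    ring
  have hz₀Z : z₀ ∈ Z := hZall z₀ hz₀root
  -- split off the z₀ term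
  have hsplit : (1 + Ss n a z₀)⁻¹ + ∑ z ∈ Z.erase z₀, (1 + Ss n a z)⁻¹ = 1 := by
    rw [Finset.add_sum_erase Z (fun z => (1 + Ss n a z)⁻¹) hz₀Z]
    exact hZsum
  have hcard_erase : (Z.erase z₀).card = n := by
    rw [Finset.card_erase_of_mem hz₀Z, hZcard]
    omega
  have hM1 : (0:ℝ) < 1 + M := by linarith
  have hterm_ge : ∀ z ∈ Z.erase z₀, (1 + M)⁻¹ ≤ (1 + Ss n a z)⁻¹ := by
    intro z hz
    have hz1 := (hZprop z (Finset.mem_of_mem_erase hz)).1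
    have h1 : 0 < 1 + Ss n a z := by
      have := Ss_nonneg n a ha z
      linarith
    exact inv_anti₀ h1 (by linarith [hle_M z hz1])
  have hsum_ge : (n : ℝ) * (1 + M)⁻¹ ≤ ∑ z ∈ Z.erase z₀, (1 + Ss n a z)⁻¹ := by
    calc (n : ℝ) * (1 + M)⁻¹ = ∑ _z ∈ Z.erase z₀, (1 + M)⁻¹ := by
          rw [Finset.sum_const, hcard_erase, nsmul_eq_mul]
      _ ≤ _ := Finset.sum_le_sum hterm_ge
  have hm1 : (0:ℝ) < 1 + m := by linarith
  have hineq : (1 + m)⁻¹ + (n : ℝ) * (1 + M)⁻¹ ≤ 1 := by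
    rw [hz₀] at hsplit
    linarith
  -- final algebra
  have hmain : (n : ℝ) ≤ m * (M - n + 1) := by
    have h1 : (1 + M) * (1 + m) * ((1 + m)⁻¹ + (n : ℝ) * (1 + M)⁻¹)
        = (1 + M) + (n : ℝ) * (1 + m) := by
      field_simp
    have h2 := mul_le_mul_of_nonneg_left hineq (mul_pos hM1 hm1).le
    rw [mul_one, h1] at h2
    nlinarith
  have hpos : (0:ℝ) < M - n + 1 := by
    by_contra hcon
    push_neg at hcon
    have hn1 : (1:ℝ) ≤ (n:ℝ) := by exact_mod_cast hn
    nlinarith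
  rw [div_le_iff₀ hpos]
  linarith
end

section
/- Let B be a finite Blaschke product of degree n, and set M = sup_{|z|=1}|B'(z)|, m = inf_{|z|=1}|B'(z)|. Then m ≤ n - 1 + n/M. -/
open Complex Polynomial Finset

lemma aux_normSq (a w : ℂ) :
    normSq (1 - (starRingEnd ℂ) a * w) - normSq (w - a)
      = (1 - normSq a) * (1 - normSq w) := by
  simp only [normSq_apply, mul_re, mul_im, conj_re, conj_im, sub_re, sub_im, one_re, one_im]
  ring

lemma aux_key {z : ℂ} (hz : ‖z‖ = 1) (a : ℂ) :
    1 - (starRingEnd ℂ) a * z = (starRingEnd ℂ) (z - a) * z := by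
  have h1 : (starRingEnd ℂ) z * z = 1 := by
    rw [mul_comm, Complex.mul_conj]
    norm_cast
    rw [← Complex.sq_norm, hz]; norm_num
  rw [map_sub, sub_mul, h1]

lemma aux_abs_eq {z : ℂ} (hz : ‖z‖ = 1) (a : ℂ) :
    ‖z - a‖ = ‖1 - (starRingEnd ℂ) a * z‖ := by
  rw [aux_key hz a, norm_mul, hz, mul_one, Complex.norm_conj]

/-- product of factor and conjugate-factor on circle -/
lemma aux_prodfactor {z : ℂ} (hz : ‖z‖ = 1) (a : ℂ) :
    (z - a) * (1 - (starRingEnd ℂ) a * z) = (normSq (z - a) : ℂ) * z := by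
  rw [aux_key hz a, ← mul_assoc, Complex.mul_conj]


lemma aux_factor_hasDerivAt {a z : ℂ} (hden : 1 - (starRingEnd ℂ) a * z ≠ 0) :
    HasDerivAt (fun w => (w - a) / (1 - (starRingEnd ℂ) a * w))
      ((1 - (normSq a : ℂ)) / (1 - (starRingEnd ℂ) a * z) ^ 2) z := by
  have hnum : HasDerivAt (fun w : ℂ => w - a) 1 z := (hasDerivAt_id z).sub_const a
  have hd : HasDerivAt (fun w : ℂ => 1 - (starRingEnd ℂ) a * w) (-(starRingEnd ℂ) a) z := by
    simpa using ((hasDerivAt_id z).const_mul ((starRingEnd ℂ) a)).const_sub 1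
  have h := hnum.div hd hden
  convert h using 1
  rfl
  rfl
  rfl
  have hc : (starRingEnd ℂ) a * a = (normSq a : ℂ) := by
    rw [mul_comm, Complex.mul_conj]
  rw [← hc]
  ring

lemma aux_B_hasDerivAt {n : ℕ} (a : Fin n → ℂ) (ha : ∀ k, ‖a k‖ < 1)
    (α : ℂ) (B : ℂ → ℂ)
    (hB : ∀ z, B z = α * ∏ k, (z - a k) / (1 - (starRingEnd ℂ) (a k) * z))
    {z : ℂ} (hz : ‖z‖ = 1) :
    HasDerivAt B
      (B z * ∑ k, (1 - (normSq (a k) : ℂ)) / ((z - a k) * (1 - (starRingEnd ℂ) (a k) * z))) z := by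
  have hden : ∀ k, 1 - (starRingEnd ℂ) (a k) * z ≠ 0 := by
    intro k h
    have h3 : ‖(starRingEnd ℂ) (a k) * z‖ = ‖a k‖ := by
      rw [norm_mul, hz, mul_one, Complex.norm_conj]
    have h2 : (starRingEnd ℂ) (a k) * z = 1 := by linear_combination -h
    rw [h2] at h3
    simp at h3
    linarith [ha k]
  have hnum : ∀ k, z - a k ≠ 0 := by
    intro k h
    have h4 : z = a k := by linear_combination h
    rw [h4] at hz
    linarith [ha k]
  have hprod : HasDerivAt (fun w => ∏ k, (w - a k) / (1 - (starRingEnd ℂ) (a k) * w))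
      (∑ k, (∏ j ∈ univ.erase k, (z - a j) / (1 - (starRingEnd ℂ) (a j) * z)) •
        ((1 - (normSq (a k) : ℂ)) / (1 - (starRingEnd ℂ) (a k) * z) ^ 2)) z :=
    HasDerivAt.fun_finsetProd (fun k _ => aux_factor_hasDerivAt (hden k))
  have h := hprod.const_mul α
  have hfun : B = fun w => α * ∏ k, (w - a k) / (1 - (starRingEnd ℂ) (a k) * w) := funext hB
  rw [hfun]
  convert h using 1
  rfl
  rfl
  rw [mul_assoc]
  congr 1
  rw [Finset.mul_sum]
  refine Finset.sum_congr rfl fun k _ => ?_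
  have hkey : (z - a k) / (1 - (starRingEnd ℂ) (a k) * z) *
      ((1 - (normSq (a k) : ℂ)) / ((z - a k) * (1 - (starRingEnd ℂ) (a k) * z)))
      = (1 - (normSq (a k) : ℂ)) / (1 - (starRingEnd ℂ) (a k) * z) ^ 2 := by
    rw [div_mul_div_comm, sq]
    rw [mul_comm (z - a k) (1 - (starRingEnd ℂ) (a k) * z), ← mul_assoc]
    rw [mul_comm (z - a k) (1 - (normSq (a k) : ℂ))]
    exact mul_div_mul_right _ _ (hnum k)
  conv_lhs => rw [← Finset.mul_prod_erase univ _ (Finset.mem_univ k)]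
  rw [smul_eq_mul, mul_comm ((z - a k) / (1 - (starRingEnd ℂ) (a k) * z)) _, mul_assoc, hkey]

lemma aux_ne_facts {a z : ℂ} (ha : ‖a‖ < 1) (hz : ‖z‖ = 1) :
    z - a ≠ 0 ∧ 1 - (starRingEnd ℂ) a * z ≠ 0 := by
  constructor
  · intro h
    have h4 : z = a := by linear_combination h
    rw [h4] at hz; linarith
  · intro h
    have h3 : ‖(starRingEnd ℂ) a * z‖ = ‖a‖ := by
      rw [norm_mul, hz, mul_one, Complex.norm_conj]
    have h2 : (starRingEnd ℂ) a * z = 1 := by linear_combination -h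
    rw [h2] at h3; simp at h3; linarith

lemma aux_zs {n : ℕ} (a : Fin n → ℂ) (ha : ∀ k, ‖a k‖ < 1)
    {z : ℂ} (hz : ‖z‖ = 1) :
    z * ∑ k, (1 - (normSq (a k) : ℂ)) / ((z - a k) * (1 - (starRingEnd ℂ) (a k) * z))
      = ((∑ k, (1 - normSq (a k)) / normSq (z - a k) : ℝ) : ℂ) := by
  have hz0 : z ≠ 0 := by
    intro h; rw [h] at hz; simp at hz
  push_cast
  rw [Finset.mul_sum]
  refine Finset.sum_congr rfl fun k _ => ?_
  have h1 := (aux_ne_facts (ha k) hz).1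
  have hns : (normSq (z - a k) : ℂ) ≠ 0 := by
    simpa using h1
  rw [aux_prodfactor hz (a k)]
  field_simp

lemma aux_absB {n : ℕ} (a : Fin n → ℂ) (ha : ∀ k, ‖a k‖ < 1)
    (α : ℂ) (hα : ‖α‖ = 1) (B : ℂ → ℂ)
    (hB : ∀ z, B z = α * ∏ k, (z - a k) / (1 - (starRingEnd ℂ) (a k) * z))
    {z : ℂ} (hz : ‖z‖ = 1) : ‖B z‖ = 1 := by
  rw [hB z, norm_mul, hα, one_mul, norm_prod]
  rw [Finset.prod_eq_one]
  intro k _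
  rw [norm_div, aux_abs_eq hz (a k), div_self]
  intro h
  exact absurd (norm_eq_zero.mp h) (aux_ne_facts (ha k) hz).2
  -- note: need abs (1 - c z) ≠ 0

lemma aux_fR_pos {n : ℕ} (hn : 1 ≤ n) (a : Fin n → ℂ) (ha : ∀ k, ‖a k‖ < 1)
    {z : ℂ} (hz : ‖z‖ = 1) :
    0 < ∑ k, (1 - normSq (a k)) / normSq (z - a k) := by
  have : Nonempty (Fin n) := Fin.pos_iff_nonempty.mp hn
  refine Finset.sum_pos (fun k _ => ?_) univ_nonempty
  apply div_pos
  · have : normSq (a k) < 1 := by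
      rw [← Complex.sq_norm]
      nlinarith [ha k, norm_nonneg (a k)]
    linarith
  · rw [normSq_pos]
    exact (aux_ne_facts (ha k) hz).1

lemma aux_absderiv {n : ℕ} (hn : 1 ≤ n) (a : Fin n → ℂ) (ha : ∀ k, ‖a k‖ < 1)
    (α : ℂ) (hα : ‖α‖ = 1) (B : ℂ → ℂ)
    (hB : ∀ z, B z = α * ∏ k, (z - a k) / (1 - (starRingEnd ℂ) (a k) * z))
    {z : ℂ} (hz : ‖z‖ = 1) :
    ‖deriv B z‖ = ∑ k, (1 - normSq (a k)) / normSq (z - a k) := by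
  rw [(aux_B_hasDerivAt a ha α B hB hz).deriv]
  rw [norm_mul, aux_absB a ha α hα B hB hz, one_mul]
  have h2 : ‖z * ∑ k, (1 - (normSq (a k) : ℂ)) /
      ((z - a k) * (1 - (starRingEnd ℂ) (a k) * z))‖
      = ‖∑ k, (1 - (normSq (a k) : ℂ)) /
      ((z - a k) * (1 - (starRingEnd ℂ) (a k) * z))‖ := by
    rw [norm_mul, hz, one_mul]
  rw [← h2, aux_zs a ha hz, Complex.norm_real, Real.norm_eq_abs, abs_of_pos (aux_fR_pos hn a ha hz)]

lemma aux_sum_identity {n : ℕ} (hn : 1 ≤ n) (a : Fin n → ℂ)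
    (ha : ∀ k, ‖a k‖ < 1) (α : ℂ) (hα : ‖α‖ = 1)
    (B : ℂ → ℂ)
    (hB : ∀ z, B z = α * ∏ k, (z - a k) / (1 - (starRingEnd ℂ) (a k) * z))
    (lam : ℂ) (hlam : ‖lam‖ = 1) :
    ∃ S : Finset ℂ, S.card = n + 1 ∧
      (∀ w ∈ S, ‖w‖ = 1) ∧
      (∀ w, ‖w‖ = 1 → w * B w = lam → w ∈ S) ∧
      ∑ w ∈ S, (1 + ∑ k, (1 - normSq (a k)) / normSq (w - a k))⁻¹ = 1 := by
  classical
  have hα0 : α ≠ 0 := by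
    intro h; rw [h] at hα; simp at hα
  have hlam0 : lam ≠ 0 := by
    intro h; rw [h] at hlam; simp at hlam
  set K := starRingEnd ℂ with hK
  set P : Polynomial ℂ := Polynomial.C α * ∏ k, (Polynomial.X - Polynomial.C (a k)) with hP
  set Q : Polynomial ℂ := ∏ k : Fin n, (1 - Polynomial.C (K (a k)) * Polynomial.X) with hQ
  set G : Polynomial ℂ := Polynomial.X * P - Polynomial.C lam * Q with hG
  have hPeval : ∀ z, P.eval z = α * ∏ k, (z - a k) := by
    intro z; simp [hP, eval_prod]
  have hQeval : ∀ z, Q.eval z = ∏ k, (1 - K (a k) * z) := by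
    intro z; simp [hQ, eval_prod]
  have hGeval : ∀ z, G.eval z = z * P.eval z - lam * Q.eval z := by
    intro z; simp [hG]
  have hQne : ∀ z, ‖z‖ = 1 → Q.eval z ≠ 0 := by
    intro z hz
    rw [hQeval]
    exact Finset.prod_ne_zero_iff.mpr fun k _ => (aux_ne_facts (ha k) hz).2
  have hPB2 : ∀ z, Q.eval z ≠ 0 → P.eval z = B z * Q.eval z := by
    intro z hz
    have hfac : ∀ k : Fin n, 1 - K (a k) * z ≠ 0 := by
      rw [hQeval] at hz
      exact fun k => Finset.prod_ne_zero_iff.mp hz k (Finset.mem_univ k)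
    rw [hPeval, hQeval, hB z, mul_assoc, ← Finset.prod_mul_distrib]
    congr 1
    exact Finset.prod_congr rfl fun k _ => (div_mul_cancel₀ _ (hfac k)).symm
  have hPB : ∀ z, ‖z‖ = 1 → P.eval z = B z * Q.eval z := fun z hz =>
    hPB2 z (hQne z hz)
  -- degrees
  have hMonic : (∏ k : Fin n, (Polynomial.X - Polynomial.C (a k))).Monic :=
    monic_prod_of_monic _ _ fun k _ => monic_X_sub_C _
  have hMdeg : (∏ k : Fin n, (Polynomial.X - Polynomial.C (a k))).natDegree = n := by
    rw [natDegree_prod_of_monic _ _ fun k _ => monic_X_sub_C _]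
    simp
  have hPdeg : P.natDegree = n := by
    rw [hP, natDegree_C_mul hα0, hMdeg]
  have hPcoeff : P.coeff n = α := by
    rw [hP, coeff_C_mul]
    have h5 := hMonic.coeff_natDegree
    rw [hMdeg] at h5
    rw [h5, mul_one]
  have hPne : P ≠ 0 := by
    rw [hP]
    exact mul_ne_zero (by simpa using hα0) hMonic.ne_zero
  have hQdeg : Q.natDegree ≤ n := by
    refine le_trans (natDegree_prod_le _ _) ?_
    refine le_trans (Finset.sum_le_card_nsmul _ _ 1 fun k _ => ?_) (by simp)
    refine le_trans (natDegree_sub_le _ _) ?_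
    simp only [natDegree_one]
    refine max_le (by norm_num) (le_trans (natDegree_mul_le) (by simp))
  have hGcoeff : G.coeff (n + 1) = α := by
    rw [hG, coeff_sub, coeff_X_mul, hPcoeff, coeff_C_mul,
      coeff_eq_zero_of_natDegree_lt (lt_of_le_of_lt hQdeg (Nat.lt_succ_self n))]
    ring
  have hGne : G ≠ 0 := by
    intro h
    rw [h, coeff_zero] at hGcoeff
    exact hα0 hGcoeff.symm
  have hGdeg : G.natDegree = n + 1 := by
    refine le_antisymm ?_ (le_natDegree_of_ne_zero (hGcoeff ▸ hα0))
    rw [hG]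
    refine le_trans (natDegree_sub_le _ _) (max_le ?_ ?_)
    · exact le_trans natDegree_mul_le (by simp [hPdeg]; omega)
    · exact le_trans natDegree_mul_le (by simp; omega)
  have hGlead : G.leadingCoeff = α := by
    rw [Polynomial.leadingCoeff, hGdeg, hGcoeff]
  have habs_le : ∀ x y : ℂ, normSq x ≤ normSq y → ‖x‖ ≤ ‖y‖ := by
    intro x y h
    rw [Complex.norm_def, Complex.norm_def]
    exact Real.sqrt_le_sqrt h
  have hnsqa : ∀ k, normSq (a k) < 1 := by
    intro k
    rw [← Complex.sq_norm]
    nlinarith [ha k, norm_nonneg (a k)]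
  have hroot1 : ∀ w, G.IsRoot w → ‖w‖ = 1 := by
    intro w hw
    have heq : w * P.eval w = lam * Q.eval w := by
      have h0 : G.eval w = 0 := hw
      rw [hGeval] at h0
      linear_combination h0
    rw [hPeval, hQeval] at heq
    have habs : ‖w‖ * ∏ k, ‖w - a k‖
        = ∏ k, ‖1 - K (a k) * w‖ := by
      have h2 := congrArg (‖·‖) heq
      rw [norm_mul, norm_mul, norm_mul, norm_prod, norm_prod, hα, hlam, one_mul, one_mul] at h2
      exact h2
    by_contra hne
    rcases lt_or_gt_of_ne hne with hlt | hgt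
    · have hnsqw : normSq w < 1 := by
        rw [← Complex.sq_norm]
        nlinarith [norm_nonneg w]
      have hBpos : ∀ k, 0 < ‖1 - K (a k) * w‖ := by
        intro k
        refine norm_pos_iff.mpr fun h => ?_
        have h2 : K (a k) * w = 1 := by linear_combination -h
        have h3 := congrArg (‖·‖) h2
        rw [norm_mul, norm_one] at h3
        rw [Complex.norm_conj] at h3
        nlinarith [ha k, norm_nonneg (a k), norm_nonneg w]
      have hle : ∀ k, ‖w - a k‖ ≤ ‖1 - K (a k) * w‖ := by
        intro k
        refine habs_le _ _ ?_
        nlinarith [aux_normSq (a k) w, hnsqa k]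
      have h4 : ∏ k, ‖w - a k‖ ≤ ∏ k, ‖1 - K (a k) * w‖ :=
        Finset.prod_le_prod (fun k _ => norm_nonneg _) (fun k _ => hle k)
      have h5 : 0 < ∏ k, ‖1 - K (a k) * w‖ :=
        Finset.prod_pos fun k _ => hBpos k
      nlinarith [norm_nonneg w, Finset.prod_nonneg
        (fun k (_ : k ∈ univ) => norm_nonneg (w - a k))]
    · have hnsqw : 1 < normSq w := by
        rw [← Complex.sq_norm]
        nlinarith [norm_nonneg w]
      have hApos : ∀ k, 0 < ‖w - a k‖ := by
        intro k
        refine norm_pos_iff.mpr fun h => ?_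
        have h2 : w = a k := by linear_combination h
        rw [h2] at hgt
        linarith [ha k]
      have hge : ∀ k, ‖1 - K (a k) * w‖ ≤ ‖w - a k‖ := by
        intro k
        refine habs_le _ _ ?_
        nlinarith [aux_normSq (a k) w, hnsqa k]
      have h4 : ∏ k, ‖1 - K (a k) * w‖ ≤ ∏ k, ‖w - a k‖ :=
        Finset.prod_le_prod (fun k _ => norm_nonneg _) (fun k _ => hge k)
      have h5 : 0 < ∏ k, ‖w - a k‖ := Finset.prod_pos fun k _ => hApos k
      nlinarith
  have hwB : ∀ w, ‖w‖ = 1 → (G.IsRoot w ↔ w * B w = lam) := by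
    intro w hz
    constructor
    · intro hw
      have h0 : G.eval w = 0 := hw
      rw [hGeval, hPB w hz] at h0
      have h1 : (w * B w - lam) * Q.eval w = 0 := by linear_combination h0
      rcases mul_eq_zero.mp h1 with h | h
      · linear_combination h
      · exact absurd h (hQne w hz)
    · intro hw
      show G.eval w = 0
      rw [hGeval, hPB w hz]
      linear_combination Q.eval w * hw
  have hG'val : ∀ w, ‖w‖ = 1 → w * B w = lam →
      Polynomial.eval w (Polynomial.derivative G)
        = B w * (1 + ((∑ k, (1 - normSq (a k)) / normSq (w - a k) : ℝ) : ℂ)) * Q.eval w := by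
    intro w hz hwb
    have hUopen : IsOpen {z : ℂ | Q.eval z ≠ 0} := isOpen_ne.preimage Q.continuous
    have hmem : w ∈ {z : ℂ | Q.eval z ≠ 0} := hQne w hz
    have hBd := aux_B_hasDerivAt a ha α B hB hz
    have hFd : HasDerivAt (fun z => (z * B z - lam) * Q.eval z)
        ((1 * B w + w * (B w * ∑ k, (1 - (normSq (a k) : ℂ)) /
            ((w - a k) * (1 - (starRingEnd ℂ) (a k) * w)))) * Q.eval w
          + (w * B w - lam) * (Polynomial.derivative Q).eval w) w :=
      (((hasDerivAt_id w).mul hBd).sub_const lam).mul (Polynomial.hasDerivAt Q w)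
    have hEq : ∀ z ∈ {z : ℂ | Q.eval z ≠ 0}, Polynomial.eval z G = (z * B z - lam) * Q.eval z := by
      intro z hzU
      rw [hGeval, hPB2 z hzU]
      ring
    have hGd : HasDerivAt (fun z => Polynomial.eval z G)
        ((1 * B w + w * (B w * ∑ k, (1 - (normSq (a k) : ℂ)) /
            ((w - a k) * (1 - (starRingEnd ℂ) (a k) * w)))) * Q.eval w
          + (w * B w - lam) * (Polynomial.derivative Q).eval w) w :=
      hFd.congr_of_eventuallyEq
        (Filter.eventuallyEq_of_mem (hUopen.mem_nhds hmem) fun z hzU => hEq z hzU)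
    have huniq := (Polynomial.hasDerivAt G w).unique hGd
    rw [huniq, hwb, sub_self, zero_mul, add_zero, one_mul]
    have hzs := aux_zs a ha hz
    rw [mul_left_comm w (B w) _, hzs]
    ring
  have hmult : ∀ w, G.rootMultiplicity w ≤ 1 := by
    intro w
    by_contra hcon
    push_neg at hcon
    obtain ⟨h1, h2⟩ := (one_lt_rootMultiplicity_iff_isRoot hGne).mp hcon
    have hz := hroot1 w h1
    have hwb := (hwB w hz).mp h1
    have h3 := hG'val w hz hwb
    have hBne : B w ≠ 0 := by
      have h6 := aux_absB a ha α hα B hB hz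
      intro h0; rw [h0] at h6; simp at h6
    have hfne : (1 : ℂ) + ((∑ k, (1 - normSq (a k)) / normSq (w - a k) : ℝ) : ℂ) ≠ 0 := by
      intro h0
      have h7 := congrArg Complex.re h0
      simp at h7
      linarith [aux_fR_pos hn a ha hz]
    have h8 : Polynomial.eval w (Polynomial.derivative G) = 0 := h2
    rw [h3] at h8
    exact (mul_ne_zero (mul_ne_zero hBne hfne) (hQne w hz)) h8
  have hnodup : G.roots.Nodup := by
    rw [Multiset.nodup_iff_count_le_one]
    intro w
    rw [Polynomial.count_roots]
    exact hmult w
  have hcardroots : Multiset.card G.roots = n + 1 := by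
    rw [← hGdeg]
    exact Polynomial.splits_iff_card_roots.mp (IsAlgClosed.splits G)
  set S : Finset ℂ := G.roots.toFinset with hS
  have hSval : S.val = G.roots := by
    rw [hS, Multiset.toFinset_val]
    exact Multiset.dedup_eq_self.mpr hnodup
  have hScard : S.card = n + 1 := by
    rw [Finset.card, hSval, hcardroots]
  have hSmem : ∀ w, w ∈ S ↔ G.IsRoot w := by
    intro w
    rw [hS, Multiset.mem_toFinset, Polynomial.mem_roots']
    exact ⟨fun h => h.2, fun h => ⟨hGne, h⟩⟩
  have hScircle : ∀ w ∈ S, ‖w‖ = 1 := fun w hw => hroot1 w ((hSmem w).mp hw)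
  have hfact : G = Polynomial.C α * ∏ w ∈ S, (Polynomial.X - Polynomial.C w) := by
    have h0 := Polynomial.C_leadingCoeff_mul_prod_multiset_X_sub_C
      (p := G) (by rw [hcardroots, hGdeg])
    rw [hGlead] at h0
    rw [← h0]
    congr 1
    rw [Finset.prod_eq_multiset_prod, hSval]
  have hGevalS : ∀ z, Polynomial.eval z G = α * ∏ w ∈ S, (z - w) := by
    intro z
    conv_lhs => rw [hfact]
    simp [eval_prod]
  have hG'S : ∀ w ∈ S, Polynomial.eval w (Polynomial.derivative G)
      = α * ∏ v ∈ S.erase w, (w - v) := by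
    intro w hw
    have hH : HasDerivAt (fun z => α * ∏ v ∈ S, (z - v))
        (α * ∑ v ∈ S, (∏ u ∈ S.erase v, (w - u)) • (1 : ℂ)) w :=
      (HasDerivAt.fun_finsetProd fun v _ => (hasDerivAt_id w).sub_const v).const_mul α
    have hsum : (∑ v ∈ S, (∏ u ∈ S.erase v, (w - u)) • (1 : ℂ))
        = ∏ u ∈ S.erase w, (w - u) := by
      rw [Finset.sum_eq_single w]
      · simp
      · intro v hv hne
        rw [smul_eq_mul, mul_one]
        exact Finset.prod_eq_zero (Finset.mem_erase.mpr ⟨Ne.symm hne, hw⟩) (sub_self w)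
      · intro h; exact absurd hw h
    rw [hsum] at hH
    have hGd : HasDerivAt (fun z => Polynomial.eval z G)
        (α * ∏ u ∈ S.erase w, (w - u)) w := by
      have hfun : (fun z => Polynomial.eval z G) = fun z => α * ∏ v ∈ S, (z - v) :=
        funext hGevalS
      rw [hfun]; exact hH
    exact (Polynomial.hasDerivAt G w).unique hGd
  -- Lagrange interpolation coefficient identity
  have hinj : Set.InjOn id (S : Set ℂ) := fun x _ y _ h => h
  have hdeglt : P.degree < (S.card : WithBot ℕ) := by
    refine lt_of_le_of_lt Polynomial.degree_le_natDegree ?_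
    rw [hPdeg, hScard]
    exact_mod_cast Nat.lt_succ_self n
  have hinterp := Lagrange.eq_interpolate hinj hdeglt
  have hcoeffn : P.coeff n = ∑ w ∈ S, P.eval w * (∏ v ∈ S.erase w, (w - v))⁻¹ := by
    conv_lhs => rw [hinterp]
    rw [Lagrange.interpolate_apply, Polynomial.finset_sum_coeff]
    refine Finset.sum_congr rfl fun w hw => ?_
    rw [Polynomial.coeff_C_mul]
    congr 1
    have hdegb := Lagrange.natDegree_basis hinj hw
    rw [hScard] at hdegb
    simp only [Nat.add_sub_cancel] at hdegb
    have hlb : (Lagrange.basis S id w).coeff n = (Lagrange.basis S id w).leadingCoeff := by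
      rw [← Polynomial.coeff_natDegree, hdegb]
    rw [hlb, Lagrange.basis, Polynomial.leadingCoeff_prod, ← Finset.prod_inv_distrib]
    refine Finset.prod_congr rfl fun v hv => ?_
    rw [Lagrange.basisDivisor, Polynomial.leadingCoeff_mul, Polynomial.leadingCoeff_C,
      (Polynomial.monic_X_sub_C (id v)).leadingCoeff, mul_one]
    rfl
  refine ⟨S, hScard, hScircle, fun w hz hwb => (hSmem w).mpr ((hwB w hz).mpr hwb), ?_⟩
  have hterm : ∀ w ∈ S, (((1 + ∑ k, (1 - normSq (a k)) / normSq (w - a k))⁻¹ : ℝ) : ℂ)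
      = P.eval w * (α * ∏ v ∈ S.erase w, (w - v))⁻¹ := by
    intro w hw
    have hz := hScircle w hw
    have hwb := (hwB w hz).mp ((hSmem w).mp hw)
    have hder := hG'val w hz hwb
    rw [hG'S w hw] at hder
    have hp := hPB w hz
    have hBne : B w ≠ 0 := by
      have h6 := aux_absB a ha α hα B hB hz
      intro h0; rw [h0] at h6; simp at h6
    have hQw := hQne w hz
    have hfpos := aux_fR_pos hn a ha hz
    have hfne : (1 : ℝ) + ∑ k, (1 - normSq (a k)) / normSq (w - a k) ≠ 0 := by positivity
    rw [hp, hder]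
    rw [Complex.ofReal_inv]
    push_cast
    simp only [mul_inv]
    have hgen : ∀ X : ℂ, B w * Polynomial.eval w Q * ((B w)⁻¹ * X * (Polynomial.eval w Q)⁻¹)
        = X := by
      intro X
      have h9 : B w * Polynomial.eval w Q * ((B w)⁻¹ * X * (Polynomial.eval w Q)⁻¹)
          = X * (B w * (B w)⁻¹) * (Polynomial.eval w Q * (Polynomial.eval w Q)⁻¹) := by ring
      rw [h9, mul_inv_cancel₀ hBne, mul_inv_cancel₀ hQw, mul_one, mul_one]
    rw [hgen]
  have hsumC : ∑ w ∈ S, (((1 + ∑ k, (1 - normSq (a k)) / normSq (w - a k))⁻¹ : ℝ) : ℂ) = 1 := by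
    rw [Finset.sum_congr rfl hterm]
    have hsplit : ∑ w ∈ S, Polynomial.eval w P * (α * ∏ v ∈ S.erase w, (w - v))⁻¹
        = α⁻¹ * ∑ w ∈ S, Polynomial.eval w P * (∏ v ∈ S.erase w, (w - v))⁻¹ := by
      rw [Finset.mul_sum]
      refine Finset.sum_congr rfl fun w _ => ?_
      rw [mul_inv]
      ring
    rw [hsplit, ← hcoeffn, hPcoeff, inv_mul_cancel₀ hα0]
  rw [← Complex.ofReal_sum] at hsumC
  exact_mod_cast hsumC


/-- For a Blaschke product of degree `n`, with `M = sup_{|z|=1}|B'|` and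
`m = inf_{|z|=1}|B'|`, one has `m ≤ n - 1 + n/M`. -/
theorem inf_le_bound (n : ℕ) (hn : 1 ≤ n) (a : Fin n → ℂ)
    (ha : ∀ k, ‖a k‖ < 1) (α : ℂ) (hα : ‖α‖ = 1)
    (B : ℂ → ℂ)
    (hB : ∀ z, B z = α * ∏ k, (z - a k) / (1 - (starRingEnd ℂ) (a k) * z))
    (M m : ℝ)
    (hM : M = sSup ((fun z => ‖deriv B z‖) '' {z : ℂ | ‖z‖ = 1}))
    (hm : m = sInf ((fun z => ‖deriv B z‖) '' {z : ℂ | ‖z‖ = 1})) :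
    m ≤ n - 1 + n / M := by
  set fR : ℂ → ℝ := fun z => ∑ k, (1 - normSq (a k)) / normSq (z - a k) with hfR
  have habsd : ∀ z ∈ {z : ℂ | ‖z‖ = 1}, ‖deriv B z‖ = fR z :=
    fun z hz => aux_absderiv hn a ha α hα B hB hz
  have himg : (fun z => ‖deriv B z‖) '' {z : ℂ | ‖z‖ = 1}
      = fR '' {z : ℂ | ‖z‖ = 1} := Set.image_congr habsd
  have hsetS : {z : ℂ | ‖z‖ = 1} = Metric.sphere (0 : ℂ) 1 := by
    ext z
    simp [mem_sphere_zero_iff_norm]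
  have hcont : ContinuousOn fR {z : ℂ | ‖z‖ = 1} := by
    refine continuousOn_finset_sum _ fun k _ => ContinuousOn.div continuousOn_const ?_ ?_
    · exact (Complex.continuous_normSq.comp (continuous_id.sub continuous_const)).continuousOn
    · exact fun z hz => (normSq_pos.mpr (aux_ne_facts (ha k) hz).1).ne'
  have hcomp : IsCompact {z : ℂ | ‖z‖ = 1} := by
    rw [hsetS]; exact isCompact_sphere 0 1
  obtain ⟨z₀, hz₀, hmax⟩ := hcomp.exists_isMaxOn ⟨1, by simp⟩ hcont
  have hz₀c : ‖z₀‖ = 1 := hz₀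
  have hMval : M = fR z₀ := by
    rw [hM, himg]
    refine IsGreatest.csSup_eq ⟨⟨z₀, hz₀, rfl⟩, ?_⟩
    rintro y ⟨z, hzmem, rfl⟩
    exact hmax hzmem
  have hMpos : 0 < M := by rw [hMval]; exact aux_fR_pos hn a ha hz₀c
  set lam := z₀ * B z₀ with hlamdef
  have hlam : ‖lam‖ = 1 := by
    rw [hlamdef, norm_mul, hz₀c, one_mul, aux_absB a ha α hα B hB hz₀c]
  obtain ⟨S, hScard, hScircle, hSmem, hSsum⟩ :=
    aux_sum_identity hn a ha α hα B hB lam hlam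
  have hz₀S : z₀ ∈ S := hSmem z₀ hz₀c rfl
  have hTcard : (S.erase z₀).card = n := by
    rw [Finset.card_erase_of_mem hz₀S, hScard]
    omega
  have hM1 : (0:ℝ) < 1 + M := by linarith
  have hTsum : ∑ w ∈ S.erase z₀, (1 + fR w)⁻¹ = M / (1 + M) := by
    have hsplit := Finset.add_sum_erase S (fun w => (1 + fR w)⁻¹) hz₀S
    have h2 : (1 + fR z₀)⁻¹ + ∑ w ∈ S.erase z₀, (1 + fR w)⁻¹ = 1 := by
      rw [hsplit]; exact hSsum
    rw [← hMval] at h2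
    field_simp at h2 ⊢
    linarith
  have hTne : (S.erase z₀).Nonempty := Finset.card_pos.mp (by rw [hTcard]; exact hn)
  have hnpos : (0:ℝ) < n := by exact_mod_cast hn
  have hex : ∃ w ∈ S.erase z₀, M / ((1 + M) * n) ≤ (1 + fR w)⁻¹ := by
    by_contra hcon
    push_neg at hcon
    have hlt : ∑ w ∈ S.erase z₀, (1 + fR w)⁻¹
        < ∑ _w ∈ S.erase z₀, M / ((1 + M) * n) :=
      Finset.sum_lt_sum_of_nonempty hTne hcon
    rw [Finset.sum_const, hTcard, nsmul_eq_mul] at hlt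
    rw [hTsum] at hlt
    have : (n : ℝ) * (M / ((1 + M) * n)) = M / (1 + M) := by
      field_simp
    rw [this] at hlt
    exact lt_irrefl _ hlt
  obtain ⟨w₁, hw₁T, hw₁⟩ := hex
  have hw₁c : ‖w₁‖ = 1 := hScircle w₁ (Finset.mem_of_mem_erase hw₁T)
  have hfw₁pos : 0 < fR w₁ := aux_fR_pos hn a ha hw₁c
  have hcpos : 0 < M / ((1 + M) * n) := by positivity
  have h1 : 1 + fR w₁ ≤ (1 + M) * n / M := by
    have h2 : ((1 + fR w₁)⁻¹)⁻¹ ≤ (M / ((1 + M) * n))⁻¹ := by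
      apply inv_anti₀ hcpos hw₁
    rw [inv_inv, inv_div] at h2
    exact h2
  have hfinal : fR w₁ ≤ (n : ℝ) - 1 + n / M := by
    have h3 : (1 + M) * n / M = n / M + n := by
      field_simp
    rw [h3] at h1
    linarith
  have hmem : fR w₁ ∈ (fun z => ‖deriv B z‖) '' {z : ℂ | ‖z‖ = 1} :=
    ⟨w₁, hw₁c, habsd w₁ hw₁c⟩
  have hbdd : BddBelow ((fun z => ‖deriv B z‖) '' {z : ℂ | ‖z‖ = 1}) := by
    refine ⟨0, ?_⟩
    rintro y ⟨z, _, rfl⟩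
    exact norm_nonneg _
  have hm' : m ≤ fR w₁ := by
    rw [hm]
    exact csInf_le hbdd hmem
  linarith
end

section
/- Let a, b, c be complex numbers with c = a - b + 1 and a = -n a negative integer, with c ∉ {a, a+1, …, 0, 1}. Define the hypergeometric polynomials f(z) = F(a, b+1; c+1; z), g(z) = F(a, b-1; c-1; z), h(z) = F(a, b; c; z), where F is the terminating Gauss hypergeometric series ∑_{k=0}^{n} ((a)_k (b)_k/(c)_k)(z^k/k!). Then for all complex z: z(f(z)g'(z) - f'(z)g(z)) = c(f(z)g(z) - h(z)²). -/
open Finset in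
/-- The terminating Gauss hypergeometric series
`F(a, b; c; z) = ∑_{k=0}^{n} ((a)_k (b)_k/(c)_k) z^k/k!`. -/
noncomputable def hyperPoly (n : ℕ) (a b c : ℂ) (z : ℂ) : ℂ :=
  ∑ k ∈ range (n + 1),
    ((ascPochhammer ℂ k).eval a * (ascPochhammer ℂ k).eval b /
      (ascPochhammer ℂ k).eval c) * z ^ k / (Nat.factorial k)

namespace HypWronskian
open Polynomial Finset

noncomputable def hcoef (a b c : ℂ) (k : ℕ) : ℂ :=
  (ascPochhammer ℂ k).eval a * (ascPochhammer ℂ k).eval b /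
    (ascPochhammer ℂ k).eval c / (Nat.factorial k)

noncomputable def hP (n : ℕ) (a b c : ℂ) : Polynomial ℂ :=
  ∑ k ∈ range (n + 1), monomial k (hcoef a b c k)

lemma hyperPoly_eval (n : ℕ) (a b c : ℂ) (z : ℂ) :
    hyperPoly n a b c z = (hP n a b c).eval z := by
  simp only [hyperPoly, hP, eval_finset_sum, eval_monomial, hcoef]
  exact Finset.sum_congr rfl fun k _ => by ring

lemma coeff_hP (n : ℕ) (a b c : ℂ) (k : ℕ) :
    (hP n a b c).coeff k = if k ≤ n then hcoef a b c k else 0 := by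
  rw [hP, finset_sum_coeff]
  simp only [coeff_monomial]
  rw [Finset.sum_ite_eq' (range (n + 1)) k (fun i => hcoef a b c i)]
  simp [Nat.lt_succ_iff]

lemma asc_eval_ne_zero {x : ℂ} {j : ℕ} (h : ∀ i : ℕ, i < j → x + i ≠ 0) :
    (ascPochhammer ℂ j).eval x ≠ 0 := by
  induction j with
  | zero => simp
  | succ j ih =>
    rw [ascPochhammer_succ_eval]
    exact mul_ne_zero (ih fun i hi => h i (by omega)) (h j (by omega))

lemma asc_succ_left_eval (x : ℂ) (k : ℕ) :
    (ascPochhammer ℂ (k + 1)).eval x = x * (ascPochhammer ℂ k).eval (x + 1) := by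
  rw [ascPochhammer_succ_left]
  simp [eval_comp]

lemma asc_shift_eval (x : ℂ) (k : ℕ) :
    x * (ascPochhammer ℂ k).eval (x + 1) = (ascPochhammer ℂ k).eval x * (x + k) := by
  rw [← asc_succ_left_eval, ascPochhammer_succ_eval]

lemma coeff_X_mul_derivative (p : Polynomial ℂ) (k : ℕ) :
    (X * derivative p).coeff k = (k : ℂ) * p.coeff k := by
  rcases k with _ | j
  · simp
  · rw [coeff_X_mul, coeff_derivative]
    push_cast
    ring

section steps
variable (a b c : ℂ) (k : ℕ)

lemma fact_ne : ((Nat.factorial k : ℂ)) ≠ 0 := by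
  exact_mod_cast (Nat.factorial_pos k).ne'

lemma cast_succ_ne : ((k : ℂ) + 1) ≠ 0 := by
  have : ((k + 1 : ℕ) : ℂ) ≠ 0 := Nat.cast_ne_zero.mpr (Nat.succ_ne_zero k)
  push_cast at this
  exact this

lemma hcoef_zero : hcoef a b c 0 = 1 := by
  simp [hcoef]

lemma hcoef_succ (hCj : (ascPochhammer ℂ k).eval c ≠ 0) (hck : c + k ≠ 0) :
    hcoef a b c (k + 1) = hcoef a b c k * ((a + k) * (b + k)) / ((c + k) * ((k : ℂ) + 1)) := by
  unfold hcoef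
  rw [ascPochhammer_succ_eval, ascPochhammer_succ_eval, ascPochhammer_succ_eval,
    Nat.factorial_succ, Nat.cast_mul, Nat.cast_add, Nat.cast_one]
  field_simp

lemma hcoef_succ' (hCj : (ascPochhammer ℂ k).eval c ≠ 0) (hck : c + k ≠ 0) :
    hcoef a b c (k + 1) * ((c + k) * ((k : ℂ) + 1)) = hcoef a b c k * ((a + k) * (b + k)) := by
  rw [hcoef_succ a b c k hCj hck, div_mul_cancel₀]
  exact mul_ne_zero hck (cast_succ_ne k)

lemma hcoef_up (hb : b ≠ 0) (hc0 : c ≠ 0)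
    (hCj : (ascPochhammer ℂ k).eval c ≠ 0) (hck : c + k ≠ 0) :
    hcoef a (b + 1) (c + 1) k = hcoef a b c k * (c * (b + k)) / (b * (c + k)) := by
  have e6 : (ascPochhammer ℂ k).eval (c + 1)
      = (ascPochhammer ℂ k).eval c * (c + k) / c := by
    rw [eq_div_iff hc0]; linear_combination asc_shift_eval c k
  have e7 : (ascPochhammer ℂ k).eval (b + 1)
      = (ascPochhammer ℂ k).eval b * (b + k) / b := by
    rw [eq_div_iff hb]; linear_combination asc_shift_eval b k
  unfold hcoef
  rw [e6, e7]
  field_simp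

lemma hcoef_up' (hb : b ≠ 0) (hc0 : c ≠ 0)
    (hCj : (ascPochhammer ℂ k).eval c ≠ 0) (hck : c + k ≠ 0) :
    hcoef a (b + 1) (c + 1) k * (b * (c + k)) = hcoef a b c k * (c * (b + k)) := by
  rw [hcoef_up a b c k hb hc0 hCj hck, div_mul_cancel₀]
  exact mul_ne_zero hb hck

lemma hcoef_down_succ (hc1 : c - 1 ≠ 0)
    (hCj : (ascPochhammer ℂ k).eval c ≠ 0) :
    hcoef a (b - 1) (c - 1) (k + 1)
      = hcoef a b c k * ((a + k) * (b - 1)) / ((c - 1) * ((k : ℂ) + 1)) := by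
  have e1 : (ascPochhammer ℂ (k + 1)).eval (b - 1)
      = (b - 1) * (ascPochhammer ℂ k).eval b := by
    rw [asc_succ_left_eval, sub_add_cancel]
  have e2 : (ascPochhammer ℂ (k + 1)).eval (c - 1)
      = (c - 1) * (ascPochhammer ℂ k).eval c := by
    rw [asc_succ_left_eval, sub_add_cancel]
  unfold hcoef
  rw [e1, e2, ascPochhammer_succ_eval,
    Nat.factorial_succ, Nat.cast_mul, Nat.cast_add, Nat.cast_one]
  field_simp

lemma hcoef_down_succ' (hc1 : c - 1 ≠ 0)
    (hCj : (ascPochhammer ℂ k).eval c ≠ 0) :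
    hcoef a (b - 1) (c - 1) (k + 1) * ((c - 1) * ((k : ℂ) + 1))
      = hcoef a b c k * ((a + k) * (b - 1)) := by
  rw [hcoef_down_succ a b c k hc1 hCj, div_mul_cancel₀]
  exact mul_ne_zero hc1 (cast_succ_ne k)

end steps

lemma scalar1 (a b c : ℂ) (k : ℕ) (hb : b ≠ 0) (hc0 : c ≠ 0) (hck : c + k ≠ 0)
    (hCj : (ascPochhammer ℂ k).eval c ≠ 0) :
    c * (hcoef a b c (k + 1) * ((k : ℂ) + 1))
      = b * ((a + k) * hcoef a (b + 1) (c + 1) k) := by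
  apply mul_right_cancel₀ hck
  linear_combination c * hcoef_succ' a b c k hCj hck - (a + k) * hcoef_up' a b c k hb hc0 hCj hck

lemma scalarC (a b c : ℂ) (j : ℕ) (hcab : a = c + b - 1) (hb : b ≠ 0)
    (hc0 : c ≠ 0) (hc1 : c - 1 ≠ 0) (hcj : c + j ≠ 0)
    (hCj : (ascPochhammer ℂ j).eval c ≠ 0) :
    c * (c - 1) * hcoef a (b - 1) (c - 1) (j + 1)
      = c * (c - 1) * (hcoef a b c (j + 1) - hcoef a b c j)
        + b * (b - 1) * hcoef a (b + 1) (c + 1) j := by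
  subst hcab
  apply mul_right_cancel₀ (mul_ne_zero (mul_ne_zero (cast_succ_ne j) hcj) hb)
  linear_combination
    (c * (c + j) * b) * hcoef_down_succ' (c + b - 1) b c j hc1 hCj
    - (c * (c - 1) * b) * hcoef_succ' (c + b - 1) b c j hCj hcj
    - (((j : ℂ) + 1) * b * (b - 1)) * hcoef_up' (c + b - 1) b c j hb hc0 hCj hcj

lemma scalarCn (n : ℕ) (a b c : ℂ) (ha : a = -(n : ℂ)) (hcab : c = a - b + 1)
    (hb : b ≠ 0) (hc0 : c ≠ 0)
    (hcn : c + n ≠ 0) (hCn : (ascPochhammer ℂ n).eval c ≠ 0) :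
    c * (c - 1) * hcoef a b c n = b * (b - 1) * hcoef a (b + 1) (c + 1) n := by
  have hnu : (n : ℂ) = 1 - b - c := by rw [hcab, ha]; ring
  apply mul_right_cancel₀ (mul_ne_zero hb hcn)
  linear_combination (-(b * (b - 1))) * hcoef_up' a b c n hb hc0 hCn hcn
    + (c * b * (c - b) * hcoef a b c n) * hnu

lemma rel1 (n : ℕ) (a b c : ℂ) (ha : a = -(n : ℂ)) (hb : b ≠ 0)
    (hfac : ∀ i : ℕ, i ≤ n → c + (i : ℂ) ≠ 0) :
    C c * derivative (hP n a b c)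
      = C b * (C a * hP n a (b + 1) (c + 1) + X * derivative (hP n a (b + 1) (c + 1))) := by
  have hc0 : c ≠ 0 := by simpa using hfac 0 (Nat.zero_le n)
  ext k
  rw [coeff_C_mul, coeff_derivative, coeff_hP, coeff_C_mul, coeff_add, coeff_C_mul,
    coeff_hP, coeff_X_mul_derivative, coeff_hP]
  by_cases h1 : k + 1 ≤ n
  · rw [if_pos h1, if_pos (by omega : k ≤ n)]
    have hs := scalar1 a b c k hb hc0 (hfac k (by omega))
      (asc_eval_ne_zero (fun i hi => hfac i (by omega)))
    linear_combination hs
  · rw [if_neg h1]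
    by_cases h2 : k ≤ n
    · have hkn : k = n := by omega
      subst hkn
      rw [if_pos h2, ha]
      ring
    · rw [if_neg h2]
      ring

lemma relC (n : ℕ) (a b c : ℂ) (ha : a = -(n : ℂ)) (hcab : c = a - b + 1) (hb : b ≠ 0)
    (hc0 : c ≠ 0) (hc1 : c - 1 ≠ 0)
    (hfac : ∀ i : ℕ, i ≤ n → c + (i : ℂ) ≠ 0) :
    C c * (C c - 1) * hP n a (b - 1) (c - 1)
      = C c * (C c - 1) * ((1 - X) * hP n a b c)
        + C b * (C b - 1) * (X * hP n a (b + 1) (c + 1)) := by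
  have hCC : (C c * (C c - 1) : Polynomial ℂ) = C (c * (c - 1)) := by
    rw [map_mul, map_sub, map_one]
  have hBB : (C b * (C b - 1) : Polynomial ℂ) = C (b * (b - 1)) := by
    rw [map_mul, map_sub, map_one]
  rw [hCC, hBB, sub_mul, one_mul]
  have hcab' : a = c + b - 1 := by rw [hcab]; ring
  ext k
  simp only [coeff_add, coeff_C_mul, coeff_sub]
  rw [coeff_hP]
  rcases k with _ | j
  · simp only [mul_coeff_zero, coeff_X_zero, zero_mul, mul_zero, sub_zero, add_zero]
    rw [coeff_hP, if_pos (Nat.zero_le n), if_pos (Nat.zero_le n), hcoef_zero, hcoef_zero]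
  · rw [coeff_X_mul, coeff_X_mul, coeff_hP, coeff_hP, coeff_hP]
    by_cases h1 : j + 1 ≤ n
    · rw [if_pos h1, if_pos h1, if_pos (by omega : j ≤ n), if_pos (by omega : j ≤ n)]
      exact scalarC a b c j hcab' hb hc0 hc1 (hfac j (by omega))
        (asc_eval_ne_zero (fun i hi => hfac i (by omega)))
    · rw [if_neg h1, if_neg h1]
      by_cases h2 : j ≤ n
      · have hkn : j = n := by omega
        subst hkn
        rw [if_pos h2, if_pos h2]
        have hs := scalarCn j a b c ha hcab hb hc0 (hfac j le_rfl)
          (asc_eval_ne_zero (fun i hi => hfac i (by omega)))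
        linear_combination hs
      · rw [if_neg h2, if_neg h2]
        ring

end HypWronskian

open HypWronskian Polynomial in
/-- Wronskian-type identity for contiguous hypergeometric polynomials:
with `a = -n`, `c = a - b + 1`, `c ∉ {a, a+1, …, 0, 1}`, and
`f = F(a,b+1;c+1;·)`, `g = F(a,b-1;c-1;·)`, `h = F(a,b;c;·)`, one has
`z(fg' - f'g) = c(fg - h²)` for all `z`. -/
theorem hypergeometric_wronskian_identity (n : ℕ) (hn : 1 ≤ n) (a b c : ℂ)
    (ha : a = -(n : ℂ)) (hc : c = a - b + 1)
    (hcne : ∀ j : ℤ, -(n : ℤ) ≤ j → j ≤ 1 → c ≠ (j : ℂ))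
    (f g h : ℂ → ℂ)
    (hf : f = hyperPoly n a (b + 1) (c + 1))
    (hg : g = hyperPoly n a (b - 1) (c - 1))
    (hh : h = hyperPoly n a b c) :
    ∀ z : ℂ, z * (f z * deriv g z - deriv f z * g z) = c * (f z * g z - h z ^ 2) := by
  intro z
  have hb0 : b ≠ 0 := by
    intro hb
    refine hcne (1 - n) (by omega) (by omega) ?_
    rw [hc, ha, hb]
    push_cast
    ring
  have hbm1 : b - 1 ≠ 0 := by
    intro hb
    refine hcne (-(n : ℤ)) le_rfl (by omega) ?_
    rw [hc, ha]
    push_cast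
    linear_combination -hb
  have hc0 : c ≠ 0 := by
    have := hcne 0 (by omega) (by omega)
    simpa using this
  have hc1 : c - 1 ≠ 0 := by
    have h1 := hcne 1 (by omega) (by omega)
    intro hh1
    apply h1
    push_cast
    linear_combination hh1
  have ha1 : a - 1 ≠ 0 := by
    rw [ha]
    intro hh1
    have h2 : ((n + 1 : ℕ) : ℂ) = 0 := by push_cast; linear_combination -hh1
    exact (Nat.cast_ne_zero.mpr (Nat.succ_ne_zero n)) h2
  have hfac_c : ∀ i : ℕ, i ≤ n → c + (i : ℂ) ≠ 0 := by
    intro i hi hh1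
    refine hcne (-(i : ℤ)) (by omega) (by omega) ?_
    push_cast
    linear_combination hh1
  have hfac_cm : ∀ i : ℕ, i ≤ n → (c - 1) + (i : ℂ) ≠ 0 := by
    intro i hi hh1
    refine hcne (1 - (i : ℤ)) (by omega) (by omega) ?_
    push_cast
    linear_combination hh1
  have hA := rel1 n a b c ha hb0 hfac_c
  have hB := rel1 n a (b - 1) (c - 1) ha hbm1 hfac_cm
  rw [show (b - 1) + 1 = b by ring, show (c - 1) + 1 = c by ring,
    show (C (c - 1) : Polynomial ℂ) = C c - 1 by rw [map_sub, map_one],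
    show (C (b - 1) : Polynomial ℂ) = C b - 1 by rw [map_sub, map_one]] at hB
  have hC := relC n a b c ha hc hb0 hc0 hc1 hfac_c
  set F := hP n a (b + 1) (c + 1) with hF
  set G := hP n a (b - 1) (c - 1) with hG
  set H := hP n a b c with hH
  have hCp : C c * (C c - 1) * derivative G
      = C c * (C c - 1) * ((1 - X) * derivative H - H)
        + C b * (C b - 1) * (F + X * derivative F) := by
    have h2 := congrArg derivative hC
    simp only [derivative_add, derivative_mul, derivative_sub, derivative_one, derivative_X,
      derivative_C, zero_mul, mul_one, zero_sub, zero_add, add_zero, sub_zero] at h2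
    linear_combination h2
  have hCc : (C c : Polynomial ℂ) = C a - C b + 1 := by
    rw [hc, map_add, map_sub, map_one]
  have key : (C a - 1) * C b * C c * (C c - 1) * (X * (F * derivative G - derivative F * G))
      = (C a - 1) * C b * C c * (C c - 1) * (C c * (F * G - H ^ 2)) := by
    linear_combination (norm := (simp only [hCc]; ring1))
      ((C a - 1) * C c * (C c - 1) * (1 - X) * H
          + (C b - 1) * (C c - 1) * (C b * X * F - C c * H)) * hA
      + C c * (C c - 1) * (C b * X * F - C c * H) * hB
      - (C a - 1) * C b * (X * derivative F + C c * F) * hC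
      + ((C a - 1) * C b * X * F - (C c - 1) * (C b * X * F - C c * H)) * hCp
  have keyz := congrArg (Polynomial.eval z) key
  simp only [eval_mul, eval_sub, eval_add, eval_one, eval_X, eval_C, eval_pow] at keyz
  have hcancel : (a - 1) * b * c * (c - 1) ≠ 0 :=
    mul_ne_zero (mul_ne_zero (mul_ne_zero ha1 hb0) hc0) hc1
  have hfin := mul_left_cancel₀ hcancel keyz
  have hfz : f z = F.eval z := by rw [hf]; exact hyperPoly_eval n a (b + 1) (c + 1) z
  have hgz : g z = G.eval z := by rw [hg]; exact hyperPoly_eval n a (b - 1) (c - 1) z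
  have hhz : h z = H.eval z := by rw [hh]; exact hyperPoly_eval n a b c z
  have hdf : deriv f z = (derivative F).eval z := by
    have : f = fun w => F.eval w := by
      funext w
      rw [hf]; exact hyperPoly_eval n a (b + 1) (c + 1) w
    rw [this]
    exact Polynomial.deriv F
  have hdg : deriv g z = (derivative G).eval z := by
    have : g = fun w => G.eval w := by
      funext w
      rw [hg]; exact hyperPoly_eval n a (b - 1) (c - 1) w
    rw [this]
    exact Polynomial.deriv G
  rw [hfz, hgz, hhz, hdf, hdg]
  linear_combination hfin
end

section
/- Fix n ∈ ℕ, n ≥ 1, and a real ν with -1 < ν < 0. The polynomial p(z) = ∑_{k=0}^n a_k z^k with a_k = (-n)_k (ν+2)_k / ((-n+1-ν)_k · k!) has positive coefficients a_0, …, a_{n-1}, negative leading coefficient a_n, and satisfies p(1) = (2ν+2)_n/(ν)_n < 0; consequently |a_n| > ∑_{k=0}^{n-1}|a_k|, and all zeros of p lie in the open unit disk. -/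
open Finset Polynomial

private lemma prod_neg' (m : ℕ) (f : ℕ → ℝ) :
    ∏ i ∈ range m, (-f i) = (-1)^m * ∏ i ∈ range m, f i := by
  rw [show ((-1:ℝ))^m = ∏ _j ∈ range m, (-1:ℝ) by rw [prod_const, card_range],
    ← prod_mul_distrib]
  exact prod_congr rfl fun _ _ => (neg_one_mul _).symm

private lemma asc_eval_prod (k : ℕ) (x : ℝ) :
    (ascPochhammer ℝ k).eval x = ∏ j ∈ range k, (x + j) := by
  induction k with
  | zero => simp
  | succ k ih => rw [ascPochhammer_succ_eval, ih, prod_range_succ]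

private lemma asc_reflect (m : ℕ) (x : ℝ) :
    (ascPochhammer ℝ m).eval x = (-1)^m * (ascPochhammer ℝ m).eval (1 - m - x) := by
  rw [asc_eval_prod, asc_eval_prod, ← prod_range_reflect (fun j => x + j) m, ← prod_neg']
  apply prod_congr rfl
  intro j hj
  rw [mem_range] at hj
  have h2 : ((m - 1 - j : ℕ) : ℝ) = m - 1 - j := by
    have h3 : m - 1 - j = m - (1 + j) := by omega
    rw [h3, Nat.cast_sub (by omega)]
    push_cast; ring
  rw [h2]; ring

private lemma asc_vandermonde (x y : ℝ) (n : ℕ) :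
    (ascPochhammer ℝ n).eval (x + y) =
      ∑ k ∈ range (n + 1), (n.choose k : ℝ) *
        (ascPochhammer ℝ k).eval x * (ascPochhammer ℝ (n - k)).eval y := by
  set A : ℕ → ℝ := fun k => (ascPochhammer ℝ k).eval x with hA
  set B : ℕ → ℝ := fun k => (ascPochhammer ℝ k).eval y with hB
  have hAs : ∀ k : ℕ, A (k + 1) = A k * (x + k) := fun k => ascPochhammer_succ_eval k x
  have hBs : ∀ k : ℕ, B (k + 1) = B k * (y + k) := fun k => ascPochhammer_succ_eval k y
  induction n with
  | zero => simp [hA, hB]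
  | succ n ih =>
    have step3 : (∑ k ∈ range (n + 1 + 1), ((n + 1).choose k : ℝ) * A k * B (n + 1 - k)) =
        (∑ k ∈ range (n + 1), (n.choose k : ℝ) * A (k + 1) * B (n - k))
          + (∑ k ∈ range (n + 1), (n.choose k : ℝ) * A k * B (n - k + 1)) := by
      rw [sum_range_succ' (fun k => ((n + 1).choose k : ℝ) * A k * B (n + 1 - k)) (n + 1)]
      have e1 : ∀ k ∈ range (n + 1),
          ((n + 1).choose (k + 1) : ℝ) * A (k + 1) * B (n + 1 - (k + 1)) =
            (n.choose k : ℝ) * A (k + 1) * B (n - k)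
              + (n.choose (k + 1) : ℝ) * A (k + 1) * B (n - k) := by
        intro k _
        rw [Nat.choose_succ_succ, Nat.succ_sub_succ]
        push_cast; ring
      rw [sum_congr rfl e1, sum_add_distrib, add_assoc]
      congr 1
      have e2 : ((n + 1).choose 0 : ℝ) * A 0 * B (n + 1 - 0) =
          (n.choose 0 : ℝ) * A 0 * B (n + 1 - 0) := by norm_num
      rw [e2]
      have e3 : ∀ k ∈ range (n + 1),
          (n.choose (k + 1) : ℝ) * A (k + 1) * B (n - k) =
            (n.choose (k + 1) : ℝ) * A (k + 1) * B (n + 1 - (k + 1)) := by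
        intro k _
        rw [Nat.succ_sub_succ]
      rw [sum_congr rfl e3,
        ← sum_range_succ' (fun k => (n.choose k : ℝ) * A k * B (n + 1 - k)) (n + 1),
        sum_range_succ (fun k => (n.choose k : ℝ) * A k * B (n + 1 - k)) (n + 1)]
      simp only [Nat.choose_succ_self, Nat.cast_zero, zero_mul, add_zero]
      refine sum_congr rfl fun k hk => ?_
      rw [mem_range] at hk
      congr 2
      omega
    rw [ascPochhammer_succ_eval, ih, step3]
    rw [sum_mul, ← sum_add_distrib]
    refine sum_congr rfl fun k hk => ?_
    rw [mem_range] at hk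
    rw [hAs, hBs, Nat.cast_sub (by omega : k ≤ n)]
    ring

private lemma asc_neg_nat (n k : ℕ) (hk : k ≤ n) :
    (ascPochhammer ℝ k).eval (-(n : ℝ)) =
      (-1)^k * ((k.factorial * n.choose k : ℕ) : ℝ) := by
  rw [asc_eval_prod]
  have e : ∏ j ∈ range k, (-(n:ℝ) + j) = ∏ j ∈ range k, -((n:ℝ) - j) :=
    prod_congr rfl fun j _ => by ring
  rw [e, prod_neg']
  congr 1
  rw [← Nat.descFactorial_eq_factorial_mul_choose, Nat.descFactorial_eq_prod_range,
    Nat.cast_prod]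
  refine prod_congr rfl fun j hj => ?_
  rw [mem_range] at hj
  rw [Nat.cast_sub (by omega)]

open Finset in
/-- For `n ≥ 1` and `-1 < ν < 0`, the coefficients
`a_k = (-n)_k (ν+2)_k / ((-n+1-ν)_k k!)` of the hypergeometric polynomial
`F(-n, ν+2; -n+1-ν; ·)` satisfy: `a_0,…,a_{n-1} > 0`, `a_n < 0`,
`p(1) = (2ν+2)_n/(ν)_n < 0`, hence `|a_n| > ∑_{k<n}|a_k|`, and all zeros of
the polynomial lie in the open unit disk. -/
theorem hypergeometric_zeros_in_disk (n : ℕ) (hn : 1 ≤ n) (ν : ℝ)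
    (hν₁ : -1 < ν) (hν₂ : ν < 0) (a : ℕ → ℝ)
    (ha : ∀ k, a k =
      (ascPochhammer ℝ k).eval (-(n : ℝ)) * (ascPochhammer ℝ k).eval (ν + 2) /
        ((ascPochhammer ℝ k).eval (-(n : ℝ) + 1 - ν) * (Nat.factorial k))) :
    (∀ k < n, 0 < a k) ∧ a n < 0 ∧
      (∑ k ∈ range (n + 1), a k =
        (ascPochhammer ℝ n).eval (2 * ν + 2) / (ascPochhammer ℝ n).eval ν) ∧
      (∑ k ∈ range (n + 1), a k) < 0 ∧
      (∑ k ∈ range n, |a k|) < |a n| ∧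
      ∀ z : ℂ, (∑ k ∈ range (n + 1), (a k : ℂ) * z ^ k) = 0 → ‖z‖ < 1 := by
  set c : ℝ := -(n : ℝ) + 1 - ν with hc
  -- positivity of ascPochhammer at ν + 2
  have hE : ∀ k : ℕ, 0 < (ascPochhammer ℝ k).eval (ν + 2) :=
    fun k => ascPochhammer_pos k (ν + 2) (by linarith)
  -- negativity of ascPochhammer at ν for m ≥ 1
  have hSneg : ∀ m : ℕ, 1 ≤ m → (ascPochhammer ℝ m).eval ν < 0 := by
    intro m hm
    obtain ⟨t, rfl⟩ : ∃ t, m = t + 1 := ⟨m - 1, by omega⟩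
    rw [asc_eval_prod, prod_range_succ' (fun j => ν + (j : ℝ)) t]
    have hpos : 0 < ∏ j ∈ range t, (ν + ((j + 1 : ℕ) : ℝ)) := by
      apply prod_pos
      intro j _
      have : (0:ℝ) ≤ (j : ℝ) := Nat.cast_nonneg j
      push_cast
      linarith
    have : ν + ((0:ℕ):ℝ) < 0 := by simpa using hν₂
    exact mul_neg_of_pos_of_neg hpos this
  have hSne : ∀ m : ℕ, (ascPochhammer ℝ m).eval ν ≠ 0 := by
    intro m
    rcases Nat.eq_zero_or_pos m with h | h
    · subst h; simp
    · exact ne_of_lt (hSneg m h)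
  -- key identity
  have hD : ∀ k ≤ n, (ascPochhammer ℝ k).eval c * (ascPochhammer ℝ (n - k)).eval ν =
      (-1)^k * (ascPochhammer ℝ n).eval ν := by
    intro k hk
    have hmul : (ascPochhammer ℝ k).eval c * (ascPochhammer ℝ (n - k)).eval (c + k) =
        (ascPochhammer ℝ n).eval c := by
      have h := congrArg (Polynomial.eval c) (ascPochhammer_mul (S := ℝ) k (n - k))
      rw [Nat.add_sub_cancel' hk] at h
      simpa [eval_comp] using h
    have hrefl : (ascPochhammer ℝ (n - k)).eval ν =
        (-1)^(n - k) * (ascPochhammer ℝ (n - k)).eval (c + k) := by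
      rw [asc_reflect (n - k) ν]
      congr 2
      rw [Nat.cast_sub hk, hc]
      ring
    have hreflc : (ascPochhammer ℝ n).eval c = (-1)^n * (ascPochhammer ℝ n).eval ν := by
      have h := asc_reflect n ν
      have harg : (1 : ℝ) - n - ν = c := by rw [hc]; ring
      rw [harg] at h
      have hsq : ((-1:ℝ))^n * (-1)^n = 1 := by
        rw [← pow_add]; exact Even.neg_one_pow ⟨n, rfl⟩
      calc (ascPochhammer ℝ n).eval c
          = ((-1:ℝ))^n * (-1)^n * (ascPochhammer ℝ n).eval c := by rw [hsq, one_mul]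
        _ = (-1)^n * (ascPochhammer ℝ n).eval ν := by rw [mul_assoc, ← h]
    have hpow : ((-1:ℝ))^(n - k) * (-1)^n = (-1)^k := by
      have h1 : ((-1:ℝ))^(n - k) * (-1)^k = (-1)^n := by
        rw [← pow_add]; congr 1; omega
      have hsq : ((-1:ℝ))^k * (-1)^k = 1 := by
        rw [← pow_add]; exact Even.neg_one_pow ⟨k, rfl⟩
      calc ((-1:ℝ))^(n - k) * (-1)^n = ((-1:ℝ))^(n-k) * ((-1)^k * (-1)^k) * (-1)^n := by
            rw [hsq, mul_one]
        _ = ((-1:ℝ))^(n-k) * (-1)^k * (-1)^k * (-1)^n := by ring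
        _ = (-1:ℝ)^n * (-1)^k * (-1)^n := by rw [h1]
        _ = ((-1:ℝ))^n * (-1)^n * (-1)^k := by ring
        _ = (-1:ℝ)^k := by
            rw [show ((-1:ℝ))^n * (-1)^n = 1 by
              rw [← pow_add]; exact Even.neg_one_pow ⟨n, rfl⟩, one_mul]
    calc (ascPochhammer ℝ k).eval c * (ascPochhammer ℝ (n - k)).eval ν
        = (-1)^(n - k) * ((ascPochhammer ℝ k).eval c *
            (ascPochhammer ℝ (n - k)).eval (c + k)) := by rw [hrefl]; ring
      _ = (-1)^(n - k) * ((-1)^n * (ascPochhammer ℝ n).eval ν) := by rw [hmul, hreflc]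
      _ = (-1)^k * (ascPochhammer ℝ n).eval ν := by rw [← mul_assoc, hpow]
  have hDne : ∀ k ≤ n, (ascPochhammer ℝ k).eval c ≠ 0 := by
    intro k hk h0
    have := hD k hk
    rw [h0, zero_mul] at this
    have h1 : ((-1:ℝ))^k ≠ 0 := by positivity
    exact (mul_ne_zero h1 (hSne n)) this.symm
  -- master formula
  have hmaster : ∀ k ≤ n, a k = (n.choose k : ℝ) * (ascPochhammer ℝ k).eval (ν + 2) *
      (ascPochhammer ℝ (n - k)).eval ν / (ascPochhammer ℝ n).eval ν := by
    intro k hk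
    rw [ha k, asc_neg_nat n k hk]
    have h1 := hD k hk
    have h2 : (ascPochhammer ℝ k).eval c ≠ 0 := hDne k hk
    have h3 : (ascPochhammer ℝ n).eval ν ≠ 0 := hSne n
    have h4 : (k.factorial : ℝ) ≠ 0 := Nat.cast_ne_zero.mpr k.factorial_ne_zero
    rw [hc] at h1 h2 ⊢
    push_cast
    rcases Nat.even_or_odd k with hpar | hpar
    · rw [hpar.neg_one_pow] at h1 ⊢
      field_simp
      linear_combination -((n.choose k : ℝ) * (ascPochhammer ℝ k).eval (ν + 2)) * h1
    · rw [hpar.neg_one_pow] at h1 ⊢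
      field_simp
      linear_combination -((n.choose k : ℝ) * (ascPochhammer ℝ k).eval (ν + 2)) * h1
  -- positivity of a k for k < n
  have hak : ∀ k < n, 0 < a k := by
    intro k hk
    rw [hmaster k (le_of_lt hk)]
    have hnum : (n.choose k : ℝ) * (ascPochhammer ℝ k).eval (ν + 2) *
        (ascPochhammer ℝ (n - k)).eval ν < 0 := by
      apply mul_neg_of_pos_of_neg
      · have := Nat.choose_pos (le_of_lt hk)
        have := hE k
        positivity
      · exact hSneg (n - k) (by omega)
    exact div_pos_of_neg_of_neg hnum (hSneg n hn)
  -- a n < 0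
  have han : a n < 0 := by
    rw [hmaster n le_rfl]
    simp only [Nat.choose_self, Nat.cast_one, one_mul, Nat.sub_self, ascPochhammer_zero,
      eval_one, mul_one]
    exact div_neg_of_pos_of_neg (hE n) (hSneg n hn)
  -- the sum
  have hsum : ∑ k ∈ range (n + 1), a k =
      (ascPochhammer ℝ n).eval (2 * ν + 2) / (ascPochhammer ℝ n).eval ν := by
    have e : ∀ k ∈ range (n + 1), a k = ((n.choose k : ℝ) *
        (ascPochhammer ℝ k).eval (ν + 2) * (ascPochhammer ℝ (n - k)).eval ν) /
          (ascPochhammer ℝ n).eval ν := by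
      intro k hk
      rw [mem_range] at hk
      exact hmaster k (by omega)
    rw [sum_congr rfl e, ← sum_div]
    congr 1
    rw [show (2 * ν + 2 : ℝ) = (ν + 2) + ν by ring, asc_vandermonde]
  have hsumneg : (∑ k ∈ range (n + 1), a k) < 0 := by
    rw [hsum]
    exact div_neg_of_pos_of_neg (ascPochhammer_pos n (2 * ν + 2) (by linarith)) (hSneg n hn)
  -- coefficient comparison
  have habs : (∑ k ∈ range n, |a k|) < |a n| := by
    have e : ∀ k ∈ range n, |a k| = a k := by
      intro k hk
      rw [mem_range] at hk
      exact abs_of_pos (hak k hk)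
    rw [sum_congr rfl e, abs_of_neg han]
    rw [sum_range_succ] at hsumneg
    linarith
  refine ⟨hak, han, hsum, hsumneg, habs, ?_⟩
  -- zeros in the disk
  intro z hz
  by_contra hcon
  push_neg at hcon
  set r : ℝ := ‖z‖ with hr
  have hr1 : (1:ℝ) ≤ r := hcon
  have hr0 : (0:ℝ) < r := by linarith
  rw [sum_range_succ] at hz
  have h0 : (a n : ℂ) * z ^ n = -∑ k ∈ range n, (a k : ℂ) * z ^ k := by
    linear_combination hz
  have hle : |a n| * r ^ n ≤ ∑ k ∈ range n, |a k| * r ^ k := by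
    have := congrArg norm h0
    rw [norm_neg, norm_mul, norm_pow, Complex.norm_real, Real.norm_eq_abs] at this
    rw [this]
    calc ‖∑ k ∈ range n, (a k : ℂ) * z ^ k‖
        ≤ ∑ k ∈ range n, ‖(a k : ℂ) * z ^ k‖ :=
          norm_sum_le _ _
      _ = ∑ k ∈ range n, |a k| * r ^ k := by
          refine sum_congr rfl fun k _ => ?_
          rw [norm_mul, norm_pow, Complex.norm_real, Real.norm_eq_abs]
  have hle2 : ∑ k ∈ range n, |a k| * r ^ k ≤ (∑ k ∈ range n, |a k|) * r ^ (n - 1) := by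
    rw [sum_mul]
    refine sum_le_sum fun k hk => ?_
    rw [mem_range] at hk
    exact mul_le_mul_of_nonneg_left (pow_le_pow_right₀ hr1 (by omega)) (abs_nonneg _)
  have hlt : (∑ k ∈ range n, |a k|) * r ^ (n - 1) < |a n| * r ^ (n - 1) :=
    mul_lt_mul_of_pos_right habs (pow_pos hr0 _)
  have hle3 : |a n| * r ^ (n - 1) ≤ |a n| * r ^ n :=
    mul_le_mul_of_nonneg_left (pow_le_pow_right₀ hr1 (by omega)) (abs_nonneg _)
  linarith
end

section
/- Let n ≥ 1, let a_1, …, a_n ∈ 𝔻 not all zero, and set A = max_k |a_k| > 0. For 0 < λ < 1/A, let B_λ(z) = ∏_{k=1}^n (z - λ a_k)/(1 - λ conj(a_k) z). Then λ ↦ M(B_λ) = sup_{|z|=1}|B_λ'(z)| is strictly increasing and λ ↦ m(B_λ) = inf_{|z|=1}|B_λ'(z)| is strictly decreasing on (0, 1/A). -/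
open Complex Metric Finset

private noncomputable def Gg (n : ℕ) (a : Fin n → ℂ) (w : ℂ) : ℂ :=
  ∑ k, (1 + w * a k) / (1 - w * a k)

private noncomputable def Ff (n : ℕ) (a : Fin n → ℂ) (w : ℂ) : ℝ :=
  ∑ k, (1 - Complex.normSq (w * a k)) / Complex.normSq (1 - w * a k)

private lemma re_quot (u : ℂ) : ((1 + u) / (1 - u)).re = (1 - normSq u) / normSq (1 - u) := by
  rw [Complex.div_re]
  simp [Complex.normSq_apply]
  ring

private lemma Ff_eq_re (n : ℕ) (a : Fin n → ℂ) (w : ℂ) : Ff n a w = (Gg n a w).re := by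
  rw [Ff, Gg, Complex.re_sum]
  exact Finset.sum_congr rfl fun k _ => (re_quot (w * a k)).symm

private lemma denom_ne_s16 {x : ℂ} (hx : ‖x‖ < 1) : (1 : ℂ) - x ≠ 0 := by
  intro h
  have h1 : (1 : ℂ) = x := by linear_combination h
  rw [← h1] at hx; simp at hx

private lemma abs_mul_lt {A : ℝ} (hA0 : 0 < A) {w x : ℂ} (hw : w ∈ Metric.ball (0:ℂ) (1/A))
    (hx : ‖x‖ ≤ A) : ‖w * x‖ < 1 := by
  have hw' : ‖w‖ < 1/A := by simpa [Complex.dist_eq] using hw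
  calc ‖w * x‖ = ‖w‖ * ‖x‖ := norm_mul _ _
    _ ≤ ‖w‖ * A := mul_le_mul_of_nonneg_left hx (norm_nonneg w)
    _ < (1/A) * A := by exact mul_lt_mul_of_pos_right hw' hA0
    _ = 1 := by field_simp

private lemma Gg_diff {n : ℕ} {a : Fin n → ℂ} {A : ℝ} (hA0 : 0 < A)
    (hub : ∀ k, ‖a k‖ ≤ A) :
    DifferentiableOn ℂ (Gg n a) (Metric.ball 0 (1/A)) := by
  have : (Gg n a) = fun w => ∑ k, (1 + w * a k) / (1 - w * a k) := rfl
  rw [this]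
  apply DifferentiableOn.fun_sum
  intro k _
  apply DifferentiableOn.div
  · exact (differentiable_const _).differentiableOn.add
      ((differentiable_id.mul_const _).differentiableOn)
  · exact (differentiable_const _).differentiableOn.sub
      ((differentiable_id.mul_const _).differentiableOn)
  · intro w hw
    exact denom_ne_s16 (abs_mul_lt hA0 hw (hub k))

private lemma aux_const (G : ℂ → ℂ) (R : ℝ) (hR : 0 < R) (hG : DifferentiableOn ℂ G (Metric.ball 0 R))
    (p : ℂ) (hp : p ∈ Metric.ball (0:ℂ) R) (hmax : IsLocalMax (fun w => (G w).re) p) :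
    ∀ w ∈ Metric.ball (0:ℂ) R, (G w).re = (G p).re := by
  set H : ℂ → ℂ := fun w => Complex.exp (G w) with hH
  have hHd : DifferentiableOn ℂ H (Metric.ball 0 R) := hG.cexp
  have hopen : IsOpen (Metric.ball (0:ℂ) R) := Metric.isOpen_ball
  have hnbd : Metric.ball (0:ℂ) R ∈ nhds p := hopen.mem_nhds hp
  have hd : ∀ᶠ z in nhds p, DifferentiableAt ℂ H z := by
    filter_upwards [hnbd] with z hz
    exact (hHd.differentiableAt (hopen.mem_nhds hz))
  have hnorm : IsLocalMax (norm ∘ H) p := by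
    have : (norm ∘ H) = fun w => Real.exp ((G w).re) := by
      funext w; simp [H, Complex.norm_exp]
    rw [this]
    exact hmax.mono fun x hx => Real.exp_le_exp.mpr hx
  have heq : ∀ᶠ y in nhds p, H y = H p := Complex.eventually_eq_of_isLocalMax_norm hd hnorm
  have hEq : Set.EqOn H (fun _ => H p) (Metric.ball 0 R) := by
    apply AnalyticOnNhd.eqOn_of_preconnected_of_eventuallyEq
      (hHd.analyticOnNhd hopen) analyticOnNhd_const
      (convex_ball (0:ℂ) R).isPreconnected hp heq
  intro w hw
  have := hEq hw
  have hre : Real.exp ((G w).re) = Real.exp ((G p).re) := by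
    have h1 : ‖H w‖ = ‖H p‖ := by rw [this]
    simpa [H, Complex.norm_exp] using h1
  exact Real.exp_injective hre

private lemma Ff_not_const {n : ℕ} {a : Fin n → ℂ} {A : ℝ} (hA0 : 0 < A)
    (hub : ∀ k, ‖a k‖ ≤ A) (k0 : Fin n) (hk0 : ‖a k0‖ = A)
    (c : ℝ) (h : ∀ w ∈ Metric.ball (0:ℂ) (1/A), Ff n a w = c) : False := by
  have hA1 : (0:ℝ) < 1/A := by positivity
  -- value at 0
  have h0 : Ff n a 0 = n := by simp [Ff]
  have hc : c = n := by
    rw [← h 0 (by simpa [Metric.mem_ball] using hA1), h0]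
  -- the blow-up point
  set t : ℝ := (n:ℝ)/(n+1) with ht
  have htnn : 0 ≤ t := by positivity
  have ht1 : t < 1 := by
    rw [ht, div_lt_one (by positivity)]; linarith
  set w0 : ℂ := ((t/A^2 : ℝ) : ℂ) * (starRingEnd ℂ) (a k0) with hw0
  have habsw0 : ‖w0‖ = t / A := by
    rw [hw0, norm_mul, Complex.norm_real, Real.norm_eq_abs, Complex.norm_conj, hk0, _root_.abs_of_nonneg (show (0:ℝ) ≤ t/A^2 by positivity)]
    field_simp
  have hw0mem : w0 ∈ Metric.ball (0:ℂ) (1/A) := by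
    simp only [Metric.mem_ball, Complex.dist_eq, sub_zero]
    rw [habsw0, div_lt_div_iff₀ hA0 hA0]
    nlinarith
  -- key product value
  have hprod : w0 * a k0 = (t : ℂ) := by
    rw [hw0, mul_assoc, ← Complex.normSq_eq_conj_mul_self, Complex.normSq_eq_norm_sq, hk0]
    rw [← Complex.ofReal_mul, div_mul_cancel₀ _ (show (A:ℝ)^2 ≠ 0 by positivity)]
  -- lower bound at w0
  have hterm : (1 - Complex.normSq (w0 * a k0)) / Complex.normSq (1 - w0 * a k0)
      = (1 - t^2)/(1-t)^2 := by
    rw [hprod]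
    have h1 : (1 : ℂ) - (t:ℂ) = ((1 - t : ℝ) : ℂ) := by push_cast; ring
    rw [h1, Complex.normSq_ofReal, Complex.normSq_ofReal]
    ring
  have hge : (1 - t^2)/(1-t)^2 ≤ Ff n a w0 := by
    rw [Ff, ← hterm]
    apply Finset.single_le_sum (f := fun k => (1 - Complex.normSq (w0 * a k)) / Complex.normSq (1 - w0 * a k))
      _ (Finset.mem_univ k0)
    intro k _
    apply div_nonneg _ (Complex.normSq_nonneg _)
    have : ‖w0 * a k‖ < 1 := abs_mul_lt hA0 hw0mem (hub k)
    have h2 : Complex.normSq (w0 * a k) < 1 := by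
      rw [Complex.normSq_eq_norm_sq]; nlinarith [norm_nonneg (w0 * a k)]
    linarith
  have hval : (1 - t^2)/(1-t)^2 = 2*(n:ℝ) + 1 := by
    have hne : (1:ℝ) - t ≠ 0 := by linarith
    rw [ht]
    field_simp
    ring
  have hw0c : Ff n a w0 = c := h w0 hw0mem
  rw [hw0c, hc] at hge
  rw [hval] at hge
  linarith [Nat.cast_nonneg (α := ℝ) n]


private lemma Ff_no_localmax {n : ℕ} {a : Fin n → ℂ} {A : ℝ} (hA0 : 0 < A)
    (hub : ∀ k, ‖a k‖ ≤ A) (k0 : Fin n) (hk0 : ‖a k0‖ = A)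
    {p : ℂ} (hp : p ∈ Metric.ball (0:ℂ) (1/A)) (hmax : IsLocalMax (Ff n a) p) : False := by
  have hmax' : IsLocalMax (fun w => (Gg n a w).re) p := by
    have : (fun w => (Gg n a w).re) = Ff n a := by
      funext w; exact (Ff_eq_re n a w).symm
    rw [this]; exact hmax
  have hconst := aux_const (Gg n a) (1/A) (by positivity) (Gg_diff hA0 hub) p hp hmax'
  exact Ff_not_const hA0 hub k0 hk0 ((Gg n a p).re)
    (fun w hw => by rw [Ff_eq_re]; exact hconst w hw)

private lemma Ff_no_localmin {n : ℕ} {a : Fin n → ℂ} {A : ℝ} (hA0 : 0 < A)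
    (hub : ∀ k, ‖a k‖ ≤ A) (k0 : Fin n) (hk0 : ‖a k0‖ = A)
    {p : ℂ} (hp : p ∈ Metric.ball (0:ℂ) (1/A)) (hmin : IsLocalMin (Ff n a) p) : False := by
  have hmax' : IsLocalMax (fun w => ((-(Gg n a w))).re) p := by
    have heq : (fun w => ((-(Gg n a w))).re) = fun w => -(Ff n a w) := by
      funext w; rw [Complex.neg_re, Ff_eq_re]
    rw [heq]
    exact hmin.neg
  have hconst := aux_const (fun w => -(Gg n a w)) (1/A) (by positivity)
    ((Gg_diff hA0 hub).neg) p hp hmax'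
  refine Ff_not_const hA0 hub k0 hk0 ((Gg n a p).re) (fun w hw => ?_)
  have := hconst w hw
  simp only [Complex.neg_re, neg_inj] at this
  rw [Ff_eq_re]; exact this


private lemma abs_denom {z c : ℂ} (hz : ‖z‖ = 1) :
    ‖1 - (starRingEnd ℂ) c * z‖ = ‖z - c‖ := by
  have hzz : z * (starRingEnd ℂ) z = 1 := by
    rw [Complex.mul_conj, Complex.normSq_eq_norm_sq, hz]; norm_num
  have h : (1 - (starRingEnd ℂ) c * z) = (starRingEnd ℂ) ((starRingEnd ℂ) z * (z - c)) := by
    rw [map_mul, map_sub, Complex.conj_conj]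
    linear_combination -hzz
  rw [h, Complex.norm_conj, norm_mul, Complex.norm_conj, hz, one_mul]

private lemma blaschke_deriv_abs {n : ℕ} (c : Fin n → ℂ) (hc : ∀ k, ‖c k‖ < 1)
    {z : ℂ} (hz : ‖z‖ = 1) :
    ‖deriv (fun y => ∏ k, (y - c k) / (1 - (starRingEnd ℂ) (c k) * y)) z‖
      = ∑ k, (1 - Complex.normSq (c k)) / Complex.normSq (1 - (starRingEnd ℂ) (c k) * z) := by
  have hzz : z * (starRingEnd ℂ) z = 1 := by
    rw [Complex.mul_conj, Complex.normSq_eq_norm_sq, hz]; norm_num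
  have hzne : z ≠ 0 := by
    intro h; rw [h] at hz; simp at hz
  have hcz : (starRingEnd ℂ) z = z⁻¹ := by
    field_simp
    linear_combination hzz
  set D : Fin n → ℂ := fun k => 1 - (starRingEnd ℂ) (c k) * z with hD
  have hDne : ∀ k, D k ≠ 0 := by
    intro k h
    have h2 : ‖D k‖ = ‖z - c k‖ := abs_denom hz
    rw [h] at h2
    have h3 : z = c k := by
      rw [norm_zero] at h2
      exact sub_eq_zero.mp (norm_eq_zero.mp h2.symm)
    have := hc k
    rw [← h3, hz] at this
    exact absurd this (by norm_num)
  set d : Fin n → ℂ := fun k => (1 - (starRingEnd ℂ) (c k) * c k) / (D k)^2 with hd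
  have hder : ∀ k, HasDerivAt (fun y => (y - c k) / (1 - (starRingEnd ℂ) (c k) * y)) (d k) z := by
    intro k
    have h1 : HasDerivAt (fun y : ℂ => y - c k) 1 z := (hasDerivAt_id z).sub_const _
    have h2 : HasDerivAt (fun y : ℂ => 1 - (starRingEnd ℂ) (c k) * y)
        (-((starRingEnd ℂ) (c k))) z := by
      simpa using ((hasDerivAt_id z).const_mul ((starRingEnd ℂ) (c k))).const_sub 1
    have h3 := h1.fun_div h2 (hDne k)
    refine h3.congr_deriv (Eq.symm ?_)
    rw [hd]
    show (1 - (starRingEnd ℂ) (c k) * c k) / (D k)^2 = _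
    rw [hD]
    congr 1
    ring
  have hP : HasDerivAt (fun y => ∏ k, (y - c k) / (1 - (starRingEnd ℂ) (c k) * y))
      (∑ k, (∏ j ∈ Finset.univ.erase k, (z - c j) / (1 - (starRingEnd ℂ) (c j) * z)) • d k) z :=
    HasDerivAt.fun_finsetProd (fun k _ => hder k)
  rw [hP.deriv]
  -- now the absolute value computation
  set φ : Fin n → ℂ := fun k => (z - c k) / (1 - (starRingEnd ℂ) (c k) * z) with hφ
  have habsφ : ∀ k, ‖φ k‖ = 1 := by
    intro k
    rw [hφ]
    show ‖(z - c k) / (D k)‖ = 1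
    rw [norm_div, ← abs_denom hz, div_self]
    exact fun h => hDne k (norm_eq_zero.mp h)
  set P : ℂ := ∏ k, φ k with hPdef
  have hDk : ∀ k, D k = 1 - (starRingEnd ℂ) (c k) * z := fun k => by rw [hD]
  clear_value D d φ P
  have hPabs : ‖P‖ = 1 := by
    rw [hPdef, norm_prod]
    exact Finset.prod_eq_one fun k _ => habsφ k
  have key : (∑ k, (∏ j ∈ Finset.univ.erase k, φ j) • d k) * (z * (starRingEnd ℂ) P)
      = ((∑ k, (1 - Complex.normSq (c k)) / Complex.normSq (D k) : ℝ) : ℂ) := by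
    rw [Finset.sum_mul, Complex.ofReal_sum]
    refine Finset.sum_congr rfl fun k _ => ?_
    have hsplit : (starRingEnd ℂ) P = (starRingEnd ℂ) (φ k) *
        ∏ j ∈ Finset.univ.erase k, (starRingEnd ℂ) (φ j) := by
      rw [hPdef, map_prod, ← Finset.mul_prod_erase _ _ (Finset.mem_univ k)]
    have herase : ∀ j, φ j * (starRingEnd ℂ) (φ j) = 1 := by
      intro j
      rw [Complex.mul_conj, Complex.normSq_eq_norm_sq, habsφ j]
      norm_num
    have hprod1 : (∏ j ∈ Finset.univ.erase k, φ j) *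
        (∏ j ∈ Finset.univ.erase k, (starRingEnd ℂ) (φ j)) = 1 := by
      rw [← Finset.prod_mul_distrib]
      exact Finset.prod_eq_one fun j _ => herase j
    have hterm : d k * (z * (starRingEnd ℂ) (φ k))
        = (((1 - Complex.normSq (c k)) / Complex.normSq (D k) : ℝ) : ℂ) := by
      have hφk : φ k = (z - c k) / D k := by rw [hφ, hD]
      have hdk : d k = (1 - (starRingEnd ℂ) (c k) * c k) / (D k)^2 := by rw [hd]
      rw [hdk, hφk, map_div₀, map_sub]
      have hnum : (((1 - Complex.normSq (c k) : ℝ)) : ℂ) = 1 - (starRingEnd ℂ) (c k) * c k := by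
        push_cast
        rw [Complex.normSq_eq_conj_mul_self]
      have hden : ((Complex.normSq (D k) : ℝ) : ℂ) = D k * (starRingEnd ℂ) (D k) := by
        rw [Complex.normSq_eq_conj_mul_self]; ring
      have hzD : z * ((starRingEnd ℂ) z - (starRingEnd ℂ) (c k)) = D k := by
        rw [hD]
        linear_combination hzz
      rw [Complex.ofReal_div, hnum, hden]
      have h4 : (1 - (starRingEnd ℂ) (c k) * c k) / (D k)^2 *
          (z * (((starRingEnd ℂ) z - (starRingEnd ℂ) (c k)) / (starRingEnd ℂ) (D k)))
          = ((1 - (starRingEnd ℂ) (c k) * c k) * (z * ((starRingEnd ℂ) z - (starRingEnd ℂ) (c k))))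
            / ((D k)^2 * (starRingEnd ℂ) (D k)) := by
        ring
      rw [h4, hzD, pow_two, mul_comm (1 - (starRingEnd ℂ) (c k) * c k) (D k), mul_assoc,
        mul_div_mul_left _ _ (hDne k)]
    calc (∏ j ∈ Finset.univ.erase k, φ j) • d k * (z * (starRingEnd ℂ) P)
        = ((∏ j ∈ Finset.univ.erase k, φ j) *
            (∏ j ∈ Finset.univ.erase k, (starRingEnd ℂ) (φ j))) *
          (d k * (z * (starRingEnd ℂ) (φ k))) := by
          rw [hsplit]; simp only [smul_eq_mul]; ring
      _ = d k * (z * (starRingEnd ℂ) (φ k)) := by rw [hprod1, one_mul]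
      _ = _ := hterm
  have habs2 : ‖z * (starRingEnd ℂ) P‖ = 1 := by
    rw [norm_mul, hz, Complex.norm_conj, hPabs]; norm_num
  have : ‖∑ k, (∏ j ∈ Finset.univ.erase k, φ j) • d k‖
      = ‖(∑ k, (∏ j ∈ Finset.univ.erase k, φ j) • d k) * (z * (starRingEnd ℂ) P)‖ := by
    rw [norm_mul, habs2, mul_one]
  rw [this, key, Complex.norm_real, Real.norm_eq_abs]
  simp only [hDk]
  apply _root_.abs_of_nonneg
  apply Finset.sum_nonneg
  intro k _
  apply div_nonneg _ (Complex.normSq_nonneg _)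
  have := hc k
  have h2 : Complex.normSq (c k) < 1 := by
    rw [Complex.normSq_eq_norm_sq]; nlinarith [norm_nonneg (c k)]
  linarith


/-- Scaling the zeros of a Blaschke product monotonically: with zeros `λ a k`,
`λ ↦ sup_{|z|=1}|B_λ'|` is strictly increasing and `λ ↦ inf_{|z|=1}|B_λ'|` is
strictly decreasing on `(0, 1/A)`, where `A = max_k |a k| > 0`. -/
theorem blaschke_scaled_monotone (n : ℕ) (hn : 1 ≤ n) (a : Fin n → ℂ)
    (ha : ∀ k, ‖a k‖ < 1) (A : ℝ)
    (hA : IsGreatest (Set.range fun k => ‖a k‖) A) (hA0 : 0 < A)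
    (B : ℝ → ℂ → ℂ)
    (hB : ∀ lam z, B lam z =
      ∏ k, (z - lam * a k) / (1 - lam * (starRingEnd ℂ) (a k) * z))
    (Mf mf : ℝ → ℝ)
    (hMf : ∀ lam, Mf lam =
      sSup ((fun z => ‖deriv (B lam) z‖) '' {z : ℂ | ‖z‖ = 1}))
    (hmf : ∀ lam, mf lam =
      sInf ((fun z => ‖deriv (B lam) z‖) '' {z : ℂ | ‖z‖ = 1})) :
    StrictMonoOn Mf (Set.Ioo 0 (1 / A)) ∧ StrictAntiOn mf (Set.Ioo 0 (1 / A)) := by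
  obtain ⟨hAmem, hAub⟩ := hA
  obtain ⟨k0, hk0⟩ := hAmem
  have hub : ∀ k, ‖a k‖ ≤ A := fun k => hAub ⟨k, rfl⟩
  -- Step 1: the image set is the image of `Ff n a` on the circle of radius `lam`.
  have himg : ∀ lam, lam ∈ Set.Ioo (0:ℝ) (1/A) →
      (fun z => ‖deriv (B lam) z‖) '' {z : ℂ | ‖z‖ = 1}
        = Ff n a '' Metric.sphere (0:ℂ) lam := by
    intro lam hlam
    obtain ⟨hl0, hl1⟩ := hlam
    set c : Fin n → ℂ := fun k => (lam:ℂ) * a k with hcdef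
    have hck : ∀ k, c k = (lam:ℂ) * a k := fun k => by rw [hcdef]
    have hc : ∀ k, ‖c k‖ < 1 := by
      intro k
      rw [hck, norm_mul, Complex.norm_real, Real.norm_eq_abs, _root_.abs_of_pos hl0]
      calc lam * ‖a k‖ ≤ lam * A := mul_le_mul_of_nonneg_left (hub k) hl0.le
        _ < (1/A) * A := mul_lt_mul_of_pos_right hl1 hA0
        _ = 1 := by field_simp
    have hBfun : B lam = fun y => ∏ k, (y - c k) / (1 - (starRingEnd ℂ) (c k) * y) := by
      funext y
      rw [hB]
      refine Finset.prod_congr rfl fun k _ => ?_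
      rw [hck, map_mul, Complex.conj_ofReal]
    have hval : ∀ z : ℂ, ‖z‖ = 1 →
        ‖deriv (B lam) z‖ = Ff n a ((lam:ℂ) * (starRingEnd ℂ) z) := by
      intro z hz
      rw [hBfun, blaschke_deriv_abs c hc hz, Ff]
      refine Finset.sum_congr rfl fun k _ => ?_
      have hnz : Complex.normSq z = 1 := by
        rw [Complex.normSq_eq_norm_sq, hz]; norm_num
      congr 1
      · rw [hck]
        simp [Complex.normSq_mul, Complex.normSq_conj, hnz]
      · rw [← Complex.normSq_conj (1 - (starRingEnd ℂ) (c k) * z)]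
        congr 1
        rw [hck]
        simp only [map_sub, map_one, map_mul, Complex.conj_conj, Complex.conj_ofReal]
        ring
    ext x
    simp only [Set.mem_image, Set.mem_setOf_eq, Metric.mem_sphere, Complex.dist_eq, sub_zero]
    constructor
    · rintro ⟨z, hz, rfl⟩
      refine ⟨(lam:ℂ) * (starRingEnd ℂ) z, ?_, (hval z hz).symm⟩
      rw [norm_mul, Complex.norm_real, Real.norm_eq_abs, Complex.norm_conj, hz, _root_.abs_of_pos hl0, mul_one]
    · rintro ⟨w, hw, rfl⟩
      have hz1 : ‖(starRingEnd ℂ) w / (lam:ℂ)‖ = 1 := by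
        rw [norm_div, Complex.norm_conj, hw, Complex.norm_real, Real.norm_eq_abs, _root_.abs_of_pos hl0,
          div_self hl0.ne']
      refine ⟨(starRingEnd ℂ) w / (lam:ℂ), hz1, ?_⟩
      rw [hval _ hz1]
      congr 1
      rw [map_div₀, Complex.conj_conj, Complex.conj_ofReal, mul_comm,
        div_mul_cancel₀ _ (Complex.ofReal_ne_zero.mpr hl0.ne')]
  -- Step 2: continuity of Ff on the ball.
  have hFcont : ContinuousOn (Ff n a) (Metric.ball (0:ℂ) (1/A)) := by
    have h1 : ContinuousOn (Gg n a) (Metric.ball (0:ℂ) (1/A)) :=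
      (Gg_diff hA0 hub).continuousOn
    have h2 : Ff n a = fun w => (Gg n a w).re := funext (Ff_eq_re n a)
    rw [h2]
    exact Complex.continuous_re.comp_continuousOn h1
  -- Step 3: key comparison on spheres.
  have hkey : ∀ l1 l2 : ℝ, l1 ∈ Set.Ioo (0:ℝ) (1/A) → l2 ∈ Set.Ioo (0:ℝ) (1/A) → l1 < l2 →
      sSup (Ff n a '' Metric.sphere (0:ℂ) l1) < sSup (Ff n a '' Metric.sphere (0:ℂ) l2)
      ∧ sInf (Ff n a '' Metric.sphere (0:ℂ) l2) < sInf (Ff n a '' Metric.sphere (0:ℂ) l1) := by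
    rintro l1 l2 ⟨h10, h11⟩ ⟨h20, h21⟩ h12
    have hsub2 : Metric.closedBall (0:ℂ) l2 ⊆ Metric.ball 0 (1/A) :=
      Metric.closedBall_subset_ball h21
    have hcont2 : ContinuousOn (Ff n a) (Metric.closedBall (0:ℂ) l2) := hFcont.mono hsub2
    have hK : IsCompact (Metric.closedBall (0:ℂ) l2) := isCompact_closedBall _ _
    have hKne : (Metric.closedBall (0:ℂ) l2).Nonempty := ⟨0, by simp [h20.le]⟩
    obtain ⟨p, hpK, hpmax⟩ := hK.exists_isMaxOn hKne hcont2
    obtain ⟨p', hp'K, hpmin⟩ := hK.exists_isMinOn hKne hcont2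
    have hbd : ∀ q, ‖q‖ < l2 → IsMaxOn (Ff n a) (Metric.closedBall (0:ℂ) l2) q
        → False := by
      intro q hql hqmax
      have hqball : q ∈ Metric.ball (0:ℂ) l2 := by
        simpa [Metric.mem_ball, Complex.dist_eq] using hql
      have hnb : Metric.closedBall (0:ℂ) l2 ∈ nhds q :=
        Filter.mem_of_superset (Metric.isOpen_ball.mem_nhds hqball)
          Metric.ball_subset_closedBall
      exact Ff_no_localmax hA0 hub k0 hk0
        (hsub2 (Metric.ball_subset_closedBall hqball)) (hqmax.isLocalMax hnb)
    have hbd' : ∀ q, ‖q‖ < l2 → IsMinOn (Ff n a) (Metric.closedBall (0:ℂ) l2) q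
        → False := by
      intro q hql hqmin
      have hqball : q ∈ Metric.ball (0:ℂ) l2 := by
        simpa [Metric.mem_ball, Complex.dist_eq] using hql
      have hnb : Metric.closedBall (0:ℂ) l2 ∈ nhds q :=
        Filter.mem_of_superset (Metric.isOpen_ball.mem_nhds hqball)
          Metric.ball_subset_closedBall
      exact Ff_no_localmin hA0 hub k0 hk0
        (hsub2 (Metric.ball_subset_closedBall hqball)) (hqmin.isLocalMin hnb)
    have hpabs : ‖p‖ = l2 := by
      by_contra h
      have hlt : ‖p‖ < l2 :=
        lt_of_le_of_ne (by simpa [Complex.dist_eq] using hpK) h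
      exact hbd p hlt hpmax
    have hp'abs : ‖p'‖ = l2 := by
      by_contra h
      have hlt : ‖p'‖ < l2 :=
        lt_of_le_of_ne (by simpa [Complex.dist_eq] using hp'K) h
      exact hbd' p' hlt hpmin
    have hsub1 : Metric.sphere (0:ℂ) l1 ⊆ Metric.ball 0 (1/A) := by
      intro x hx
      have : ‖x‖ = l1 := by simpa [Complex.dist_eq] using hx
      simp only [Metric.mem_ball, Complex.dist_eq, sub_zero, this]
      exact h12.trans h21
    have hS1 : IsCompact (Metric.sphere (0:ℂ) l1) := isCompact_sphere _ _
    have hS1ne : (Metric.sphere (0:ℂ) l1).Nonempty :=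
      ⟨(l1:ℂ), by simp [Complex.dist_eq, _root_.abs_of_pos h10]⟩
    obtain ⟨q, hqS, hqmax⟩ := hS1.exists_isMaxOn hS1ne (hFcont.mono hsub1)
    obtain ⟨q', hq'S, hqmin⟩ := hS1.exists_isMinOn hS1ne (hFcont.mono hsub1)
    have hqabs : ‖q‖ = l1 := by simpa [Complex.dist_eq] using hqS
    have hq'abs : ‖q'‖ = l1 := by simpa [Complex.dist_eq] using hq'S
    have hqK : q ∈ Metric.closedBall (0:ℂ) l2 := by
      simp only [Metric.mem_closedBall, Complex.dist_eq, sub_zero, hqabs]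
      exact h12.le
    have hq'K : q' ∈ Metric.closedBall (0:ℂ) l2 := by
      simp only [Metric.mem_closedBall, Complex.dist_eq, sub_zero, hq'abs]
      exact h12.le
    have hpS : p ∈ Metric.sphere (0:ℂ) l2 := by
      simp only [Metric.mem_sphere, Complex.dist_eq, sub_zero, hpabs]
    have hp'S : p' ∈ Metric.sphere (0:ℂ) l2 := by
      simp only [Metric.mem_sphere, Complex.dist_eq, sub_zero, hp'abs]
    have hG2 : IsGreatest (Ff n a '' Metric.sphere (0:ℂ) l2) (Ff n a p) := by
      constructor
      · exact ⟨p, hpS, rfl⟩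
      · rintro x ⟨y, hy, rfl⟩
        exact hpmax (Metric.sphere_subset_closedBall hy)
    have hG1 : IsGreatest (Ff n a '' Metric.sphere (0:ℂ) l1) (Ff n a q) := by
      constructor
      · exact ⟨q, hqS, rfl⟩
      · rintro x ⟨y, hy, rfl⟩
        exact hqmax hy
    have hL2 : IsLeast (Ff n a '' Metric.sphere (0:ℂ) l2) (Ff n a p') := by
      constructor
      · exact ⟨p', hp'S, rfl⟩
      · rintro x ⟨y, hy, rfl⟩
        exact hpmin (Metric.sphere_subset_closedBall hy)
    have hL1 : IsLeast (Ff n a '' Metric.sphere (0:ℂ) l1) (Ff n a q') := by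
      constructor
      · exact ⟨q', hq'S, rfl⟩
      · rintro x ⟨y, hy, rfl⟩
        exact hqmin hy
    rw [hG2.csSup_eq, hG1.csSup_eq, hL2.csInf_eq, hL1.csInf_eq]
    constructor
    · -- Ff q < Ff p
      have hle1 : Ff n a q ≤ Ff n a p := hpmax hqK
      rcases lt_or_eq_of_le hle1 with h | h
      · exact h
      · exfalso
        apply hbd q (by rw [hqabs]; exact h12)
        intro x hx
        calc Ff n a x ≤ Ff n a p := hpmax hx
          _ = Ff n a q := h.symm
    · -- Ff p' < Ff q'
      have hle2 : Ff n a p' ≤ Ff n a q' := hpmin hq'K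
      rcases lt_or_eq_of_le hle2 with h | h
      · exact h
      · exfalso
        apply hbd' q' (by rw [hq'abs]; exact h12)
        intro x hx
        calc Ff n a q' = Ff n a p' := h.symm
          _ ≤ Ff n a x := hpmin hx
  constructor
  · intro x hx y hy hxy
    rw [hMf x, hMf y, himg x hx, himg y hy]
    exact (hkey x y hx hy hxy).1
  · intro x hx y hy hxy
    rw [hmf x, hmf y, himg x hx, himg y hy]
    exact (hkey x y hx hy hxy).2
end

section
/- Let P(a,z) = (1-|a|²)/|z-a|² be the Poisson kernel for a in the open unit disk and z on the unit circle. For 0 < δ < 1 and w ∈ 𝔻, z ∈ 𝕋: P(δw, z) = (1/2π)∫₀^{2π} P(w, e^{iθ}) P(δ, e^{-iθ} z) dθ (semigroup property of the Poisson kernel). -/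
open Complex Metric

/-- The Poisson kernel `P(a,z) = (1-|a|²)/|z-a|²`. -/
noncomputable def poissonK (a z : ℂ) : ℝ :=
  (1 - ‖a‖ ^ 2) / ‖z - a‖ ^ 2

lemma poissonK_eq_re (b z : ℂ) (hz : ‖z‖ = 1) (hb : ‖b‖ < 1) :
    poissonK b z = ((z + b) / (z - b)).re := by
  have hzb : z - b ≠ 0 := by
    intro h
    rw [sub_eq_zero] at h
    rw [h] at hz
    exact absurd hz (ne_of_lt hb)
  have hns : Complex.normSq (z - b) ≠ 0 := by
    simpa [Complex.normSq_eq_zero] using hzb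
  have h1 : z.re ^ 2 + z.im ^ 2 = 1 := by
    have : Complex.normSq z = 1 := by
      rw [← Complex.sq_norm, hz]; norm_num
    simpa [Complex.normSq_apply, sq] using this
  rw [Complex.div_re]
  unfold poissonK
  rw [Complex.sq_norm, Complex.sq_norm]
  rw [← add_div]
  congr 1
  simp only [Complex.normSq_apply, Complex.add_re, Complex.add_im, Complex.sub_re,
    Complex.sub_im]
  ring_nf
  nlinarith [h1]

/-- Semigroup property of the Poisson kernel: for `0 < δ < 1`, `w ∈ 𝔻`, `z ∈ 𝕋`,
`P(δw, z) = (1/2π)∫₀^{2π} P(w, e^{iθ}) P(δ, e^{-iθ} z) dθ`. -/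
theorem poisson_semigroup (δ : ℝ) (hδ0 : 0 < δ) (hδ1 : δ < 1)
    (w : ℂ) (hw : ‖w‖ < 1) (z : ℂ) (hz : ‖z‖ = 1) :
    poissonK (δ * w) z =
      (1 / (2 * Real.pi)) *
        ∫ θ in (0 : ℝ)..(2 * Real.pi),
          poissonK w (Complex.exp (θ * Complex.I)) *
            poissonK (δ : ℂ) (Complex.exp (-θ * Complex.I) * z) := by
  have hπ : (0 : ℝ) < Real.pi := Real.pi_pos
  set g : ℂ → ℂ := fun ζ => (z + δ * ζ) / (z - δ * ζ) with hgdef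
  set F : ℂ → ℂ := fun ζ =>
    (1 - (‖w‖ : ℂ) ^ 2) * g ζ / (1 - (starRingEnd ℂ) w * ζ) with hFdef
  -- denominators never vanish on the closed disk
  have hzd : ∀ ζ : ℂ, ‖ζ‖ ≤ 1 → z - δ * ζ ≠ 0 := by
    intro ζ hζ h
    rw [sub_eq_zero] at h
    have : ‖z‖ = δ * ‖ζ‖ := by
      rw [h, norm_mul, Complex.norm_real, Real.norm_of_nonneg hδ0.le]
    nlinarith [hz]
  have hwd : ∀ ζ : ℂ, ‖ζ‖ ≤ 1 → 1 - (starRingEnd ℂ) w * ζ ≠ 0 := by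
    intro ζ hζ h
    rw [sub_eq_zero] at h
    have : (1 : ℝ) = ‖w‖ * ‖ζ‖ := by
      calc (1:ℝ) = ‖((starRingEnd ℂ) w * ζ)‖ := by rw [← h]; simp
      _ = ‖w‖ * ‖ζ‖ := by rw [norm_mul, Complex.norm_conj]
    nlinarith [norm_nonneg ζ, norm_nonneg w]
  -- F is holomorphic on a neighborhood of the closed disk
  have hFdiff : DiffContOnCl ℂ F (ball (0 : ℂ) 1) := by
    apply DifferentiableOn.diffContOnCl
    rw [closure_ball (0 : ℂ) one_ne_zero]
    intro ζ hζ
    have hζ1 : ‖ζ‖ ≤ 1 := by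
      simpa [Complex.dist_eq] using hζ
    have hgd : DifferentiableAt ℂ g ζ := by
      apply DifferentiableAt.div
      · fun_prop
      · fun_prop
      · exact hzd ζ hζ1
    have : DifferentiableAt ℂ F ζ := by
      apply DifferentiableAt.div
      · exact (differentiableAt_const _).mul hgd
      · fun_prop
      · exact hwd ζ hζ1
    exact this.differentiableWithinAt
  have hwball : w ∈ ball (0 : ℂ) 1 := by
    simpa [Complex.dist_eq] using hw
  have hcauchy := hFdiff.circleIntegral_sub_inv_smul hwball
  have hFw : F w = g w := by
    have hwc : (starRingEnd ℂ) w * w = (‖w‖ : ℂ) ^ 2 := by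
      rw [mul_comm, Complex.mul_conj, Complex.normSq_eq_norm_sq]
      push_cast; ring
    have hne : (1 : ℂ) - (‖w‖ : ℂ) ^ 2 ≠ 0 := by
      intro h
      rw [sub_eq_zero] at h
      have : (‖w‖ : ℝ) ^ 2 = 1 := by exact_mod_cast h.symm
      nlinarith [norm_nonneg w]
    rw [hFdef]
    simp only [hwc]
    exact mul_div_cancel_left₀ _ hne
  -- rewrite the circle integral as an interval integral
  rw [circleIntegral] at hcauchy
  simp only [deriv_circleMap, circleMap, ofReal_one, one_mul, zero_add, smul_eq_mul,
    hFw] at hcauchy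
  -- pointwise value of the Poisson kernel as a complex expression
  have hPfor : ∀ θ : ℝ, (poissonK w (Complex.exp (θ * I)) : ℂ) =
      Complex.exp (θ * I) * (1 - (‖w‖ : ℂ) ^ 2) /
        ((Complex.exp (θ * I) - w) * (1 - (starRingEnd ℂ) w * Complex.exp (θ * I))) := by
    intro θ
    set ζ := Complex.exp (θ * I) with hζdef
    have hζ : ‖ζ‖ = 1 := Complex.norm_exp_ofReal_mul_I θ
    have hζ0 : ζ ≠ 0 := Complex.exp_ne_zero _
    have h1 : ζ - w ≠ 0 := by
      intro h
      rw [sub_eq_zero] at h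
      rw [h] at hζ
      exact absurd hζ (ne_of_lt hw)
    have h2 : 1 - (starRingEnd ℂ) w * ζ ≠ 0 := hwd ζ hζ.le
    have hconj : (starRingEnd ℂ) ζ = ζ⁻¹ := by
      have hm : ζ * (starRingEnd ℂ) ζ = 1 := by
        rw [Complex.mul_conj, Complex.normSq_eq_norm_sq, hζ]; norm_num
      field_simp [mul_comm] at hm ⊢
      linear_combination hm
    have habs : ((‖(ζ - w)‖ : ℝ) : ℂ) ^ 2 =
        (ζ - w) * (1 - (starRingEnd ℂ) w * ζ) / ζ := by
      have hthis : ((‖(ζ - w)‖ : ℝ) : ℂ) ^ 2 = (ζ - w) * (starRingEnd ℂ) (ζ - w) := by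
        rw [Complex.mul_conj, Complex.normSq_eq_norm_sq]; push_cast; ring
      rw [hthis, map_sub, hconj, eq_div_iff hζ0]
      have h4 : ζ⁻¹ * ζ = 1 := inv_mul_cancel₀ hζ0
      linear_combination (ζ - w) * h4
    unfold poissonK
    push_cast
    rw [habs]
    have habs0 : ((‖(ζ - w)‖ : ℝ) : ℂ) ≠ 0 := by
      simpa [sub_eq_zero] using h1
    field_simp
  -- pointwise identity for the integrand
  have hkey : ∀ θ : ℝ,
      Complex.exp (θ * I) * I * ((Complex.exp (θ * I) - w)⁻¹ * F (Complex.exp (θ * I))) =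
        I * ((poissonK w (Complex.exp (θ * I)) : ℂ) * g (Complex.exp (θ * I))) := by
    intro θ
    have hζ : ‖(Complex.exp (θ * I))‖ = 1 := Complex.norm_exp_ofReal_mul_I θ
    have h1 : Complex.exp (θ * I) - w ≠ 0 := by
      intro h
      rw [sub_eq_zero] at h
      rw [h] at hζ
      exact absurd hζ (ne_of_lt hw)
    have h2 : 1 - (starRingEnd ℂ) w * Complex.exp (θ * I) ≠ 0 := hwd _ hζ.le
    rw [hPfor θ, hFdef]
    field_simp
  have hinteq :
      (∫ θ in (0 : ℝ)..(2 * Real.pi),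
          Complex.exp (θ * I) * I * ((Complex.exp (θ * I) - w)⁻¹ * F (Complex.exp (θ * I)))) =
      ∫ θ in (0 : ℝ)..(2 * Real.pi),
          I * ((poissonK w (Complex.exp (θ * I)) : ℂ) * g (Complex.exp (θ * I))) := by
    apply intervalIntegral.integral_congr
    intro θ _
    exact hkey θ
  rw [hinteq, intervalIntegral.integral_const_mul] at hcauchy
  have hK : (∫ θ in (0 : ℝ)..(2 * Real.pi),
      (poissonK w (Complex.exp (θ * I)) : ℂ) * g (Complex.exp (θ * I))) =
      2 * Real.pi * g w := by
    apply mul_left_cancel₀ Complex.I_ne_zero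
    rw [hcauchy]; ring
  -- continuity / integrability
  have hcont : Continuous (fun θ : ℝ =>
      (poissonK w (Complex.exp (θ * I)) : ℂ) * g (Complex.exp (θ * I))) := by
    have hfe : Continuous (fun θ : ℝ => Complex.exp (θ * I)) := by fun_prop
    have habs1 : ∀ θ : ℝ, ‖(Complex.exp (θ * I))‖ = 1 := fun θ =>
      Complex.norm_exp_ofReal_mul_I θ
    have heq : (fun θ : ℝ =>
        (poissonK w (Complex.exp (θ * I)) : ℂ) * g (Complex.exp (θ * I))) =
        fun θ : ℝ =>
          Complex.exp (θ * I) * (1 - (‖w‖ : ℂ) ^ 2) /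
            ((Complex.exp (θ * I) - w) * (1 - (starRingEnd ℂ) w * Complex.exp (θ * I))) *
            g (Complex.exp (θ * I)) := by
      funext θ
      rw [hPfor θ]
    rw [heq]
    apply Continuous.mul
    · apply Continuous.div
      · fun_prop
      · fun_prop
      · intro θ
        apply mul_ne_zero
        · intro h
          rw [sub_eq_zero] at h
          have := habs1 θ
          rw [h] at this
          exact absurd this (ne_of_lt hw)
        · exact hwd _ (habs1 θ).le
    · apply Continuous.div
      · fun_prop
      · fun_prop
      · intro θ
        exact hzd _ (habs1 θ).le
  have hre := ContinuousLinearMap.intervalIntegral_comp_comm Complex.reCLM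
    (hcont.intervalIntegrable (μ := MeasureTheory.volume) 0 (2 * Real.pi))
  -- identify the real integrands
  have hptre : ∀ θ : ℝ,
      ((poissonK w (Complex.exp (θ * I)) : ℂ) * g (Complex.exp (θ * I))).re =
        poissonK w (Complex.exp (θ * I)) *
          poissonK (δ : ℂ) (Complex.exp (-θ * I) * z) := by
    intro θ
    have habs1 : ‖(Complex.exp (θ * I))‖ = 1 := Complex.norm_exp_ofReal_mul_I θ
    have e1 : poissonK (δ : ℂ) (Complex.exp (-θ * I) * z) =
        poissonK (δ * Complex.exp (θ * I)) z := by
      unfold poissonK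
      have ha : ‖((δ : ℂ) * Complex.exp (θ * I))‖ = ‖(δ : ℂ)‖ := by
        rw [norm_mul, habs1, mul_one]
      rw [ha]
      congr 2
      have : Complex.exp (θ * I) * Complex.exp (-θ * I) = 1 := by
        rw [← Complex.exp_add]
        norm_num
      calc ‖(Complex.exp (-θ * I) * z - δ)‖
          = ‖(Complex.exp (θ * I))‖ *
            ‖(Complex.exp (-θ * I) * z - δ)‖ := by rw [habs1, one_mul]
        _ = ‖(Complex.exp (θ * I) * (Complex.exp (-θ * I) * z - δ))‖ := by
            rw [norm_mul]
        _ = ‖(z - δ * Complex.exp (θ * I))‖ := by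
            congr 1
            rw [mul_sub]
            rw [← mul_assoc, this, one_mul]
            ring
    have habsd : ‖((δ : ℂ) * Complex.exp (θ * I))‖ < 1 := by
      rw [norm_mul, habs1, mul_one, Complex.norm_real, Real.norm_of_nonneg hδ0.le]
      exact hδ1
    rw [e1, poissonK_eq_re _ z hz habsd]
    have : g (Complex.exp (θ * I)) =
        (z + (δ : ℂ) * Complex.exp (θ * I)) / (z - (δ : ℂ) * Complex.exp (θ * I)) := rfl
    rw [this]
    simp [Complex.mul_re]
  have hTre : (∫ θ in (0 : ℝ)..(2 * Real.pi),
      poissonK w (Complex.exp (θ * I)) * poissonK (δ : ℂ) (Complex.exp (-θ * I) * z)) =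
      2 * Real.pi * (g w).re := by
    have h1 : (∫ θ in (0 : ℝ)..(2 * Real.pi),
        poissonK w (Complex.exp (θ * I)) * poissonK (δ : ℂ) (Complex.exp (-θ * I) * z)) =
        ∫ θ in (0 : ℝ)..(2 * Real.pi),
          ((poissonK w (Complex.exp (θ * I)) : ℂ) * g (Complex.exp (θ * I))).re := by
      apply intervalIntegral.integral_congr
      intro θ _
      exact (hptre θ).symm
    rw [h1]
    have h2 : (∫ θ in (0 : ℝ)..(2 * Real.pi),
        ((poissonK w (Complex.exp (θ * I)) : ℂ) * g (Complex.exp (θ * I))).re) =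
        ((∫ θ in (0 : ℝ)..(2 * Real.pi),
          (poissonK w (Complex.exp (θ * I)) : ℂ) * g (Complex.exp (θ * I)))).re := by
      simpa using hre
    rw [h2, hK]
    simp [Complex.mul_re]
  have hL : poissonK (δ * w) z = (g w).re := by
    have habsdw : ‖((δ : ℂ) * w)‖ < 1 := by
      rw [norm_mul, Complex.norm_real, Real.norm_of_nonneg hδ0.le]
      nlinarith [norm_nonneg w]
    rw [poissonK_eq_re _ z hz habsdw]
  rw [hL, hTre]
  field_simp
end
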